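/- arXiv:1808.03139 — 7 statements merged into one kernel-verified Lean document; each statement's English description precedes it below -/
import Mathlib

section
/- Let Δ ≥ 3 be a natural number and let f = sin(π/Δ)/(1 + sin(π/Δ)). Let α be a real number with 0 < α and α ≤ min( f/(1+f) , f·√(1 − 2f·cos(2π/Δ) + f²) − f³/(1−f) ). Then every finite tree G with maximum degree at most Δ admits a straight-line drawing whose ply disks (with parameter α) are pairwise disjoint, i.e., a drawing with ply number 1. -/
open Real

/-- The ply-disk radius of a vertex `v` in a straight-line drawing `ρ` with
parameter `α`: `α` times the maximum distance from `ρ v` to a drawn neighbor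
(`0` if `v` is isolated, since in `ℝ` the supremum over an empty family is `0`). -/
noncomputable def plyRadius {V : Type*} (G : SimpleGraph V)
    (ρ : V → EuclideanSpace ℝ (Fin 2)) (α : ℝ) (v : V) : ℝ :=
  α * ⨆ w : G.neighborSet v, dist (ρ v) (ρ w)

set_option linter.unusedSectionVars false
set_option linter.unusedVariables false

namespace PlyAux

open SimpleGraph

variable {V : Type*} [DecidableEq V] {G : SimpleGraph V}

noncomputable def upath (hT : G.IsTree) (r v : V) : G.Walk v r :=
  (hT.existsUnique_path v r).choose

lemma upath_isPath (hT : G.IsTree) (r v : V) : (upath hT r v).IsPath :=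
  (hT.existsUnique_path v r).choose_spec.1

lemma upath_unique (hT : G.IsTree) (r : V) {v : V} {p : G.Walk v r} (hp : p.IsPath) :
    p = upath hT r v :=
  (hT.existsUnique_path v r).choose_spec.2 p hp

noncomputable def depth (hT : G.IsTree) (r v : V) : ℕ := (upath hT r v).length

noncomputable def par (hT : G.IsTree) (r v : V) : V := (upath hT r v).getVert 1

variable (hT : G.IsTree) (r : V)

lemma upath_self : upath hT r r = Walk.nil :=
  (upath_unique hT r Walk.IsPath.nil).symm

lemma depth_self : depth hT r r = 0 := by rw [depth, upath_self]; rfl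

lemma par_self : par hT r r = r := by rw [par, upath_self]; rfl

lemma eq_of_depth_eq_zero {v : V} (h : depth hT r v = 0) : v = r := by
  have h1 := (upath hT r v).getVert_length
  rw [depth] at h
  rw [h] at h1
  rw [(upath hT r v).getVert_zero] at h1
  exact h1

lemma depth_pos {v : V} (hv : v ≠ r) : 0 < depth hT r v :=
  Nat.pos_of_ne_zero (fun h => hv (eq_of_depth_eq_zero hT r h))

lemma adj_par {v : V} (hv : v ≠ r) : G.Adj v (par hT r v) := by
  have h := (upath hT r v).adj_getVert_succ (i := 0) (depth_pos hT r hv)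
  rwa [Walk.getVert_zero] at h

lemma edge_path {a b : V} (hab : G.Adj a b) : (Walk.cons hab Walk.nil).IsPath := by
  simp [Walk.cons_isPath_iff, hab.ne]

include hT in
lemma path_eq_edge {a b : V} (hab : G.Adj a b) {p : G.Walk a b} (hp : p.IsPath) :
    p = Walk.cons hab Walk.nil :=
  (hT.existsUnique_path a b).unique hp (edge_path hab)

lemma par_mem_support {v : V} (hv : v ≠ r) : par hT r v ∈ (upath hT r v).support := by
  rw [Walk.mem_support_iff_exists_getVert]
  exact ⟨1, rfl, depth_pos hT r hv⟩

lemma par_depth {v : V} (hv : v ≠ r) :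
    depth hT r (par hT r v) + 1 = depth hT r v := by
  have hu := par_mem_support hT r hv
  have htk : (upath hT r v).takeUntil _ hu = Walk.cons (adj_par hT r hv) Walk.nil :=
    path_eq_edge hT (adj_par hT r hv) ((upath_isPath hT r v).takeUntil hu)
  have hdr : upath hT r (par hT r v) = (upath hT r v).dropUntil _ hu :=
    (upath_unique hT r ((upath_isPath hT r v).dropUntil hu)).symm
  have hsp := (upath hT r v).take_spec hu
  have hlen : ((( upath hT r v).takeUntil _ hu).append ((upath hT r v).dropUntil _ hu)).length
      = (upath hT r v).length := by rw [hsp]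
  rw [Walk.length_append, htk] at hlen
  simp only [Walk.length_cons, Walk.length_nil] at hlen
  rw [depth, depth, ← hdr] at *
  omega

lemma adj_cases {v w : V} (hvw : G.Adj v w) :
    (par hT r w = v ∧ depth hT r w = depth hT r v + 1) ∨
    (par hT r v = w ∧ depth hT r v = depth hT r w + 1) := by
  by_cases hw : w ∈ (upath hT r v).support
  · right
    have htk : (upath hT r v).takeUntil w hw = Walk.cons hvw Walk.nil :=
      path_eq_edge hT hvw ((upath_isPath hT r v).takeUntil hw)
    have hsp := (upath hT r v).take_spec hw
    rw [htk, Walk.cons_append, Walk.nil_append] at hsp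
    have hdr : upath hT r w = (upath hT r v).dropUntil w hw :=
      (upath_unique hT r ((upath_isPath hT r v).dropUntil hw)).symm
    constructor
    · rw [par, ← hsp, Walk.getVert_cons_succ, Walk.getVert_zero]
    · rw [depth, depth, ← hsp, hdr, Walk.length_cons]
  · left
    have hq : (Walk.cons hvw.symm (upath hT r v)).IsPath :=
      (Walk.cons_isPath_iff _ _).2 ⟨upath_isPath hT r v, hw⟩
    have heq := upath_unique hT r hq
    constructor
    · rw [par, ← heq, Walk.getVert_cons_succ, Walk.getVert_zero]
    · rw [depth, depth, ← heq, Walk.length_cons]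

lemma depth_iter (k : ℕ) {v : V} (hk : k ≤ depth hT r v) :
    depth hT r ((par hT r)^[k] v) = depth hT r v - k := by
  induction k with
  | zero => simp
  | succ n ih =>
    have hn : n ≤ depth hT r v := by omega
    have h1 := ih hn
    have hne : (par hT r)^[n] v ≠ r := by
      intro h; rw [h, depth_self] at h1; omega
    rw [Function.iterate_succ_apply']
    have h2 := par_depth hT r hne
    omega

lemma meet (d : ℕ) : ∀ x y : V, depth hT r x = d → depth hT r y = d → x ≠ y →
    ∃ j, 1 ≤ j ∧ j ≤ d ∧ (par hT r)^[j] x = (par hT r)^[j] y ∧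
      (par hT r)^[j-1] x ≠ (par hT r)^[j-1] y := by
  induction d with
  | zero =>
    intro x y hx hy hxy
    exact absurd ((eq_of_depth_eq_zero hT r hx).trans (eq_of_depth_eq_zero hT r hy).symm) hxy
  | succ n ih =>
    intro x y hx hy hxy
    have hxr : x ≠ r := by intro h; rw [h, depth_self] at hx; omega
    have hyr : y ≠ r := by intro h; rw [h, depth_self] at hy; omega
    by_cases hp : par hT r x = par hT r y
    · exact ⟨1, le_rfl, by omega, by simpa using hp, by simpa using hxy⟩
    · obtain ⟨j, hj1, hjn, hje, hjne⟩ := ih (par hT r x) (par hT r y)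
        (by have := par_depth hT r hxr; omega) (by have := par_depth hT r hyr; omega) hp
      refine ⟨j + 1, by omega, by omega, ?_, ?_⟩
      · rw [Function.iterate_succ_apply, Function.iterate_succ_apply]; exact hje
      · have hj : j = (j - 1) + 1 := by omega
        rw [Nat.add_sub_cancel, hj, Function.iterate_succ_apply, Function.iterate_succ_apply]
        exact hjne

-- continuation inside namespace PlyAux (for testing, separate file that re-adds context)
section Geom

variable {V : Type*} [Fintype V] [DecidableEq V] {G : SimpleGraph V} [DecidableRel G.Adj]
variable (hT : G.IsTree) (r : V)

noncomputable def chSet (v : V) : Finset V :=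
  (G.neighborFinset v).filter (fun c => par hT r c = v)

noncomputable def idx (c : V) : ℕ :=
  (chSet hT r (par hT r c)).toList.idxOf c

noncomputable def offs (Δ : ℕ) (c : V) : ℝ :=
  if par hT r c = r then 2 * π * (idx hT r c) / Δ
  else π + 2 * π * ((idx hT r c : ℝ) + 1) / Δ

lemma mem_chSet {c : V} (hc : c ≠ r) : c ∈ chSet hT r (par hT r c) := by
  rw [chSet, Finset.mem_filter, SimpleGraph.mem_neighborFinset]
  exact ⟨(adj_par hT r hc).symm, rfl⟩

lemma idx_lt_card {c : V} (hc : c ≠ r) : idx hT r c < (chSet hT r (par hT r c)).card := by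
  rw [idx, ← Finset.length_toList]
  exact List.idxOf_lt_length_iff.2 (Finset.mem_toList.2 (mem_chSet hT r hc))

lemma idx_ne {c1 c2 : V} (h12 : c1 ≠ c2) (hm : par hT r c1 = par hT r c2)
    (h1r : c1 ≠ r) (h2r : c2 ≠ r) : idx hT r c1 ≠ idx hT r c2 := by
  have m1 := Finset.mem_toList.2 (mem_chSet hT r h1r)
  have m2 := Finset.mem_toList.2 (mem_chSet hT r h2r)
  rw [hm] at m1
  intro h
  rw [idx, idx, hm] at h
  exact h12 ((List.idxOf_inj m1).1 h)

lemma card_chSet_le (v : V) : (chSet hT r v).card ≤ G.degree v :=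
  Finset.card_filter_le _ _

lemma par_not_mem_chSet {v : V} (hv : v ≠ r) : par hT r v ∉ chSet hT r v := by
  simp only [chSet, Finset.mem_filter, SimpleGraph.mem_neighborFinset, not_and]
  intro _
  by_cases hpr : par hT r v = r
  · rw [hpr, par_self]
    intro h; exact hv h.symm
  · intro h
    have h1 := par_depth hT r hv
    have h2 := par_depth hT r hpr
    rw [h] at h2
    omega

lemma card_chSet_lt {v : V} (hv : v ≠ r) : (chSet hT r v).card < G.degree v := by
  apply Finset.card_lt_card
  have hsub : chSet hT r v ⊆ G.neighborFinset v := Finset.filter_subset _ _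
  rw [Finset.ssubset_iff_of_subset hsub]
  exact ⟨par hT r v, (SimpleGraph.mem_neighborFinset _ _ _).2 (adj_par hT r hv),
    par_not_mem_chSet hT r hv⟩

end Geom

section EV

noncomputable def eVec (t : ℝ) : EuclideanSpace ℝ (Fin 2) :=
  (WithLp.equiv 2 (Fin 2 → ℝ)).symm ![Real.cos t, Real.sin t]

lemma inner_eVec (s t : ℝ) : (inner ℝ (eVec s) (eVec t) : ℝ) = Real.cos (s - t) := by
  simp only [eVec, PiLp.inner_apply, WithLp.equiv_symm_apply, PiLp.toLp_apply, RCLike.inner_apply,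
    starRingEnd_apply, star_trivial, Fin.sum_univ_two, Matrix.cons_val_zero,
    Matrix.cons_val_one, Matrix.head_cons]
  rw [Real.cos_sub]; ring

lemma norm_eVec (t : ℝ) : ‖eVec t‖ = 1 := by
  have h : (inner ℝ (eVec t) (eVec t) : ℝ) = 1 := by rw [inner_eVec]; simp
  have h2 : ‖eVec t‖ ^ 2 = 1 := by rw [← real_inner_self_eq_norm_sq, h]
  nlinarith [norm_nonneg (eVec t)]

end EV

section Trig

lemma cos_bound {Δ : ℕ} (hΔ : 3 ≤ Δ) (m : ℤ) (hm0 : m ≠ 0) (hm : m.natAbs ≤ Δ - 1) :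
    Real.cos (2 * π * m / Δ) ≤ Real.cos (2 * π / Δ) := by
  have hΔ3 : (3 : ℝ) ≤ (Δ : ℝ) := by exact_mod_cast hΔ
  have hΔ0 : (0 : ℝ) < (Δ : ℝ) := by linarith
  have hπ := Real.pi_pos
  have habsm : (m.natAbs : ℝ) = |(m : ℝ)| := by
    simp [Nat.cast_natAbs]
  have hcos : Real.cos (2 * π * (m : ℝ) / Δ) = Real.cos (2 * π * (m.natAbs : ℝ) / Δ) := by
    rcases abs_cases (m : ℝ) with ⟨h, _⟩ | ⟨h, _⟩
    · rw [habsm, h]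
    · rw [habsm, h, show 2 * π * -(m : ℝ) / Δ = -(2 * π * (m : ℝ) / Δ) by ring, Real.cos_neg]
  rw [hcos]
  set n := m.natAbs with hn
  have hn1 : 1 ≤ n := by omega
  have hn1R : (1 : ℝ) ≤ (n : ℝ) := by exact_mod_cast hn1
  have hnΔR : (n : ℝ) ≤ (Δ : ℝ) - 1 := by
    have h2 : (n : ℝ) ≤ ((Δ - 1 : ℕ) : ℝ) := by exact_mod_cast hm
    rw [Nat.cast_sub (by omega)] at h2
    simpa using h2
  set t := 2 * π * (n : ℝ) / Δ with ht
  have ht1 : 2 * π / Δ ≤ t := by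
    rw [ht, div_le_div_iff₀ hΔ0 hΔ0]
    nlinarith [mul_nonneg (mul_nonneg hπ.le (sub_nonneg.2 hn1R)) hΔ0.le]
  have ht2 : t ≤ 2 * π - 2 * π / Δ := by
    have hrw : 2 * π - 2 * π / Δ = 2 * π * ((Δ : ℝ) - 1) / Δ := by
      field_simp
    rw [ht, hrw, div_le_div_iff₀ hΔ0 hΔ0]
    nlinarith [mul_nonneg (mul_nonneg hπ.le (sub_nonneg.2 hnΔR)) hΔ0.le]
  have h0 : 0 ≤ 2 * π / Δ := by positivity
  by_cases hc : t ≤ π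
  · exact Real.cos_le_cos_of_nonneg_of_le_pi h0 hc ht1
  · rw [show t = 2 * π - (2 * π - t) by ring, Real.cos_two_pi_sub]
    exact Real.cos_le_cos_of_nonneg_of_le_pi h0 (by linarith) (by linarith)

lemma four_sin_sq {x : ℝ} : 4 * Real.sin x ^ 2 = 2 - 2 * Real.cos (2 * x) := by
  have := Real.sin_sq_eq_half_sub x
  linarith

end Trig

section Emb

variable {V : Type*} [Fintype V] [DecidableEq V] {G : SimpleGraph V} [DecidableRel G.Adj]
variable (hT : G.IsTree) (r : V)

noncomputable def ang (Δ : ℕ) : ℕ → V → ℝ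
  | 0, _ => 0
  | n + 1, v => ang Δ n (par hT r v) + offs hT r Δ v

noncomputable def posn (Δ : ℕ) (f : ℝ) : ℕ → V → EuclideanSpace ℝ (Fin 2)
  | 0, _ => 0
  | n + 1, v => posn Δ f n (par hT r v) + f ^ (n + 1) • eVec (ang hT r Δ (n + 1) v)

noncomputable def theta (Δ : ℕ) (v : V) : ℝ := ang hT r Δ (depth hT r v) v

noncomputable def emb (Δ : ℕ) (f : ℝ) (v : V) : EuclideanSpace ℝ (Fin 2) :=
  posn hT r Δ f (depth hT r v) v

lemma theta_eq {v : V} (hv : v ≠ r) (Δ : ℕ) :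
    theta hT r Δ v = theta hT r Δ (par hT r v) + offs hT r Δ v := by
  obtain ⟨n, hn⟩ : ∃ n, depth hT r v = n + 1 :=
    ⟨depth hT r v - 1, by have := depth_pos hT r hv; omega⟩
  have hpn : depth hT r (par hT r v) = n := by have := par_depth hT r hv; omega
  rw [theta, theta, hn, hpn]
  simp [ang]

lemma emb_eq {v : V} (hv : v ≠ r) (Δ : ℕ) (f : ℝ) :
    emb hT r Δ f v = emb hT r Δ f (par hT r v)
      + f ^ (depth hT r v) • eVec (theta hT r Δ v) := by
  obtain ⟨n, hn⟩ : ∃ n, depth hT r v = n + 1 :=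
    ⟨depth hT r v - 1, by have := depth_pos hT r hv; omega⟩
  have hpn : depth hT r (par hT r v) = n := by have := par_depth hT r hv; omega
  rw [emb, emb, theta, hn, hpn]
  simp [posn]

lemma dist_emb_par {v : V} (hv : v ≠ r) (Δ : ℕ) {f : ℝ} (hf : 0 ≤ f) :
    dist (emb hT r Δ f v) (emb hT r Δ f (par hT r v)) = f ^ depth hT r v := by
  rw [dist_eq_norm, emb_eq hT r hv, add_sub_cancel_left, norm_smul, norm_eVec, mul_one]
  exact abs_of_nonneg (pow_nonneg hf _)

lemma contain (Δ : ℕ) {f S α : ℝ} (hf0 : 0 < f) (hS0 : 0 < S)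
    (hfS : f * (1 + S) = S) (hαS : α ≤ S)
    (k : ℕ) {v : V} (hk : k ≤ depth hT r v) :
    dist (emb hT r Δ f ((par hT r)^[k] v)) (emb hT r Δ f v) + α * f ^ depth hT r v
      ≤ S * f ^ (depth hT r v - k) := by
  induction k with
  | zero =>
    rw [Function.iterate_zero_apply, _root_.dist_self, zero_add, Nat.sub_zero]
    exact mul_le_mul_of_nonneg_right hαS (le_of_lt (pow_pos hf0 _))
  | succ n ih =>
    have hn : n ≤ depth hT r v := by omega
    have hw := depth_iter hT r n hn
    set w := (par hT r)^[n] v with hwdef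
    have hwr : w ≠ r := by
      intro h; rw [h, depth_self] at hw; omega
    have h1 : dist (emb hT r Δ f ((par hT r)^[n+1] v)) (emb hT r Δ f v)
        ≤ f ^ depth hT r w + dist (emb hT r Δ f w) (emb hT r Δ f v) := by
      rw [Function.iterate_succ_apply']
      calc dist (emb hT r Δ f (par hT r w)) (emb hT r Δ f v)
          ≤ dist (emb hT r Δ f (par hT r w)) (emb hT r Δ f w)
            + dist (emb hT r Δ f w) (emb hT r Δ f v) := _root_.dist_triangle _ _ _
        _ = f ^ depth hT r w + dist (emb hT r Δ f w) (emb hT r Δ f v) := by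
            rw [_root_.dist_comm (emb hT r Δ f (par hT r w)), dist_emb_par hT r hwr Δ hf0.le]
    have ih' := ih hn
    have hpow : f ^ (depth hT r v - n) = f * f ^ (depth hT r v - (n + 1)) := by
      rw [← pow_succ']
      congr 1
      omega
    have hmul : f * (1 + S) * f ^ (depth hT r v - (n + 1))
        = S * f ^ (depth hT r v - (n + 1)) := by rw [hfS]
    have hkey : f ^ depth hT r w + S * f ^ (depth hT r v - n)
        ≤ S * f ^ (depth hT r v - (n + 1)) := by
      rw [hw, hpow]
      nlinarith [hmul]
    linarith
end Emb

section DistBounds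

variable {V : Type*} [Fintype V] [DecidableEq V] {G : SimpleGraph V} [DecidableRel G.Adj]
variable (hT : G.IsTree) (r : V)

lemma offs_diff {Δ : ℕ} (hΔ : 3 ≤ Δ) (hdeg : ∀ v, G.degree v ≤ Δ) {c1 c2 : V}
    (h12 : c1 ≠ c2) (hm : par hT r c1 = par hT r c2) (h1r : c1 ≠ r) (h2r : c2 ≠ r) :
    Real.cos (offs hT r Δ c1 - offs hT r Δ c2) ≤ Real.cos (2 * π / Δ) := by
  have hne : idx hT r c1 ≠ idx hT r c2 := idx_ne hT r h12 hm h1r h2r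
  have hb1 : idx hT r c1 < Δ :=
    lt_of_lt_of_le (idx_lt_card hT r h1r) ((card_chSet_le hT r _).trans (hdeg _))
  have hb2 : idx hT r c2 < Δ :=
    lt_of_lt_of_le (idx_lt_card hT r h2r) ((card_chSet_le hT r _).trans (hdeg _))
  have harg : offs hT r Δ c1 - offs hT r Δ c2
      = 2 * π * ((((idx hT r c1 : ℤ) - (idx hT r c2 : ℤ) : ℤ)) : ℝ) / Δ := by
    rw [offs, offs, hm]
    split_ifs with h
    · push_cast; ring
    · push_cast; ring
  rw [harg]
  refine cos_bound hΔ _ ?_ ?_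
  · intro h
    rw [sub_eq_zero] at h
    exact hne (by exact_mod_cast h)
  · omega

lemma sib_dist {Δ : ℕ} (hΔ : 3 ≤ Δ) (hdeg : ∀ v, G.degree v ≤ Δ) {f S : ℝ}
    (hf0 : 0 ≤ f) (hS0 : 0 ≤ S) (hS2 : 4 * S ^ 2 = 2 - 2 * Real.cos (2 * π / Δ))
    {c1 c2 : V} (h12 : c1 ≠ c2) (hm : par hT r c1 = par hT r c2)
    (h1r : c1 ≠ r) (h2r : c2 ≠ r) :
    2 * S * f ^ depth hT r c1 ≤ dist (emb hT r Δ f c1) (emb hT r Δ f c2) := by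
  have hd : depth hT r c2 = depth hT r c1 := by
    have h1 := par_depth hT r h1r
    have h2 := par_depth hT r h2r
    rw [hm] at h1
    omega
  have hth : theta hT r Δ c1 - theta hT r Δ c2 = offs hT r Δ c1 - offs hT r Δ c2 := by
    rw [theta_eq hT r h1r, theta_eq hT r h2r, hm]
    ring
  rw [dist_eq_norm, emb_eq hT r h1r, emb_eq hT r h2r, hm, hd, add_sub_add_left_eq_sub]
  set a := f ^ depth hT r c1 with ha
  have ha0 : 0 ≤ a := pow_nonneg hf0 _
  have hsq : ‖a • eVec (theta hT r Δ c1) - a • eVec (theta hT r Δ c2)‖ ^ 2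
      = a ^ 2 * (2 - 2 * Real.cos (offs hT r Δ c1 - offs hT r Δ c2)) := by
    rw [norm_sub_sq_real, real_inner_smul_left, real_inner_smul_right, inner_eVec,
      norm_smul, norm_smul, norm_eVec, hth]
    simp only [norm_eVec, Real.norm_eq_abs, abs_of_nonneg ha0, mul_one]
    ring
  have hcos := offs_diff hT r hΔ hdeg h12 hm h1r h2r
  have h2 : (2 * S * a) ^ 2
      ≤ ‖a • eVec (theta hT r Δ c1) - a • eVec (theta hT r Δ c2)‖ ^ 2 := by
    rw [hsq]
    nlinarith [sq_nonneg a, mul_nonneg (sq_nonneg a) (sub_nonneg.2 hcos)]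
  have := (pow_le_pow_iff_left₀ (by positivity) (norm_nonneg _) two_ne_zero).1 h2
  linarith

lemma anc_dist {Δ : ℕ} (hΔ : 3 ≤ Δ) (hdeg : ∀ v, G.degree v ≤ Δ) {f : ℝ}
    (hf0 : 0 ≤ f) {v c : V} (hv : v ≠ r) (hc : par hT r c = v) (hcr : c ≠ r) :
    f ^ depth hT r v * Real.sqrt (1 - 2 * f * Real.cos (2 * π / Δ) + f ^ 2)
      ≤ dist (emb hT r Δ f (par hT r v)) (emb hT r Δ f c) := by
  have hdc : depth hT r c = depth hT r v + 1 := by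
    have := par_depth hT r hcr
    rw [hc] at this
    omega
  have hQ0 : 0 ≤ 1 - 2 * f * Real.cos (2 * π / Δ) + f ^ 2 := by
    nlinarith [Real.cos_le_one (2 * π / Δ), sq_nonneg (1 - f)]
  -- offs c and its cosine
  have hoffs : offs hT r Δ c = π + 2 * π * ((idx hT r c : ℝ) + 1) / Δ := by
    rw [offs, if_neg]
    rw [hc]
    exact hv
  have hb : idx hT r c + 1 < Δ := by
    have h1 := idx_lt_card hT r hcr
    rw [hc] at h1
    have h2 := card_chSet_lt hT r hv
    have h3 := hdeg v
    omega
  have hcb : Real.cos (2 * π * ((idx hT r c : ℝ) + 1) / Δ) ≤ Real.cos (2 * π / Δ) := by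
    have := cos_bound hΔ ((idx hT r c : ℤ) + 1) (by omega) (by omega)
    have harg : 2 * π * (((idx hT r c : ℤ) + 1 : ℤ) : ℝ) / Δ
        = 2 * π * ((idx hT r c : ℝ) + 1) / Δ := by push_cast; ring
    rwa [harg] at this
  have hcoso : Real.cos (offs hT r Δ c) = -Real.cos (2 * π * ((idx hT r c : ℝ) + 1) / Δ) := by
    rw [hoffs, show π + 2 * π * ((idx hT r c : ℝ) + 1) / Δ
        = π - -(2 * π * ((idx hT r c : ℝ) + 1) / Δ) by ring, Real.cos_pi_sub, Real.cos_neg]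
  have hth : theta hT r Δ v - theta hT r Δ c = -(offs hT r Δ c) := by
    rw [theta_eq hT r hcr, hc]
    ring
  -- expression for the difference
  have hexp : emb hT r Δ f c - emb hT r Δ f (par hT r v)
      = f ^ depth hT r v • eVec (theta hT r Δ v)
        + (f ^ depth hT r v * f) • eVec (theta hT r Δ c) := by
    rw [emb_eq hT r hcr, hc, hdc, emb_eq hT r hv, pow_succ]
    abel
  rw [dist_eq_norm', hexp]
  set a := f ^ depth hT r v with ha
  have ha0 : 0 ≤ a := pow_nonneg hf0 _
  have hsq : ‖a • eVec (theta hT r Δ v) + (a * f) • eVec (theta hT r Δ c)‖ ^ 2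
      = a ^ 2 * (1 + 2 * f * Real.cos (offs hT r Δ c) + f ^ 2) := by
    rw [norm_add_sq_real, real_inner_smul_left, real_inner_smul_right, inner_eVec,
      norm_smul, norm_smul, norm_eVec, hth, Real.cos_neg]
    simp only [norm_eVec, Real.norm_eq_abs, abs_of_nonneg ha0, abs_of_nonneg (mul_nonneg ha0 hf0),
      mul_one]
    ring
  have h2 : (a * Real.sqrt (1 - 2 * f * Real.cos (2 * π / Δ) + f ^ 2)) ^ 2
      ≤ ‖a • eVec (theta hT r Δ v) + (a * f) • eVec (theta hT r Δ c)‖ ^ 2 := by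
    rw [hsq, mul_pow, Real.sq_sqrt hQ0, hcoso]
    nlinarith [mul_nonneg (mul_nonneg (sq_nonneg a) hf0)
      (sub_nonneg.2 hcb)]
  exact (pow_le_pow_iff_left₀ (by positivity) (norm_nonneg _) two_ne_zero).1 h2

end DistBounds

end PlyAux

/-- For `Δ ≥ 3`, `f = sin(π/Δ)/(1 + sin(π/Δ))` and
`0 < α ≤ min( f/(1+f), f·√(1 − 2f·cos(2π/Δ) + f²) − f³/(1−f) )`, every finite
tree of maximum degree at most `Δ` has a straight-line drawing whose ply disks
with parameter `α` are pairwise disjoint (a 1-ply drawing). -/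
theorem stmt0 (Δ : ℕ) (hΔ : 3 ≤ Δ)
    (f : ℝ) (hf : f = Real.sin (π / Δ) / (1 + Real.sin (π / Δ)))
    (α : ℝ) (hα0 : 0 < α)
    (hα : α ≤ min (f / (1 + f))
      (f * Real.sqrt (1 - 2 * f * Real.cos (2 * π / Δ) + f ^ 2) - f ^ 3 / (1 - f)))
    (V : Type*) [Fintype V] [DecidableEq V]
    (G : SimpleGraph V) [DecidableRel G.Adj]
    (hT : G.IsTree) (hdeg : ∀ v : V, G.degree v ≤ Δ) :
    ∃ ρ : V → EuclideanSpace ℝ (Fin 2), Function.Injective ρ ∧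
      Pairwise fun v w : V =>
        Disjoint (Metric.ball (ρ v) (plyRadius G ρ α v))
          (Metric.ball (ρ w) (plyRadius G ρ α w)) := by
  haveI : Nonempty V := hT.isConnected.nonempty
  obtain ⟨r⟩ : Nonempty V := inferInstance
  open PlyAux in
  -- numeric facts
  have hΔ3 : (3 : ℝ) ≤ (Δ : ℝ) := by exact_mod_cast hΔ
  have hπ := Real.pi_pos
  set S := Real.sin (π / Δ) with hS
  have hS0 : 0 < S := Real.sin_pos_of_pos_of_lt_pi (by positivity)
    ((div_lt_self hπ (by linarith)))
  have hS1 : S ≤ 1 := Real.sin_le_one _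
  have hf0 : 0 < f := by rw [hf]; positivity
  have hf1 : f < 1 := by
    rw [hf, div_lt_one (by linarith)]; linarith
  have h1f : (0 : ℝ) < 1 - f := by linarith
  have hfS : f * (1 + S) = S := by
    rw [hf]; field_simp
  have hfleS : f ≤ S := by
    rw [hf, div_le_iff₀ (by linarith)]; nlinarith
  have hα1 : α ≤ f / (1 + f) := le_trans hα (min_le_left _ _)
  have hα2 : α ≤ f * Real.sqrt (1 - 2 * f * Real.cos (2 * π / Δ) + f ^ 2) - f ^ 3 / (1 - f) :=
    le_trans hα (min_le_right _ _)
  have hαf : α * (1 + f) ≤ f := (le_div_iff₀ (by linarith)).1 hα1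
  have hαS : α ≤ S := by
    have h1 : f / (1 + f) ≤ f := div_le_self hf0.le (by linarith)
    linarith
  have hSf : S * f ^ 2 = f ^ 3 / (1 - f) := by
    rw [eq_div_iff (ne_of_gt h1f)]
    linear_combination (-(f ^ 2)) * hfS
  have hB : α ≤ f * Real.sqrt (1 - 2 * f * Real.cos (2 * π / Δ) + f ^ 2) - S * f ^ 2 := by
    rw [hSf]; exact hα2
  have hS2 : 4 * S ^ 2 = 2 - 2 * Real.cos (2 * π / Δ) := by
    have h4 := PlyAux.four_sin_sq (x := π / Δ)
    rw [show 2 * (π / Δ) = 2 * π / Δ by ring] at h4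
    rw [hS]; linarith
  -- the drawing
  -- main distance lower bound, ordered version
  have M0 : ∀ x y : V, depth hT r x ≤ depth hT r y → x ≠ y →
      α * f ^ depth hT r x + α * f ^ depth hT r y ≤ dist (emb hT r Δ f x) (emb hT r Δ f y) := by
    intro x y hdle hxy
    obtain ⟨k, hk⟩ : ∃ k, depth hT r y = depth hT r x + k :=
      ⟨depth hT r y - depth hT r x, by omega⟩
    have hky : k ≤ depth hT r y := by omega
    have hy' : depth hT r ((par hT r)^[k] y) = depth hT r x := by
      rw [depth_iter hT r k hky]; omega
    by_cases hxy' : (par hT r)^[k] y = x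
    · -- ancestor case
      have hk1 : 1 ≤ k := by
        rcases Nat.eq_zero_or_pos k with h0 | h; swap; · exact h
        rw [h0, Function.iterate_zero_apply] at hxy'
        exact absurd hxy'.symm hxy
      by_cases hk2 : k = 1
      · -- adjacent
        have hdy : depth hT r y = depth hT r x + 1 := by omega
        have hyr : y ≠ r := by
          intro h; rw [h, depth_self hT r] at hdy; omega
        have hpar : par hT r y = x := by
          rw [← hxy', hk2, Function.iterate_one]
        have hdist : dist (emb hT r Δ f x) (emb hT r Δ f y) = f ^ depth hT r y := by
          rw [_root_.dist_comm, ← hpar, dist_emb_par hT r hyr Δ hf0.le]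
        rw [hdist, hdy, pow_succ]
        have hmul := mul_le_mul_of_nonneg_left hαf (pow_nonneg hf0.le (depth hT r x))
        nlinarith [hmul]
      · -- distance ≥ 2 in the tree
        obtain ⟨k', rfl⟩ : ∃ k', k = k' + 2 := ⟨k - 2, by omega⟩
        have hvx : par hT r ((par hT r)^[k' + 1] y) = x := by
          rw [← Function.iterate_succ_apply' (par hT r) (k' + 1) y]; exact hxy'
        have hcv : par hT r ((par hT r)^[k'] y) = (par hT r)^[k' + 1] y :=
          (Function.iterate_succ_apply' (par hT r) k' y).symm
        have hdv : depth hT r ((par hT r)^[k' + 1] y) = depth hT r x + 1 := by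
          rw [depth_iter hT r _ (by omega)]; omega
        have hdc : depth hT r ((par hT r)^[k'] y) = depth hT r x + 2 := by
          rw [depth_iter hT r _ (by omega)]; omega
        have hvr : (par hT r)^[k' + 1] y ≠ r := by
          intro h; rw [h, depth_self hT r] at hdv; omega
        have hcr : (par hT r)^[k'] y ≠ r := by
          intro h; rw [h, depth_self hT r] at hdc; omega
        have hG2 := anc_dist hT r hΔ hdeg hf0.le hvr hcv hcr
        rw [hvx, hdv] at hG2
        have hcont := contain hT r Δ hf0 hS0 hfS hαS k' (v := y) (by omega)
        have hdyk : depth hT r y - k' = depth hT r x + 2 := by omega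
        rw [hdyk] at hcont
        have htri : dist (emb hT r Δ f x) (emb hT r Δ f ((par hT r)^[k'] y))
            ≤ dist (emb hT r Δ f x) (emb hT r Δ f y) + dist (emb hT r Δ f ((par hT r)^[k'] y)) (emb hT r Δ f y) := by
          rw [_root_.dist_comm (emb hT r Δ f ((par hT r)^[k'] y)) (emb hT r Δ f y)]
          exact _root_.dist_triangle _ _ _
        have hBB : α * f ^ depth hT r x + S * f ^ (depth hT r x + 2)
            ≤ f ^ (depth hT r x + 1)
              * Real.sqrt (1 - 2 * f * Real.cos (2 * π / Δ) + f ^ 2) := by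
          have hmul := mul_le_mul_of_nonneg_left hB (pow_nonneg hf0.le (depth hT r x))
          have e1 : f ^ (depth hT r x + 1) = f ^ depth hT r x * f := pow_succ f _
          have e2 : f ^ (depth hT r x + 2) = f ^ depth hT r x * f * f := by
            rw [show depth hT r x + 2 = (depth hT r x + 1) + 1 from rfl, pow_succ, e1]
          rw [e1, e2]
          nlinarith [hmul]
        linarith
    · -- sibling-branches case
      obtain ⟨j, hj1, hjd, hje, hjne⟩ :=
        meet hT r (depth hT r x) x ((par hT r)^[k] y) rfl hy' (fun h => hxy' h.symm)
      have hjj : j - 1 + 1 = j := by omega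
      have hc2y : (par hT r)^[j - 1] ((par hT r)^[k] y) = (par hT r)^[(j - 1) + k] y :=
        (Function.iterate_add_apply _ _ _ _).symm
      have hpar12 : par hT r ((par hT r)^[j - 1] x)
          = par hT r ((par hT r)^[j - 1] ((par hT r)^[k] y)) := by
        calc par hT r ((par hT r)^[j - 1] x) = (par hT r)^[j - 1 + 1] x :=
              (Function.iterate_succ_apply' _ _ _).symm
          _ = (par hT r)^[j] x := by rw [hjj]
          _ = (par hT r)^[j] ((par hT r)^[k] y) := hje
          _ = (par hT r)^[j - 1 + 1] ((par hT r)^[k] y) := by rw [hjj]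
          _ = par hT r ((par hT r)^[j - 1] ((par hT r)^[k] y)) :=
              Function.iterate_succ_apply' _ _ _
      have hd1 : depth hT r ((par hT r)^[j - 1] x) = depth hT r x - (j - 1) :=
        depth_iter hT r _ (by omega)
      have hd2 : depth hT r ((par hT r)^[j - 1] ((par hT r)^[k] y))
          = depth hT r x - (j - 1) := by
        rw [depth_iter hT r _ (by omega : j - 1 ≤ depth hT r ((par hT r)^[k] y)), hy']
      have h1r : (par hT r)^[j - 1] x ≠ r := by
        intro h; rw [h, depth_self hT r] at hd1; omega
      have h2r : (par hT r)^[j - 1] ((par hT r)^[k] y) ≠ r := by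
        intro h; rw [h, depth_self hT r] at hd2; omega
      have hG1 := sib_dist hT r hΔ hdeg hf0.le hS0.le hS2 hjne hpar12 h1r h2r
      rw [hd1] at hG1
      have hcont1 := contain hT r Δ hf0 hS0 hfS hαS (j - 1) (v := x) (by omega)
      have hcont2 := contain hT r Δ hf0 hS0 hfS hαS ((j - 1) + k) (v := y) (by omega)
      have he1 : depth hT r y - ((j - 1) + k) = depth hT r x - (j - 1) := by omega
      rw [he1, ← hc2y] at hcont2
      have htri : dist (emb hT r Δ f ((par hT r)^[j - 1] x))
            (emb hT r Δ f ((par hT r)^[j - 1] ((par hT r)^[k] y)))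
          ≤ (dist (emb hT r Δ f ((par hT r)^[j - 1] x)) (emb hT r Δ f x) + dist (emb hT r Δ f x) (emb hT r Δ f y))
            + dist (emb hT r Δ f ((par hT r)^[j - 1] ((par hT r)^[k] y))) (emb hT r Δ f y) := by
        rw [_root_.dist_comm (emb hT r Δ f ((par hT r)^[j - 1] ((par hT r)^[k] y))) (emb hT r Δ f y)]
        calc dist (emb hT r Δ f ((par hT r)^[j - 1] x)) (emb hT r Δ f ((par hT r)^[j - 1] ((par hT r)^[k] y)))
            ≤ dist (emb hT r Δ f ((par hT r)^[j - 1] x)) (emb hT r Δ f y)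
              + dist (emb hT r Δ f y) (emb hT r Δ f ((par hT r)^[j - 1] ((par hT r)^[k] y))) :=
              _root_.dist_triangle _ _ _
          _ ≤ (dist (emb hT r Δ f ((par hT r)^[j - 1] x)) (emb hT r Δ f x) + dist (emb hT r Δ f x) (emb hT r Δ f y))
              + dist (emb hT r Δ f y) (emb hT r Δ f ((par hT r)^[j - 1] ((par hT r)^[k] y))) := by
              have := _root_.dist_triangle (emb hT r Δ f ((par hT r)^[j - 1] x)) (emb hT r Δ f x) (emb hT r Δ f y)
              linarith
      linarith
  have M : ∀ x y : V, x ≠ y →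
      α * f ^ depth hT r x + α * f ^ depth hT r y ≤ dist (emb hT r Δ f x) (emb hT r Δ f y) := by
    intro x y hxy
    rcases le_total (depth hT r x) (depth hT r y) with h | h
    · exact M0 x y h hxy
    · have := M0 y x h hxy.symm
      rw [_root_.dist_comm] at this
      linarith
  -- ply radius bound
  have hply : ∀ v : V, plyRadius G (emb hT r Δ f) α v ≤ α * f ^ depth hT r v := by
    intro v
    rw [plyRadius]
    refine mul_le_mul_of_nonneg_left ?_ hα0.le
    refine Real.iSup_le ?_ (by positivity)
    rintro ⟨w, hw⟩
    have hadj : G.Adj v w := hw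
    rcases adj_cases hT r hadj with ⟨hp, hd⟩ | ⟨hp, hd⟩
    · have hwr : w ≠ r := by
        intro h; rw [h, depth_self hT r] at hd; omega
      have hdist : dist (emb hT r Δ f v) (emb hT r Δ f w) = f ^ depth hT r w := by
        rw [_root_.dist_comm, ← hp, dist_emb_par hT r hwr Δ hf0.le]
      rw [hdist, hd]
      exact pow_le_pow_of_le_one hf0.le hf1.le (Nat.le_succ _)
    · have hvr : v ≠ r := by
        intro h; rw [h, depth_self hT r] at hd; omega
      have hdist : dist (emb hT r Δ f v) (emb hT r Δ f w) = f ^ depth hT r v := by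
        rw [← hp, dist_emb_par hT r hvr Δ hf0.le]
      rw [hdist]
  refine ⟨emb hT r Δ f, ?_, ?_⟩
  · intro a b hab
    by_contra hne
    have hM := M a b hne
    rw [hab, _root_.dist_self] at hM
    have : 0 < α * f ^ depth hT r a + α * f ^ depth hT r b := by positivity
    linarith
  · intro v w hvw
    exact Metric.ball_disjoint_ball
      (le_trans (add_le_add (hply v) (hply w)) (M v w hvw))
end

section
/- There exists a constant c > 0 such that for every natural number Δ ≥ 3, every finite tree G with maximum degree at most Δ admits a straight-line drawing whose ply disks with parameter α = c/Δ are pairwise disjoint (i.e., a 1-ply drawing). In other words, trees of maximum degree Δ have 1-ply drawings for α = Θ(1/Δ). -/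
open Real

section Aux

open SimpleGraph Metric

/-- The standard identification of `ℂ` with the Euclidean plane. -/
noncomputable def cplxToE2 (z : ℂ) : EuclideanSpace ℝ (Fin 2) := !₂[z.re, z.im]

lemma dist_cplxToE2 (z w : ℂ) : dist (cplxToE2 z) (cplxToE2 w) = dist z w := by
  rw [EuclideanSpace.dist_eq, Complex.dist_eq, Complex.norm_def, Complex.normSq_apply]
  simp only [cplxToE2, PiLp.toLp_apply, Fin.sum_univ_two, Matrix.cons_val_zero, Matrix.cons_val_one,
    Matrix.head_cons, Complex.sub_re, Complex.sub_im, Real.dist_eq, sq_abs]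
  ring_nf

/-- Jordan-type bound: `sin (π/Δ)` comfortably exceeds `1/(Δ-1) + 1/(8Δ)` for `Δ ≥ 3`. -/
lemma sin_pi_div_gt (Δ : ℕ) (hΔ : 3 ≤ Δ) :
    1 / ((Δ : ℝ) - 1) + 1 / (8 * (Δ : ℝ)) < Real.sin (π / (Δ : ℝ)) := by
  have hΔ3 : (3 : ℝ) ≤ (Δ : ℝ) := by exact_mod_cast hΔ
  rcases eq_or_lt_of_le hΔ with heq | hlt
  · -- Δ = 3 : sin (π/3) = √3/2
    have h3 : (Δ : ℝ) = 3 := by exact_mod_cast heq.symm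
    rw [h3]
    have : Real.sin (π / 3) = Real.sqrt 3 / 2 := Real.sin_pi_div_three
    rw [this]
    have : (13 : ℝ) / 12 < Real.sqrt 3 := by
      have := Real.lt_sqrt (x := (13 : ℝ) / 12) (y := 3) (by norm_num)
      rw [this]; norm_num
    norm_num
    nlinarith [this]
  · -- Δ ≥ 4
    have hΔ4 : (4 : ℝ) ≤ (Δ : ℝ) := by exact_mod_cast hlt
    have hπ3 : (3 : ℝ) < π := Real.pi_gt_three
    have hπ4 : π < 3.15 := by linarith [Real.pi_lt_d2]
    set t : ℝ := π / (Δ : ℝ) with ht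
    have hΔpos : (0 : ℝ) < (Δ : ℝ) := by linarith
    have ht0 : 0 < t := by positivity
    have ht1 : t ≤ 3.15 / 4 := by
      rw [ht, div_le_div_iff₀ hΔpos (by norm_num)]
      nlinarith
    have hsin : t - t ^ 3 / 4 < Real.sin t :=
      by have := Real.sin_gt_sub_cube ht0; nlinarith [pow_pos ht0 3]
    have htlb : 3 / (Δ : ℝ) ≤ t := by
      rw [ht, div_le_div_iff₀ hΔpos hΔpos]
      nlinarith
    have htub : t ≤ 3.15 / (Δ : ℝ) := by
      rw [ht, div_le_div_iff₀ hΔpos hΔpos]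
      nlinarith
    have h1 : 1 / ((Δ : ℝ) - 1) ≤ (4 / 3) / (Δ : ℝ) := by
      rw [div_le_div_iff₀ (by linarith) hΔpos]
      nlinarith
    have h2 : 1 / (8 * (Δ : ℝ)) = (1 / 8) / (Δ : ℝ) := by ring
    -- sin t > t (1 - t^2/4) ≥ (3/Δ)·(1 - 0.16) = 2.5.../Δ > (4/3 + 1/8)/Δ
    have key : (4 / 3) / (Δ : ℝ) + (1 / 8) / (Δ : ℝ) < Real.sin t := by
      have ht2 : t ^ 2 ≤ (3.15 / 4) ^ 2 := by nlinarith
      have : t * (1 - t ^ 2 / 4) ≥ t * (1 - (3.15 / 4) ^ 2 / 4) := by nlinarith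
      have hlow : t * 0.75 ≤ t - t ^ 3 / 4 := by nlinarith
      have h13 : 1 / (Δ : ℝ) ≤ t / 3 := by
        rw [div_le_div_iff₀ hΔpos (by norm_num)]
        have := (div_le_iff₀ hΔpos).mp htlb
        linarith
      have : (4 / 3 + 1 / 8) / (Δ : ℝ) ≤ (4 / 3 + 1 / 8) * (t / 3) := by
        calc (4 / 3 + 1 / 8) / (Δ : ℝ) = (4 / 3 + 1 / 8) * (1 / (Δ : ℝ)) := by ring
          _ ≤ (4 / 3 + 1 / 8) * (t / 3) :=
            mul_le_mul_of_nonneg_left h13 (by norm_num)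
      have hc : (4 / 3 + 1 / 8) * (t / 3) < t * 0.75 := by nlinarith
      calc (4 / 3) / (Δ : ℝ) + (1 / 8) / (Δ : ℝ) = (4 / 3 + 1 / 8) / (Δ : ℝ) := by ring
        _ ≤ (4 / 3 + 1 / 8) * (t / 3) := by assumption
        _ < t * 0.75 := hc
        _ ≤ t - t ^ 3 / 4 := hlow
        _ < Real.sin t := hsin
    linarith [h1, key, h2.le]

set_option maxHeartbeats 1000000 in
/-- The main construction: a layout of a tree in `ℂ` with controlled neighbor
distances `R v` and all pairwise distances exceeding `(R v + R w)/(8Δ)`. -/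
lemma tree_layout (Δ : ℕ) (hΔ : 3 ≤ Δ)
    (V : Type) [Fintype V] [DecidableEq V] [Nonempty V]
    (G : SimpleGraph V) [DecidableRel G.Adj]
    (hT : G.IsTree) (hdeg : ∀ v, G.degree v ≤ Δ) :
    ∃ (f : V → ℂ) (R : V → ℝ), (∀ v, 0 ≤ R v) ∧
      (∀ v w, w ∈ G.neighborSet v → dist (f v) (f w) ≤ R v) ∧
      (∀ v w, v ≠ w →
        (1 / 8 : ℝ) / (Δ : ℝ) * R v + (1 / 8 : ℝ) / (Δ : ℝ) * R w < dist (f v) (f w)) := by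
  classical
  have hconn : G.Connected := hT.isConnected
  have huniq := hT.existsUnique_path
  -- root and distance
  set root : V := Classical.arbitrary V with hroot_def
  set d : V → ℕ := fun v => G.dist root v with hd_def
  have hdg : ∀ v, G.dist root v = d v := fun _ => rfl
  have hdroot : d root = 0 := SimpleGraph.dist_self
  have hroot_of : ∀ v, d v = 0 → v = root := fun v h =>
    ((hconn.preconnected root v).dist_eq_zero_iff.mp h).symm
  have hne_pos : ∀ v, v ≠ root → 1 ≤ d v := by
    intro v hv
    rcases Nat.eq_zero_or_pos (d v) with h | h
    · exact absurd (hroot_of v h) hv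
    · exact h
  -- shortest paths
  have SP : ∀ v, ∃ Q : G.Walk root v, Q.IsPath ∧ Q.length = d v := by
    intro v
    obtain ⟨W, hW⟩ := (hconn.preconnected root v).exists_walk_length_eq_dist
    exact ⟨W.bypass, W.bypass_isPath,
      le_antisymm (W.length_bypass_le.trans_eq hW) (SimpleGraph.dist_le _)⟩
  -- vertices on a shortest walk are strictly closer to the root
  have hSL : ∀ (y : V) (W : G.Walk root y), W.length = d y →
      ∀ x, ∀ hx : x ∈ W.support, x ≠ y → d x < d y := by
    intro y W hW x hx hxy
    have h1 : d x ≤ (W.takeUntil x hx).length := SimpleGraph.dist_le _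
    have h2 : (W.takeUntil x hx).length + (W.dropUntil x hx).length = W.length := by
      have := congrArg SimpleGraph.Walk.length (W.take_spec hx)
      rwa [SimpleGraph.Walk.length_append] at this
    have h3 : (W.dropUntil x hx).length ≠ 0 := fun h =>
      hxy (SimpleGraph.Walk.eq_of_length_eq_zero h)
    omega
  have hADJ1 : ∀ a b, G.Adj a b → d b ≤ d a + 1 := by
    intro a b hab
    obtain ⟨W, hW⟩ := (hconn.preconnected root a).exists_walk_length_eq_dist
    have := SimpleGraph.dist_le (W.concat hab)
    rwa [SimpleGraph.Walk.length_concat, hW] at this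
  have hNE : ∀ a b, G.Adj a b → d a ≠ d b := by
    intro a b hab he
    obtain ⟨Q, hQp, hQl⟩ := SP a
    have hbn : b ∉ Q.support := by
      intro hb
      have := hSL a Q hQl b hb hab.ne'
      omega
    have hQ'p : (Q.concat hab).IsPath := by
      rw [← SimpleGraph.Walk.isPath_reverse_iff, SimpleGraph.Walk.reverse_concat]
      exact SimpleGraph.Walk.IsPath.cons
        (by rwa [SimpleGraph.Walk.isPath_reverse_iff])
        (by simpa [SimpleGraph.Walk.support_reverse] using hbn)
    obtain ⟨Rb, hRp, hRl⟩ := SP b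
    have heqw := (huniq root b).unique hQ'p hRp
    have hlen := congrArg SimpleGraph.Walk.length heqw
    rw [SimpleGraph.Walk.length_concat, hQl, hRl] at hlen
    omega
  have hU : ∀ v w1 w2, G.Adj v w1 → G.Adj v w2 →
      d w1 + 1 = d v → d w2 + 1 = d v → w1 = w2 := by
    intro v w1 w2 h1 h2 e1 e2
    obtain ⟨Q1, hQ1p, hQ1l⟩ := SP w1
    obtain ⟨Q2, hQ2p, hQ2l⟩ := SP w2
    have hv1 : v ∉ Q1.support := by
      intro hv
      rcases eq_or_ne v w1 with rfl | hne
      · omega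
      · have := hSL w1 Q1 hQ1l v hv hne; omega
    have hv2 : v ∉ Q2.support := by
      intro hv
      rcases eq_or_ne v w2 with rfl | hne
      · omega
      · have := hSL w2 Q2 hQ2l v hv hne; omega
    have hP1 : (Q1.concat h1.symm).IsPath := by
      rw [← SimpleGraph.Walk.isPath_reverse_iff, SimpleGraph.Walk.reverse_concat]
      exact SimpleGraph.Walk.IsPath.cons
        (by rwa [SimpleGraph.Walk.isPath_reverse_iff])
        (by simpa [SimpleGraph.Walk.support_reverse] using hv1)
    have hP2 : (Q2.concat h2.symm).IsPath := by
      rw [← SimpleGraph.Walk.isPath_reverse_iff, SimpleGraph.Walk.reverse_concat]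
      exact SimpleGraph.Walk.IsPath.cons
        (by rwa [SimpleGraph.Walk.isPath_reverse_iff])
        (by simpa [SimpleGraph.Walk.support_reverse] using hv2)
    have heqw := (huniq root v).unique hP1 hP2
    have := congrArg (fun W : G.Walk root v => W.reverse.getVert 1) heqw
    simpa only [SimpleGraph.Walk.reverse_concat, SimpleGraph.Walk.getVert_cons_succ,
      SimpleGraph.Walk.getVert_zero] using this
  -- parent function
  have hex : ∀ v, ∃ w, (v = root → w = root) ∧ (v ≠ root → G.Adj v w ∧ d w + 1 = d v) := by
    intro v
    rcases eq_or_ne v root with rfl | hv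
    · exact ⟨root, fun _ => rfl, fun h => absurd rfl h⟩
    · obtain ⟨W, hW⟩ := (hconn.preconnected root v).exists_walk_length_eq_dist
      obtain ⟨u, hadj, q, hq⟩ := SimpleGraph.Walk.exists_eq_cons_of_ne hv W.reverse
      have hlq : q.length + 1 = d v := by
        have := congrArg SimpleGraph.Walk.length hq
        rw [SimpleGraph.Walk.length_reverse, hW, hdg] at this
        simp only [SimpleGraph.Walk.length_cons] at this
        omega
      have hu1 : d u ≤ d v - 1 := by
        have := SimpleGraph.dist_le q.reverse
        rw [SimpleGraph.Walk.length_reverse, hdg] at this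
        omega
      have hu2 : d v ≤ d u + 1 := hADJ1 u v hadj.symm
      refine ⟨u, fun h => absurd h hv, fun _ => ⟨hadj, ?_⟩⟩
      have := hne_pos v hv
      omega
  choose p hp_root hp_spec using hex
  have hp_adj : ∀ v, v ≠ root → G.Adj v (p v) := fun v h => (hp_spec v h).1
  have hp_d : ∀ v, v ≠ root → d (p v) + 1 = d v := fun v h => (hp_spec v h).2
  -- neighbor classification
  have hF0 : ∀ a b, G.Adj a b → (a ≠ root ∧ b = p a) ∨ (b ≠ root ∧ a = p b) := by
    intro a b hab
    have h1 := hADJ1 a b hab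
    have h2 := hADJ1 b a hab.symm
    have h3 := hNE a b hab
    rcases lt_or_gt_of_ne h3 with h | h
    · -- d a < d b : a = p b
      right
      have hbr : b ≠ root := by
        intro hbr; rw [hbr, hdroot] at h; omega
      refine ⟨hbr, hU b a (p b) hab.symm (hp_adj b hbr) (by omega) (hp_d b hbr)⟩
    · left
      have har : a ≠ root := by
        intro har; rw [har, hdroot] at h; omega
      refine ⟨har, hU a b (p a) hab (hp_adj a har) (by omega) (hp_d a har)⟩
  -- depth of iterated parents
  have hdit : ∀ k v, k ≤ d v → d (p^[k] v) = d v - k := by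
    intro k
    induction k with
    | zero => intro v _; simp
    | succ n ih =>
      intro v h
      rw [Function.iterate_succ_apply']
      have h1 : d (p^[n] v) = d v - n := ih v (by omega)
      have h2 : p^[n] v ≠ root := by
        intro he; rw [he, hdroot] at h1; omega
      have := hp_d _ h2
      omega
  have hit_root : ∀ v, p^[d v] v = root := by
    intro v
    apply hroot_of
    rw [hdit (d v) v le_rfl]
    omega
  -- numerics
  have hΔ3 : (3 : ℝ) ≤ (Δ : ℝ) := by exact_mod_cast hΔ
  have hΔpos : (0 : ℝ) < (Δ : ℝ) := by linarith
  set ε : ℕ → ℝ := fun n => ((Δ : ℝ)⁻¹) ^ n with hε_def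
  have hε0 : ∀ n, 0 < ε n := fun n => pow_pos (by positivity) n
  have hεstep : ∀ n, (Δ : ℝ) * ε (n + 1) = ε n := by
    intro n
    show (Δ : ℝ) * ((Δ : ℝ)⁻¹ ^ (n + 1)) = (Δ : ℝ)⁻¹ ^ n
    rw [pow_succ]
    field_simp
  have hεmono : ∀ m n, m ≤ n → ε n ≤ ε m := fun m n h =>
    pow_le_pow_of_le_one (by positivity) (by rw [inv_le_one_iff₀]; right; linarith) h
  -- digits
  have hgem : ∀ u : V, ∃ g : G.neighborSet u → Fin Δ, Function.Injective g := by
    intro u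
    have hcard : Fintype.card (G.neighborSet u) ≤ Fintype.card (Fin Δ) := by
      rw [G.card_neighborSet_eq_degree, Fintype.card_fin]
      exact hdeg u
    obtain ⟨e⟩ := Function.Embedding.nonempty_of_card_le hcard
    exact ⟨e, e.injective⟩
  choose gemb hgemb using hgem
  have hdigex : ∀ v, ∃ n : ℕ, n < Δ ∧ ∀ h : G.Adj (p v) v, n = (gemb (p v) ⟨v, h⟩ : Fin Δ) := by
    intro v
    by_cases h : G.Adj (p v) v
    · exact ⟨(gemb (p v) ⟨v, h⟩ : Fin Δ), (gemb (p v) ⟨v, h⟩).isLt, fun _ => rfl⟩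
    · exact ⟨0, by omega, fun h' => absurd h' h⟩
  choose digit hdiglt hdigspec using hdigex
  have hdig_inj : ∀ x y, x ≠ root → y ≠ root → x ≠ y → p x = p y → digit x ≠ digit y := by
    intro x y hx hy hxy hp heq
    have hax : G.Adj (p x) x := (hp_adj x hx).symm
    have hay : G.Adj (p y) y := (hp_adj y hy).symm
    have e1 := hdigspec x hax
    have e2 := hdigspec y hay
    apply hxy
    have key : ∀ (u u' : V), u = u' → ∀ (hx' : G.Adj u x) (hy' : G.Adj u' y),
        ((gemb u ⟨x, hx'⟩ : Fin Δ) : ℕ) = ((gemb u' ⟨y, hy'⟩ : Fin Δ) : ℕ) → x = y := by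
      intro u u' h
      subst h
      intro hx' hy' hh
      have := hgemb u (Fin.val_injective hh)
      exact congrArg Subtype.val this
    exact key (p x) (p y) hp hax hay (by rw [← e1, ← e2, heq])
  -- directions
  set dir : ℕ → ℂ := fun n => Complex.exp ((2 * π * n / (Δ : ℝ) : ℝ) * Complex.I) with hdir_def
  have hdir_norm : ∀ n, ‖dir n‖ = 1 := fun n => Complex.norm_exp_ofReal_mul_I _
  -- chord bound
  have hchord : ∀ a b : ℕ, a < Δ → b < Δ → a ≠ b →
      2 * Real.sin (π / (Δ : ℝ)) ≤ ‖dir a - dir b‖ := by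
    have hπpos : 0 < π := Real.pi_pos
    have haux : ∀ a b : ℕ, b < a → a < Δ →
        2 * Real.sin (π / (Δ : ℝ)) ≤ ‖dir a - dir b‖ := by
      intro a b hba haΔ
      set A : ℝ := 2 * π * a / (Δ : ℝ) with hA
      set B : ℝ := 2 * π * b / (Δ : ℝ) with hB
      have hre : (dir a - dir b).re = Real.cos A - Real.cos B := by
        simp only [hdir_def, Complex.sub_re, Complex.exp_ofReal_mul_I_re, hA, hB]
      have him : (dir a - dir b).im = Real.sin A - Real.sin B := by
        simp only [hdir_def, Complex.sub_im, Complex.exp_ofReal_mul_I_im, hA, hB]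
      have hnsq : Complex.normSq (dir a - dir b) = 2 - 2 * Real.cos (A - B) := by
        rw [Complex.normSq_apply, hre, him, Real.cos_sub]
        have pA := Real.sin_sq_add_cos_sq A
        have pB := Real.sin_sq_add_cos_sq B
        nlinarith [pA, pB]
      set k : ℕ := a - b with hkdef
      have hk1 : 1 ≤ k := by omega
      have hk2 : k ≤ Δ - 1 := by omega
      have hAB : A - B = 2 * π * (k : ℝ) / (Δ : ℝ) := by
        rw [hA, hB, hkdef]
        have : ((a - b : ℕ) : ℝ) = (a : ℝ) - (b : ℝ) := by
          push_cast [Nat.cast_sub (le_of_lt hba)]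
          ring
        rw [this]
        ring
      set x : ℝ := 2 * π * (k : ℝ) / (Δ : ℝ) with hxdef
      have hk1' : (1 : ℝ) ≤ (k : ℝ) := by exact_mod_cast hk1
      have hk2' : (k : ℝ) ≤ (Δ : ℝ) - 1 := by
        have : (k : ℝ) ≤ ((Δ - 1 : ℕ) : ℝ) := by exact_mod_cast hk2
        have hc : ((Δ - 1 : ℕ) : ℝ) = (Δ : ℝ) - 1 := by
          push_cast [Nat.cast_sub (by omega : 1 ≤ Δ)]
          ring
        rw [hc] at this
        linarith
      have hx1 : 2 * π / (Δ : ℝ) ≤ x := by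
        rw [hxdef, div_le_div_iff₀ hΔpos hΔpos]
        nlinarith [mul_nonneg (mul_nonneg (le_of_lt hπpos) (le_of_lt hΔpos))
          (sub_nonneg.mpr hk1')]
      have hx2 : x ≤ 2 * π - 2 * π / (Δ : ℝ) := by
        rw [hxdef]
        rw [div_le_iff₀ hΔpos]
        have h2 : 2 * π / (Δ : ℝ) * (Δ : ℝ) = 2 * π := by
          field_simp
        nlinarith [h2]
      have hcosmono : Real.cos x ≤ Real.cos (2 * π / (Δ : ℝ)) := by
        have h0 : (0 : ℝ) ≤ 2 * π / (Δ : ℝ) := by positivity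
        by_cases hxpi : x ≤ π
        · exact Real.cos_le_cos_of_nonneg_of_le_pi h0 hxpi hx1
        · push_neg at hxpi
          rw [← Real.cos_two_pi_sub x]
          apply Real.cos_le_cos_of_nonneg_of_le_pi h0 (by linarith)
          linarith
      have hhalf : 2 - 2 * Real.cos (2 * π / (Δ : ℝ)) = 4 * Real.sin (π / (Δ : ℝ)) ^ 2 := by
        have := Real.sin_sq_eq_half_sub (x := π / (Δ : ℝ))
        have harg : 2 * (π / (Δ : ℝ)) = 2 * π / (Δ : ℝ) := by ring
        rw [harg] at this
        linarith
      have hsinnn : 0 ≤ Real.sin (π / (Δ : ℝ)) := by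
        apply Real.sin_nonneg_of_nonneg_of_le_pi (by positivity)
        rw [div_le_iff₀ hΔpos]
        nlinarith
      have hsq : (2 * Real.sin (π / (Δ : ℝ))) ^ 2 ≤ Complex.normSq (dir a - dir b) := by
        rw [hnsq, hAB]
        nlinarith [hcosmono, hhalf]
      have := Real.sqrt_le_sqrt hsq
      rwa [Real.sqrt_sq (by positivity), ← Complex.norm_def] at this
    intro a b haΔ hbΔ hab
    rcases lt_or_gt_of_ne hab with h | h
    · rw [norm_sub_rev]
      exact haux b a h hbΔ
    · exact haux a b h haΔ
  -- the layout
  set tm : V → ℂ := fun u => (ε (d u) : ℂ) * dir (digit u) with htm_def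
  set f : V → ℂ := fun v => ∑ k ∈ Finset.range (d v), tm (p^[k] v) with hf_def
  have hrec : ∀ v, v ≠ root → f v = f (p v) + tm v := by
    intro v hv
    have hdv : d v = d (p v) + 1 := (hp_d v hv).symm
    show (∑ k ∈ Finset.range (d v), tm (p^[k] v)) = _
    rw [hdv, Finset.sum_range_succ']
    simp only [Function.iterate_succ_apply, Function.iterate_zero_apply]
    rfl
  have habs_tm : ∀ v, ‖tm v‖ = ε (d v) := by
    intro v
    show ‖(ε (d v) : ℂ) * dir (digit v)‖ = ε (d v)
    rw [norm_mul, hdir_norm, mul_one, Complex.norm_real, Real.norm_eq_abs, abs_of_pos (hε0 _)]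
  have hedge : ∀ v, v ≠ root → dist (f v) (f (p v)) = ε (d v) := by
    intro v hv
    rw [Complex.dist_eq, hrec v hv]
    simpa using habs_tm v
  -- chain bound
  have hCC : ∀ k v, k ≤ d v → dist (f v) (f (p^[k] v)) ≤ ε (d v - k) / ((Δ : ℝ) - 1) := by
    intro k
    induction k with
    | zero =>
      intro v _
      simp only [Function.iterate_zero_apply, _root_.dist_self, Nat.sub_zero]
      have := hε0 (d v)
      have h2 : (0:ℝ) < (Δ : ℝ) - 1 := by linarith
      positivity
    | succ n ih =>
      intro v h
      have hx_ne : p^[n] v ≠ root := by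
        intro he
        have := hdit n v (by omega)
        rw [he, hdroot] at this
        omega
      have hdx : d (p^[n] v) = d v - n := hdit n v (by omega)
      calc dist (f v) (f (p^[n + 1] v))
          ≤ dist (f v) (f (p^[n] v)) + dist (f (p^[n] v)) (f (p^[n + 1] v)) := dist_triangle _ _ _
        _ ≤ ε (d v - n) / ((Δ : ℝ) - 1) + ε (d v - n) := by
            have h1 := ih v (by omega)
            have h2 : dist (f (p^[n] v)) (f (p^[n + 1] v)) = ε (d v - n) := by
              rw [Function.iterate_succ_apply', ← hdx]
              exact hedge _ hx_ne
            rw [h2]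
            linarith
        _ ≤ ε (d v - (n + 1)) / ((Δ : ℝ) - 1) := by
            have hm : d v - n = (d v - (n + 1)) + 1 := by omega
            have hstep := hεstep (d v - (n + 1))
            rw [hm]
            have hεpos := hε0 (d v - (n + 1))
            rw [div_add' _ _ _ (by linarith), div_le_div_iff₀ (by linarith) (by linarith)]
            nlinarith [hε0 (d v - (n + 1) + 1)]
  -- key constant inequality
  have hK := sin_pi_div_gt Δ hΔ
  -- ancestor-case bound
  have hANC : ∀ a b, a ≠ b → d a < d b → a = p^[d b - d a] b →
      (1 / 8 : ℝ) / (Δ : ℝ) * ε (d a) + (1 / 8 : ℝ) / (Δ : ℝ) * ε (d b) < dist (f a) (f b) := by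
    intro a b hab hd hanc
    set i : ℕ := d b - d a with hi
    have hi1 : 1 ≤ i := by omega
    set x : V := p^[i - 1] b with hx
    have hdx : d x = d a + 1 := by
      rw [hx, hdit (i - 1) b (by omega)]
      omega
    have hx_ne : x ≠ root := by
      intro he; rw [he, hdroot] at hdx; omega
    have hpx : p x = a := by
      rw [hx, ← Function.iterate_succ_apply' p (i - 1) b,
        show (i - 1).succ = i by omega]
      exact hanc.symm
    have h1 : dist (f a) (f x) = ε (d x) := by
      rw [_root_.dist_comm, ← hpx]
      exact hedge x hx_ne
    have h2 : dist (f x) (f b) ≤ ε (d x) / ((Δ : ℝ) - 1) := by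
      have hcc := hCC (i - 1) b (by omega)
      rw [_root_.dist_comm]
      have hexp : d b - (i - 1) = d x := by rw [hdx]; omega
      rwa [hexp] at hcc
    have h3 : ε (d x) - ε (d x) / ((Δ : ℝ) - 1) ≤ dist (f a) (f b) := by
      have t1 := dist_triangle (f a) (f b) (f x)
      have hcomm : dist (f b) (f x) = dist (f x) (f b) := _root_.dist_comm _ _
      linarith
    have hεx := hε0 (d x)
    have hεa : ε (d a) = (Δ : ℝ) * ε (d x) := by
      rw [hdx]
      exact (hεstep (d a)).symm
    have hεb : ε (d b) ≤ ε (d x) := hεmono _ _ (by omega)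
    have hA : (1 / 8 : ℝ) / (Δ : ℝ) * ε (d a) = ε (d x) / 8 := by
      rw [hεa]
      field_simp
    have hB : (1 / 8 : ℝ) / (Δ : ℝ) * ε (d b) ≤ ε (d x) / 24 := by
      have hc : (1 / 8 : ℝ) / (Δ : ℝ) ≤ 1 / 24 := by
        rw [div_le_div_iff₀ hΔpos (by norm_num)]
        linarith
      calc (1 / 8 : ℝ) / (Δ : ℝ) * ε (d b) ≤ (1 / 24 : ℝ) * ε (d x) :=
            mul_le_mul hc hεb (hε0 _).le (by norm_num)
        _ = ε (d x) / 24 := by ring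
    have hC : ε (d x) / ((Δ : ℝ) - 1) ≤ ε (d x) / 2 := by
      rw [div_le_div_iff₀ (by linarith) (by norm_num)]
      nlinarith
    linarith
  -- main bound
  have hmain : ∀ v w, v ≠ w →
      (1 / 8 : ℝ) / (Δ : ℝ) * ε (d v) + (1 / 8 : ℝ) / (Δ : ℝ) * ε (d w) < dist (f v) (f w) := by
    intro v w hvw
    set P : ℕ → Prop := fun j => j ≤ d v ∧ j ≤ d w ∧ p^[d v - j] v = p^[d w - j] w with hPdef
    have hP0 : P 0 := ⟨Nat.zero_le _, Nat.zero_le _, by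
      rw [Nat.sub_zero, Nat.sub_zero, hit_root, hit_root]⟩
    set j : ℕ := Nat.findGreatest P (min (d v) (d w)) with hjdef
    have hPj : P j := Nat.findGreatest_spec (Nat.zero_le _) hP0
    obtain ⟨hjk, hjm, hjeq⟩ := hPj
    by_cases h1 : j = d v
    · -- v is a strict ancestor of w
      have hveq : v = p^[d w - j] w := by
        rw [show d v - j = 0 by omega] at hjeq
        simpa using hjeq
      have hdvw : d v < d w := by
        rcases Nat.lt_or_ge (d v) (d w) with h | h
        · exact h
        · exfalso
          apply hvw
          rw [show d w - j = 0 by omega] at hveq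
          simpa using hveq
      exact hANC v w hvw hdvw (by rw [← h1] at hdvw ⊢; exact hveq)
    · by_cases h2 : j = d w
      · -- w is a strict ancestor of v
        have hweq : w = p^[d v - j] v := by
          rw [show d w - j = 0 by omega] at hjeq
          simpa using hjeq.symm
        have hdwv : d w < d v := by
          rcases Nat.lt_or_ge (d w) (d v) with h | h
          · exact h
          · exfalso
            apply hvw
            rw [show d v - j = 0 by omega] at hweq
            simpa using hweq.symm
        have := hANC w v (Ne.symm hvw) hdwv (by rw [← h2] at hdwv ⊢; exact hweq)
        have hcomm : dist (f w) (f v) = dist (f v) (f w) := _root_.dist_comm _ _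
        linarith
      · -- the paths split below the common ancestor
        have hjv : j < d v := by
          rcases Nat.lt_or_ge j (d v) with h | h
          · exact h
          · exact absurd (le_antisymm hjk h) h1
        have hjw : j < d w := by
          rcases Nat.lt_or_ge j (d w) with h | h
          · exact h
          · exact absurd (le_antisymm hjm h) h2
        set x : V := p^[d v - j - 1] v with hxdef
        set y : V := p^[d w - j - 1] w with hydef
        have hdx : d x = j + 1 := by
          rw [hxdef, hdit _ v (by omega)]
          omega
        have hdy : d y = j + 1 := by
          rw [hydef, hdit _ w (by omega)]
          omega
        have hx_ne : x ≠ root := by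
          intro he; rw [he, hdroot] at hdx; omega
        have hy_ne : y ≠ root := by
          intro he; rw [he, hdroot] at hdy; omega
        have hpx : p x = p^[d v - j] v := by
          rw [hxdef, show d v - j = (d v - j - 1) + 1 by omega]
          exact (Function.iterate_succ_apply' p _ v).symm
        have hpy : p y = p^[d w - j] w := by
          rw [hydef, show d w - j = (d w - j - 1) + 1 by omega]
          exact (Function.iterate_succ_apply' p _ w).symm
        have hpxy : p x = p y := by rw [hpx, hpy, hjeq]
        have hxy : x ≠ y := by
          intro he
          have hPj1 : P (j + 1) := by
            refine ⟨by omega, by omega, ?_⟩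
            rw [show d v - (j + 1) = d v - j - 1 by omega,
              show d w - (j + 1) = d w - j - 1 by omega]
            exact he
          exact Nat.findGreatest_is_greatest (hjdef ▸ lt_add_one j)
            (by omega : j + 1 ≤ min (d v) (d w)) hPj1
        have hdigs : digit x ≠ digit y := hdig_inj x y hx_ne hy_ne hxy hpxy
        have hsib : 2 * Real.sin (π / (Δ : ℝ)) * ε (j + 1) ≤ dist (f x) (f y) := by
          have hfx := hrec x hx_ne
          have hfy := hrec y hy_ne
          have hdiff : f x - f y = (ε (j + 1) : ℂ) * (dir (digit x) - dir (digit y)) := by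
            rw [hfx, hfy, hpxy]
            have htmx : tm x = (ε (j + 1) : ℂ) * dir (digit x) := by
              simp only [htm_def, hdx]
            have htmy : tm y = (ε (j + 1) : ℂ) * dir (digit y) := by
              simp only [htm_def, hdy]
            rw [htmx, htmy]
            ring
          rw [Complex.dist_eq, hdiff, norm_mul, Complex.norm_real, Real.norm_eq_abs, abs_of_pos (hε0 _)]
          have hch := hchord (digit x) (digit y) (hdiglt x) (hdiglt y) hdigs
          calc 2 * Real.sin (π / (Δ : ℝ)) * ε (j + 1)
              = ε (j + 1) * (2 * Real.sin (π / (Δ : ℝ))) := by ring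
            _ ≤ ε (j + 1) * ‖dir (digit x) - dir (digit y)‖ :=
                mul_le_mul_of_nonneg_left hch (hε0 _).le
        have hvx : dist (f v) (f x) ≤ ε (j + 1) / ((Δ : ℝ) - 1) := by
          have hcc := hCC (d v - j - 1) v (by omega)
          rwa [show d v - (d v - j - 1) = j + 1 by omega] at hcc
        have hwy : dist (f w) (f y) ≤ ε (j + 1) / ((Δ : ℝ) - 1) := by
          have hcc := hCC (d w - j - 1) w (by omega)
          rwa [show d w - (d w - j - 1) = j + 1 by omega] at hcc
        have t1 : dist (f x) (f y) ≤ dist (f x) (f v) + dist (f v) (f y) :=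
          dist_triangle _ _ _
        have t2 : dist (f v) (f y) ≤ dist (f v) (f w) + dist (f w) (f y) :=
          dist_triangle _ _ _
        have c1 : dist (f x) (f v) = dist (f v) (f x) := _root_.dist_comm _ _
        have hεj := hε0 (j + 1)
        have hεv : ε (d v) ≤ ε (j + 1) := hεmono _ _ (by omega)
        have hεw : ε (d w) ≤ ε (j + 1) := hεmono _ _ (by omega)
        have hcnn : (0 : ℝ) ≤ (1 / 8 : ℝ) / (Δ : ℝ) := by positivity
        have hεvb := mul_le_mul_of_nonneg_left hεv hcnn
        have hεwb := mul_le_mul_of_nonneg_left hεw hcnn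
        have hA : (1 / 8 : ℝ) / (Δ : ℝ) + (1 / 8 : ℝ) / (Δ : ℝ)
            + 1 / ((Δ : ℝ) - 1) + 1 / ((Δ : ℝ) - 1) < 2 * Real.sin (π / (Δ : ℝ)) := by
          have e1 : (1 / 8 : ℝ) / (Δ : ℝ) = 1 / (8 * (Δ : ℝ)) := by ring
          rw [e1]
          linarith [hK]
        have hgap := mul_lt_mul_of_pos_right hA hεj
        have hd1 : (1 / ((Δ : ℝ) - 1)) * ε (j + 1) = ε (j + 1) / ((Δ : ℝ) - 1) := by ring
        nlinarith [hgap, hsib, hvx, hwy, t1, t2, c1, hεvb, hεwb]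
  refine ⟨f, fun v => ε (d v), fun v => (hε0 _).le, ?_, hmain⟩
  intro v w hw
  have hadj : G.Adj v w := hw
  rcases hF0 v w hadj with ⟨hv, rfl⟩ | ⟨hwr, rfl⟩
  · exact (hedge v hv).le
  · rw [_root_.dist_comm, hedge w hwr]
    exact hεmono _ _ (by have := hp_d w hwr; omega)


end Aux

/-- There is a constant `c > 0` such that for every `Δ ≥ 3`,
every finite tree of maximum degree at most `Δ` has a straight-line drawing
whose ply disks with parameter `α = c/Δ` are pairwise disjoint: trees of
maximum degree `Δ` have 1-ply drawings for `α = Θ(1/Δ)`. -/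
theorem stmt1 :
    ∃ c : ℝ, 0 < c ∧
      ∀ (Δ : ℕ), 3 ≤ Δ →
        ∀ (V : Type) [Fintype V] [DecidableEq V]
          (G : SimpleGraph V) [DecidableRel G.Adj],
          G.IsTree → (∀ v : V, G.degree v ≤ Δ) →
          ∃ ρ : V → EuclideanSpace ℝ (Fin 2), Function.Injective ρ ∧
            Pairwise fun v w : V =>
              Disjoint (Metric.ball (ρ v) (plyRadius G ρ (c / Δ) v))
                (Metric.ball (ρ w) (plyRadius G ρ (c / Δ) w)) := by
  refine ⟨1 / 8, by norm_num, ?_⟩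
  intro Δ hΔ V _ _ G _ hT hdeg
  cases isEmpty_or_nonempty V with
  | inl h =>
    exact ⟨fun v => (h.elim v), fun a => (h.elim a), fun a => (h.elim a)⟩
  | inr h =>
    obtain ⟨f, R, hR0, hnb, hmain⟩ := tree_layout Δ hΔ V G hT hdeg
    have hΔpos : (0 : ℝ) < (Δ : ℝ) := by
      have : (3 : ℝ) ≤ (Δ : ℝ) := by exact_mod_cast hΔ
      linarith
    have hcpos : (0 : ℝ) ≤ (1 / 8 : ℝ) / (Δ : ℝ) := by positivity
    set ρ : V → EuclideanSpace ℝ (Fin 2) := fun v => cplxToE2 (f v) with hρ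
    have hply : ∀ v, plyRadius G ρ ((1 / 8 : ℝ) / (Δ : ℝ)) v ≤ (1 / 8 : ℝ) / (Δ : ℝ) * R v := by
      intro v
      unfold plyRadius
      refine mul_le_mul_of_nonneg_left ?_ hcpos
      exact Real.iSup_le (fun w => by
        simp only [hρ]
        rw [dist_cplxToE2]
        exact hnb v w w.2) (hR0 v)
    have hplynn : ∀ v, 0 ≤ (1 / 8 : ℝ) / (Δ : ℝ) * R v := fun v =>
      mul_nonneg hcpos (hR0 v)
    refine ⟨ρ, ?_, ?_⟩
    · -- injectivity
      intro a b hab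
      by_contra hne
      have h1 := hmain a b hne
      have h2 : dist (ρ a) (ρ b) = 0 := by rw [hab]; simp
      simp only [hρ, dist_cplxToE2] at h2
      have := hplynn a; have := hplynn b
      linarith
    · -- pairwise disjoint
      intro v w hvw
      apply Metric.ball_disjoint_ball
      have hd : dist (ρ v) (ρ w) = dist (f v) (f w) := dist_cplxToE2 _ _
      have := hmain v w hvw
      calc plyRadius G ρ ((1 / 8 : ℝ) / (Δ : ℝ)) v + plyRadius G ρ ((1 / 8 : ℝ) / (Δ : ℝ)) w
          ≤ (1 / 8 : ℝ) / (Δ : ℝ) * R v + (1 / 8 : ℝ) / (Δ : ℝ) * R w :=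
            add_le_add (hply v) (hply w)
        _ ≤ dist (ρ v) (ρ w) := by rw [hd]; linarith
end

section
/- Every finite tree G with maximum degree at most 4 admits a straight-line drawing whose ply disks with parameter α = 1/3 are pairwise disjoint, i.e., a drawing with ply number 1 for α = 1/3. -/
open Real

namespace Stmt2Aux

def e : Fin 4 → ℝ × ℝ := ![(1,0), (-1,0), (0,1), (0,-1)]
def opp : Fin 4 → Fin 4 := ![1, 0, 3, 2]
def d1 (p q : ℝ × ℝ) : ℝ := |p.1 - q.1| + |p.2 - q.2|
def inn (σ p : ℝ × ℝ) : ℝ := σ.1 * p.1 + σ.2 * p.2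

lemma d1_nonneg (p q : ℝ × ℝ) : 0 ≤ d1 p q := by
  unfold d1; positivity

lemma d1_triangle (p q r : ℝ × ℝ) : d1 p r ≤ d1 p q + d1 q r := by
  unfold d1
  have h1 : |p.1 - r.1| ≤ |p.1 - q.1| + |q.1 - r.1| := abs_sub_le _ _ _
  have h2 : |p.2 - r.2| ≤ |p.2 - q.2| + |q.2 - r.2| := abs_sub_le _ _ _
  linarith

lemma d1_comm (p q : ℝ × ℝ) : d1 p q = d1 q p := by
  unfold d1; rw [abs_sub_comm, abs_sub_comm p.2]

lemma inn_le_d1 {σ : ℝ × ℝ} (h1 : |σ.1| ≤ 1) (h2 : |σ.2| ≤ 1) (p q : ℝ × ℝ) :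
    inn σ p - inn σ q ≤ d1 p q := by
  unfold inn d1
  have e1 : σ.1 * p.1 - σ.1 * q.1 ≤ |p.1 - q.1| := by
    calc σ.1 * p.1 - σ.1 * q.1 = σ.1 * (p.1 - q.1) := by ring
    _ ≤ |σ.1 * (p.1 - q.1)| := le_abs_self _
    _ = |σ.1| * |p.1 - q.1| := abs_mul _ _
    _ ≤ 1 * |p.1 - q.1| := by gcongr
    _ = |p.1 - q.1| := one_mul _
  have e2 : σ.2 * p.2 - σ.2 * q.2 ≤ |p.2 - q.2| := by
    calc σ.2 * p.2 - σ.2 * q.2 = σ.2 * (p.2 - q.2) := by ring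
    _ ≤ |σ.2 * (p.2 - q.2)| := le_abs_self _
    _ = |σ.2| * |p.2 - q.2| := abs_mul _ _
    _ ≤ 1 * |p.2 - q.2| := by gcongr
    _ = |p.2 - q.2| := one_mul _
  linarith

/-- witness for sigma1 -/
def sig1 (a b : Fin 4) : ℝ × ℝ :=
  if b = a then e a else ((e a).1 + (e b).1, (e a).2 + (e b).2)

/-- witness for sigma2 -/
def sig2 (a b : Fin 4) : ℝ × ℝ :=
  if b = opp a then e b else ((e b).1 - (e a).1, (e b).2 - (e a).2)

/-- functional meeting a direction and a non-opposite direction positively -/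
lemma sigma1 (a b : Fin 4) (h : b ≠ opp a) :
    ∃ σ : ℝ × ℝ, |σ.1| ≤ 1 ∧ |σ.2| ≤ 1 ∧ inn σ (e a) = 1 ∧ inn σ (e b) = 1 := by
  refine ⟨sig1 a b, ?_⟩
  fin_cases a <;> fin_cases b <;>
    simp_all [sig1, e, inn, opp, Fin.ext_iff] <;> (first | norm_num | skip) <;> split_ifs with h' <;> first | exact absurd h' (by decide) | norm_num

/-- separating functional for two distinct directions -/
lemma sigma2 (a b : Fin 4) (h : a ≠ b) :
    ∃ σ : ℝ × ℝ, |σ.1| ≤ 1 ∧ |σ.2| ≤ 1 ∧ inn σ (e a) = -1 ∧ inn σ (e b) = 1 := by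
  refine ⟨sig2 a b, ?_⟩
  fin_cases a <;> fin_cases b <;>
    simp_all [sig2, e, inn, opp, Fin.ext_iff] <;> (first | norm_num | skip) <;> split_ifs with h' <;> first | exact absurd h' (by decide) | norm_num



section Core

variable {V : Type*} [DecidableEq V]
variable (r₀ : V) (par : V → V) (dp : V → ℕ)

/-- edge length into `v` -/
noncomputable def ell (dp : V → ℕ) (v : V) : ℝ := (2⁻¹ : ℝ) ^ (dp v - 1)

lemma ell_pos (v : V) : 0 < ell dp v := pow_pos (by norm_num) _

/-- skip the direction `b` -/
def skipd (b : Fin 4) (i : Fin 4) : Fin 4 :=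
  if (i : ℕ) < (b : ℕ) then i else ⟨min ((i : ℕ) + 1) 3, by omega⟩

lemma skipd_ne (b i : Fin 4) (h : (i : ℕ) ≤ 2) : skipd b i ≠ b := by
  revert h; fin_cases b <;> fin_cases i <;> decide

lemma skipd_inj (b i j : Fin 4) (hi : (i : ℕ) ≤ 2) (hj : (j : ℕ) ≤ 2)
    (h : skipd b i = skipd b j) : i = j := by
  revert hi hj h; fin_cases b <;> fin_cases i <;> fin_cases j <;> decide

/-- fuel-based directions -/
noncomputable def dirN (ι : V → V → Fin 4) : ℕ → V → Fin 4
  | 0, _ => 0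
  | n + 1, v =>
    if v = r₀ then 0
    else if par v = r₀ then ι (par v) v
    else skipd (opp (dirN ι n (par v))) (ι (par v) v)

/-- directions -/
noncomputable def dirF (ι : V → V → Fin 4) (v : V) : Fin 4 := dirN r₀ par ι (dp v) v

/-- fuel-based positions -/
noncomputable def posN (dir : V → Fin 4) : ℕ → V → ℝ × ℝ
  | 0, _ => (0, 0)
  | n + 1, v =>
    if v = r₀ then (0, 0)
    else posN dir n (par v) + (ell dp v) • e (dir v)

/-- positions -/
noncomputable def posF (dir : V → Fin 4) (v : V) : ℝ × ℝ := posN r₀ par dp dir (dp v) v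

variable (hp : ∀ v, v ≠ r₀ → dp (par v) + 1 = dp v)

include hp

lemma dirF_eq (ι : V → V → Fin 4) (v : V) (h : v ≠ r₀) :
    dirF r₀ par dp ι v =
      (if par v = r₀ then ι (par v) v
       else skipd (opp (dirF r₀ par dp ι (par v))) (ι (par v) v)) := by
  have hd := hp v h
  unfold dirF
  rw [← hd, dirN]
  simp [h]

lemma posF_eq (dir : V → Fin 4) (v : V) (h : v ≠ r₀) :
    posF r₀ par dp dir v = posF r₀ par dp dir (par v) + (ell dp v) • e (dir v) := by
  have hd := hp v h
  unfold posF
  rw [← hd, posN]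
  simp [h]

end Core


section Core2

variable {V : Type*} [DecidableEq V]
variable (r₀ : V) (par : V → V) (dp : V → ℕ) (dir : V → Fin 4)
variable (hp : ∀ v, v ≠ r₀ → dp (par v) + 1 = dp v)
variable (hz : dp r₀ = 0) (hr : ∀ v, dp v = 0 → v = r₀)

lemma inn_add_smul (σ p q : ℝ × ℝ) (t : ℝ) :
    inn σ (p + t • q) = inn σ p + t * inn σ q := by
  simp only [inn, Prod.fst_add, Prod.snd_add, Prod.smul_fst, Prod.smul_snd, smul_eq_mul]
  ring

lemma abs_e (t : ℝ) (a : Fin 4) : |t * (e a).1| + |t * (e a).2| = |t| := by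
  fin_cases a <;> simp [e]

include hp in
lemma edge_d1 (v : V) (h : v ≠ r₀) :
    d1 (posF r₀ par dp dir (par v)) (posF r₀ par dp dir v) = ell dp v := by
  rw [posF_eq r₀ par dp hp dir v h]
  have : ∀ p q : ℝ × ℝ, d1 p (p + q) = |q.1| + |q.2| := by
    intro p q; unfold d1
    rw [show p.1 - (p + q).1 = -q.1 by rw [Prod.fst_add]; ring,
        show p.2 - (p + q).2 = -q.2 by rw [Prod.snd_add]; ring, abs_neg, abs_neg]
  rw [this]
  simp only [Prod.smul_fst, Prod.smul_snd, smul_eq_mul]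
  rw [abs_e]
  exact abs_of_pos (ell_pos dp v)

lemma ell_formula (v : V) : ell dp v = (2⁻¹ : ℝ) ^ (dp v - 1) := rfl

include hp hr in
lemma ell_half (v : V) (h : v ≠ r₀) (h2 : par v ≠ r₀) :
    2 * ell dp v = ell dp (par v) := by
  have hd := hp v h
  have hdp : dp (par v) ≠ 0 := fun h0 => h2 (hr _ h0)
  unfold ell
  have h1 : dp v - 1 = (dp (par v) - 1) + 1 := by omega
  rw [h1, pow_succ]
  ring

include hp in
lemma ell_le_par (v : V) (h : v ≠ r₀) : ell dp v ≤ ell dp (par v) := by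
  have hd := hp v h
  unfold ell
  apply pow_le_pow_of_le_one (by norm_num) (by norm_num)
  omega

include hp in
lemma par_le_two_ell (v : V) (h : v ≠ r₀) : ell dp (par v) ≤ 2 * ell dp v := by
  have hd := hp v h
  unfold ell
  have h2 : (2 : ℝ) * 2⁻¹ ^ (dp v - 1) = 2⁻¹ ^ (dp v - 1 - 1) * (2 * 2⁻¹ ^ (min (dp v - 1) 1)) := by
    rcases Nat.eq_zero_or_pos (dp v - 1) with h3 | h3
    · rw [h3]; norm_num
    · have h4 : dp v - 1 = (dp v - 1 - 1) + 1 := by omega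
      have h5 : min (dp v - 1) 1 = 1 := by omega
      rw [h5]; nth_rewrite 1 [h4]; rw [pow_succ]; norm_num; ring
  rw [h2]
  rcases Nat.eq_zero_or_pos (dp v - 1) with h3 | h3
  · have : dp (par v) - 1 = 0 := by omega
    rw [this, h3]; norm_num
  · have h5 : min (dp v - 1) 1 = 1 := by omega
    rw [h5]
    have : dp (par v) - 1 = dp v - 1 - 1 := by omega
    rw [this]
    nlinarith [pow_pos (show (0:ℝ) < 2⁻¹ by norm_num) (dp v - 1 - 1)]

include hp hz hr in
lemma iter_depth : ∀ k (v : V), k ≤ dp v → dp (par^[k] v) + k = dp v := by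
  intro k
  induction k with
  | zero => simp
  | succ n ih =>
    intro v hk
    have hv : v ≠ r₀ := by
      intro h; rw [h, hz] at hk; omega
    have hd := hp v hv
    rw [Function.iterate_succ_apply]
    have := ih (par v) (by omega)
    omega

include hp hz hr in
lemma subtree_d1 : ∀ k (w : V), k < dp w →
    d1 (posF r₀ par dp dir (par^[k] w)) (posF r₀ par dp dir w) ≤
      ell dp (par^[k] w) - ell dp w / 2 := by
  intro k
  induction k with
  | zero =>
    intro w _
    simp only [Function.iterate_zero, id_eq]
    have : d1 (posF r₀ par dp dir w) (posF r₀ par dp dir w) = 0 := by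
      unfold d1; simp
    rw [this]
    have := ell_pos dp w
    linarith
  | succ n ih =>
    intro w hk
    set c' := par^[n] w with hc'
    have hdc' : dp c' + n = dp w := iter_depth r₀ par dp hp hz hr n w (by omega)
    have hc'ne : c' ≠ r₀ := by
      intro h; rw [h, hz] at hdc'; omega
    have hpc : par^[n+1] w = par c' := by rw [Function.iterate_succ_apply', hc']
    have hparc'ne : par c' ≠ r₀ := by
      intro h
      have := hp c' hc'ne
      rw [h, hz] at this
      omega
    have h1 : d1 (posF r₀ par dp dir (par c')) (posF r₀ par dp dir c') = ell dp c' :=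
      edge_d1 r₀ par dp dir hp c' hc'ne
    have h2 := ih w (by omega)
    have h3 := ell_half r₀ par dp hp hr c' hc'ne hparc'ne
    rw [hpc]
    calc d1 (posF r₀ par dp dir (par c')) (posF r₀ par dp dir w)
        ≤ d1 (posF r₀ par dp dir (par c')) (posF r₀ par dp dir c') +
          d1 (posF r₀ par dp dir c') (posF r₀ par dp dir w) := d1_triangle _ _ _
      _ ≤ ell dp c' + (ell dp c' - ell dp w / 2) := by rw [h1]; linarith
      _ = ell dp (par c') - ell dp w / 2 := by linarith

end Core2


section Main

variable {V : Type*} [DecidableEq V]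
variable (r₀ : V) (par : V → V) (dp : V → ℕ) (dir : V → Fin 4)
variable (hp : ∀ v, v ≠ r₀ → dp (par v) + 1 = dp v)
variable (hz : dp r₀ = 0) (hr : ∀ v, dp v = 0 → v = r₀)
variable (hsib : ∀ v w, v ≠ r₀ → w ≠ r₀ → par v = par w → dir v = dir w → v = w)
variable (havoid : ∀ v, v ≠ r₀ → par v ≠ r₀ → dir v ≠ opp (dir (par v)))

include hp hz hr hsib havoid in
lemma main_aux (v w : V) (hvw : v ≠ w) (hd : dp v ≤ dp w) :
    (par w = v ∧ w ≠ r₀) ∨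
    (ell dp v + ell dp w) / 2 ≤ d1 (posF r₀ par dp dir v) (posF r₀ par dp dir w) := by
  set P := posF r₀ par dp dir with hP
  set k := dp w - dp v with hk
  set a := par^[k] w with ha
  have hka : dp a + k = dp w := iter_depth r₀ par dp hp hz hr k w (by omega)
  have hdav : dp a = dp v := by omega
  by_cases hav : a = v
  · -- v is an ancestor of w
    rcases Nat.lt_or_ge k 2 with hk2 | hk2
    · interval_cases k
      · exfalso; apply hvw; rw [← hav, ha]; simp
      · left
        constructor
        · rw [← hav, ha]; simp
        · intro h; rw [h, hz] at hka; omega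
    · -- k ≥ 2 : grandchild argument
      right
      set c := par^[k-1] w with hc
      set g := par^[k-2] w with hg
      have hdc : dp c + (k-1) = dp w := iter_depth r₀ par dp hp hz hr (k-1) w (by omega)
      have hdg : dp g + (k-2) = dp w := iter_depth r₀ par dp hp hz hr (k-2) w (by omega)
      have hcne : c ≠ r₀ := by intro h; rw [h, hz] at hdc; omega
      have hgne : g ≠ r₀ := by intro h; rw [h, hz] at hdg; omega
      have hparc : par c = v := by
        rw [← hav, ha, hc, ← Function.iterate_succ_apply' par (k-1) w]
        congr 1; omega
      have hparg : par g = c := by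
        rw [hg, hc, ← Function.iterate_succ_apply' par (k-2) w]
        congr 1; omega
      have hstep : dir g ≠ opp (dir c) := by
        have := havoid g hgne (by rw [hparg]; exact hcne)
        rwa [hparg] at this
      obtain ⟨σ, hσ1, hσ2, hσa, hσb⟩ := sigma1 (dir c) (dir g) hstep
      have hPc : P c = P v + ell dp c • e (dir c) := by
        rw [hP, posF_eq r₀ par dp hp dir c hcne, hparc]
      have hPg : P g = P c + ell dp g • e (dir g) := by
        rw [hP, posF_eq r₀ par dp hp dir g hgne, hparg]
      have hinn : inn σ (P g) - inn σ (P v) = ell dp c + ell dp g := by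
        rw [hPg, hPc, inn_add_smul, inn_add_smul, hσa, hσb]; ring
      have hT : d1 (P g) (P w) ≤ ell dp g - ell dp w / 2 :=
        subtree_d1 r₀ par dp dir hp hz hr (k-2) w (by omega)
      have hbound : inn σ (P w) - inn σ (P g) ≥ -(ell dp g - ell dp w / 2) := by
        have := inn_le_d1 hσ1 hσ2 (P g) (P w)
        linarith
      have hd1 : inn σ (P w) - inn σ (P v) ≤ d1 (P v) (P w) := by
        have := inn_le_d1 hσ1 hσ2 (P w) (P v)
        rwa [d1_comm] at this
      -- ell arithmetic: dp c = dp v + 1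
      have hdcv : dp c = dp v + 1 := by omega
      have hellc : ell dp v ≤ 2 * ell dp c := by
        have h1 : ell dp c = (2⁻¹:ℝ) ^ (dp v) := by
          rw [ell_formula]; congr 1; omega
        have h2 : ell dp v = (2⁻¹:ℝ) ^ (dp v - 1) := rfl
        cases h : dp v with
        | zero => rw [h1, h2, h]; norm_num
        | succ n =>
          rw [h1, h2, h]
          simp only [Nat.succ_sub_one]
          rw [pow_succ, show (2:ℝ) * (2⁻¹ ^ n * 2⁻¹) = 2⁻¹ ^ n by ring]
      calc (ell dp v + ell dp w) / 2 ≤ ell dp c + ell dp w / 2 := by linarith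
        _ ≤ inn σ (P w) - inn σ (P v) := by linarith
        _ ≤ d1 (P v) (P w) := hd1
  · -- v and w lie in different branches
    right
    have hdv : dp v ≠ 0 := by
      intro h0
      exact hav ((hr a (by omega)).trans (hr v h0).symm)
    have hQ : ∃ j, par^[j] v = par^[j] a := by
      refine ⟨dp v, ?_⟩
      have h1 := iter_depth r₀ par dp hp hz hr (dp v) v (le_refl _)
      have h2 := iter_depth r₀ par dp hp hz hr (dp v) a hdav.ge
      rw [hr (par^[dp v] v) (by omega), hr (par^[dp v] a) (by omega)]
    set m := Nat.find hQ with hm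
    have hQm : par^[m] v = par^[m] a := Nat.find_spec hQ
    have hmle : m ≤ dp v := Nat.find_le (by
      have h1 := iter_depth r₀ par dp hp hz hr (dp v) v (le_refl _)
      have h2 := iter_depth r₀ par dp hp hz hr (dp v) a hdav.ge
      show par^[dp v] v = par^[dp v] a
      rw [hr (par^[dp v] v) (by omega), hr (par^[dp v] a) (by omega)])
    have hm1 : 1 ≤ m := by
      rcases Nat.eq_zero_or_pos m with h0 | h0
      · exfalso
        have := hQm
        rw [h0] at this
        simp at this
        exact hav this.symm
      · exact h0
    set c1 := par^[m-1] v with hc1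
    set c2 := par^[m-1] a with hc2
    have h12 : c1 ≠ c2 := Nat.find_min hQ (by omega : m - 1 < m)
    have hpar12 : par c1 = par c2 := by
      rw [hc1, hc2, ← Function.iterate_succ_apply' par (m-1) v,
          ← Function.iterate_succ_apply' par (m-1) a]
      simp only [Nat.succ_eq_add_one]
      have : m - 1 + 1 = m := by omega
      rw [this]; exact hQm
    have hdc1 : dp c1 + (m-1) = dp v := iter_depth r₀ par dp hp hz hr (m-1) v (by omega)
    have hdc2 : dp c2 + (m-1) = dp a := iter_depth r₀ par dp hp hz hr (m-1) a (by omega)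
    have hc1ne : c1 ≠ r₀ := by intro h; rw [h, hz] at hdc1; omega
    have hc2ne : c2 ≠ r₀ := by intro h; rw [h, hz] at hdc2; omega
    have hdir12 : dir c1 ≠ dir c2 := fun h => h12 (hsib c1 c2 hc1ne hc2ne hpar12 h)
    obtain ⟨σ, hσ1, hσ2, hσa, hσb⟩ := sigma2 (dir c1) (dir c2) hdir12
    have hell12 : ell dp c1 = ell dp c2 := by
      unfold ell; congr 2; omega
    have hPc1 : P c1 = P (par c1) + ell dp c1 • e (dir c1) :=
      posF_eq r₀ par dp hp dir c1 hc1ne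
    have hPc2 : P c2 = P (par c1) + ell dp c2 • e (dir c2) := by
      rw [hpar12]; exact posF_eq r₀ par dp hp dir c2 hc2ne
    have hinn : inn σ (P c2) - inn σ (P c1) = 2 * ell dp c1 := by
      rw [hPc1, hPc2, inn_add_smul, inn_add_smul, hσa, hσb, hell12]; ring
    have hT1 : d1 (P c1) (P v) ≤ ell dp c1 - ell dp v / 2 :=
      subtree_d1 r₀ par dp dir hp hz hr (m-1) v (by omega)
    have haw : par^[m-1+k] w = c2 := by
      rw [hc2, ha, ← Function.iterate_add_apply]
    have hT2 : d1 (P c2) (P w) ≤ ell dp c2 - ell dp w / 2 := by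
      rw [← haw]
      exact subtree_d1 r₀ par dp dir hp hz hr (m-1+k) w (by omega)
    have hb1 : inn σ (P c1) - inn σ (P v) ≥ -(ell dp c1 - ell dp v / 2) := by
      have h' := inn_le_d1 hσ1 hσ2 (P v) (P c1)
      rw [d1_comm] at h'
      linarith
    have hb2 : inn σ (P w) - inn σ (P c2) ≥ -(ell dp c2 - ell dp w / 2) := by
      have := inn_le_d1 hσ1 hσ2 (P c2) (P w); linarith
    have hd1 : inn σ (P w) - inn σ (P v) ≤ d1 (P v) (P w) := by
      have := inn_le_d1 hσ1 hσ2 (P w) (P v)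
      rwa [d1_comm] at this
    have : (ell dp v + ell dp w) / 2 ≤ inn σ (P w) - inn σ (P v) := by
      have expand : inn σ (P w) - inn σ (P v) =
          (inn σ (P w) - inn σ (P c2)) + (inn σ (P c2) - inn σ (P c1)) +
          (inn σ (P c1) - inn σ (P v)) := by ring
      rw [expand, hinn]
      rw [hell12] at hb1 ⊢
      linarith
    linarith

include hp hz hr hsib havoid in
theorem main_l1 (v w : V) (hvw : v ≠ w) :
    (par w = v ∧ w ≠ r₀) ∨ (par v = w ∧ v ≠ r₀) ∨
    (ell dp v + ell dp w) / 2 ≤ d1 (posF r₀ par dp dir v) (posF r₀ par dp dir w) := by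
  rcases le_total (dp v) (dp w) with h | h
  · rcases main_aux r₀ par dp dir hp hz hr hsib havoid v w hvw h with h1 | h1
    · exact Or.inl h1
    · exact Or.inr (Or.inr h1)
  · rcases main_aux r₀ par dp dir hp hz hr hsib havoid w v (Ne.symm hvw) h with h1 | h1
    · exact Or.inr (Or.inl h1)
    · right; right
      rw [d1_comm]
      linarith

end Main


section Graph

open SimpleGraph Walk

variable {V : Type*} [Fintype V] [DecidableEq V] {G : SimpleGraph V} [DecidableRel G.Adj]

lemma exists_path_length_dist (hc : G.Connected) (u r : V) :
    ∃ p : G.Walk u r, p.IsPath ∧ p.length = G.dist u r := by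
  obtain ⟨q, hq⟩ := hc.exists_walk_length_eq_dist u r
  refine ⟨q.bypass, q.bypass_isPath, le_antisymm ?_ (SimpleGraph.dist_le _)⟩
  rw [← hq]
  exact q.length_bypass_le

lemma support_dist_lt (r : V) {u x : V} (p : G.Walk u r) (hx : x ∈ p.support)
    (hne : x ≠ u) : G.dist x r + 1 ≤ p.length := by
  have hlen : (p.takeUntil x hx).length + (p.dropUntil x hx).length = p.length := by
    rw [← Walk.length_append, p.take_spec hx]
  have h1 : G.dist x r ≤ (p.dropUntil x hx).length := SimpleGraph.dist_le _
  have h2 : (p.takeUntil x hx).length ≠ 0 := fun h0 => hne (Walk.eq_of_length_eq_zero h0).symm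
  omega

lemma adj_dist_ne (hT : G.IsTree) (r : V) {u v : V} (h : G.Adj u v) :
    G.dist u r ≠ G.dist v r := by
  intro heq
  obtain ⟨P, hPp, hPl⟩ := exists_path_length_dist hT.isConnected v r
  obtain ⟨Q, hQp, hQl⟩ := exists_path_length_dist hT.isConnected u r
  have hvQ : v ∉ Q.support := by
    intro hm
    have := support_dist_lt r Q hm (G.ne_of_adj h).symm
    omega
  have hW : (Walk.cons h.symm Q).IsPath := hQp.cons hvQ
  have huniq := hT.existsUnique_path v r
  have hPW : P = Walk.cons h.symm Q := (huniq.unique hPp hW)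
  have : P.length = Q.length + 1 := by rw [hPW]; simp
  omega

lemma parent_unique (hT : G.IsTree) (r : V) {v u1 u2 : V} (h1 : G.Adj u1 v) (h2 : G.Adj u2 v)
    (hd1 : G.dist u1 r + 1 = G.dist v r) (hd2 : G.dist u2 r + 1 = G.dist v r) : u1 = u2 := by
  obtain ⟨Q1, hQ1p, hQ1l⟩ := exists_path_length_dist hT.isConnected u1 r
  obtain ⟨Q2, hQ2p, hQ2l⟩ := exists_path_length_dist hT.isConnected u2 r
  have hv1 : v ∉ Q1.support := by
    intro hm
    have := support_dist_lt r Q1 hm (G.ne_of_adj h1).symm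
    omega
  have hv2 : v ∉ Q2.support := by
    intro hm
    have := support_dist_lt r Q2 hm (G.ne_of_adj h2).symm
    omega
  have hW1 : (Walk.cons h1.symm Q1).IsPath := hQ1p.cons hv1
  have hW2 : (Walk.cons h2.symm Q2).IsPath := hQ2p.cons hv2
  have heq : Walk.cons h1.symm Q1 = Walk.cons h2.symm Q2 :=
    (hT.existsUnique_path v r).unique hW1 hW2
  have hs := congrArg Walk.support heq
  rw [Walk.support_cons, Walk.support_cons, Q1.support_eq_cons, Q2.support_eq_cons] at hs
  have := List.tail_eq_of_cons_eq hs
  exact List.head_eq_of_cons_eq this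

lemma exists_parent (hc : G.Connected) (r : V) {v : V} (hv : v ≠ r) :
    ∃ u, G.Adj v u ∧ G.dist u r + 1 = G.dist v r := by
  obtain ⟨P, hPp, hPl⟩ := exists_path_length_dist hc v r
  cases P with
  | nil => exact absurd rfl hv
  | @cons _ u _ h q =>
    refine ⟨u, h, ?_⟩
    have hq : G.dist u r ≤ q.length := SimpleGraph.dist_le q
    have htri : G.dist v r ≤ G.dist v u + G.dist u r := hc.dist_triangle
    have hvu : G.dist v u ≤ 1 := by
      have := SimpleGraph.dist_le (Walk.cons h (Walk.nil : G.Walk u u))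
      simpa using this
    have hlen : q.length + 1 = G.dist v r := by
      simpa using hPl
    omega

end Graph


section Euclid

noncomputable def toE (p : ℝ × ℝ) : EuclideanSpace ℝ (Fin 2) :=
  (WithLp.equiv 2 (Fin 2 → ℝ)).symm ![p.1, p.2]

lemma dist_toE (p q : ℝ × ℝ) :
    dist (toE p) (toE q) = Real.sqrt ((p.1 - q.1)^2 + (p.2 - q.2)^2) := by
  rw [EuclideanSpace.dist_eq]
  congr 1
  rw [Fin.sum_univ_two]
  simp [toE, WithLp.equiv_symm_apply, PiLp.toLp_apply, Real.dist_eq, sq_abs]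

lemma dist_toE_ge (p q : ℝ × ℝ) {s : ℝ} (hs : 0 ≤ s) (h : s / 2 ≤ d1 p q) :
    s / 3 ≤ dist (toE p) (toE q) := by
  rw [dist_toE]
  rw [Real.le_sqrt (by positivity) (by positivity)]
  unfold d1 at h
  nlinarith [sq_nonneg (|p.1 - q.1| - |p.2 - q.2|), sq_abs (p.1 - q.1), sq_abs (p.2 - q.2),
    abs_nonneg (p.1 - q.1), abs_nonneg (p.2 - q.2)]

lemma e_norm (a : Fin 4) : (e a).1^2 + (e a).2^2 = 1 := by fin_cases a <;> norm_num [e]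

lemma dist_toE_edge (p : ℝ × ℝ) (t : ℝ) (ht : 0 ≤ t) (a : Fin 4) :
    dist (toE p) (toE (p + t • e a)) = t := by
  rw [dist_toE]
  have key : (p.1 - (p + t • e a).1)^2 + (p.2 - (p + t • e a).2)^2 = t^2 := by
    simp only [Prod.fst_add, Prod.snd_add, Prod.smul_fst, Prod.smul_snd, smul_eq_mul]
    have h := e_norm a
    nlinarith [h]
  rw [key, Real.sqrt_sq ht]

end Euclid

end Stmt2Aux

open Stmt2Aux

/-- Every finite tree with maximum degree at most `4` has a
straight-line drawing whose ply disks with parameter `α = 1/3` are pairwise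
disjoint, i.e. a 1-ply drawing for `α = 1/3`. -/
theorem stmt2 (V : Type*) [Fintype V] [DecidableEq V]
    (G : SimpleGraph V) [DecidableRel G.Adj]
    (hT : G.IsTree) (hdeg : ∀ v : V, G.degree v ≤ 4) :
    ∃ ρ : V → EuclideanSpace ℝ (Fin 2), Function.Injective ρ ∧
      Pairwise fun v w : V =>
        Disjoint (Metric.ball (ρ v) (plyRadius G ρ (1 / 3) v))
          (Metric.ball (ρ w) (plyRadius G ρ (1 / 3) w)) := by
  classical
  obtain ⟨r₀⟩ : Nonempty V := hT.isConnected.nonempty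
  set dp : V → ℕ := fun v => G.dist v r₀ with hdpdef
  have hz : dp r₀ = 0 := SimpleGraph.dist_self
  have hr : ∀ v, dp v = 0 → v = r₀ := fun v h => (hT.isConnected.dist_eq_zero_iff).mp h
  have hex : ∀ v, ∃ u, v ≠ r₀ → G.Adj v u ∧ G.dist u r₀ + 1 = G.dist v r₀ := by
    intro v
    by_cases h : v = r₀
    · exact ⟨v, fun h' => absurd h h'⟩
    · obtain ⟨u, hu⟩ := exists_parent hT.isConnected r₀ h
      exact ⟨u, fun _ => hu⟩
  choose par hpar using hex
  have hp : ∀ v, v ≠ r₀ → dp (par v) + 1 = dp v := fun v h => ((hpar v) h).2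
  have hadjpar : ∀ v, v ≠ r₀ → G.Adj v (par v) := fun v h => ((hpar v) h).1
  -- children sets
  set ch : V → Finset V := fun u => (G.neighborFinset u).filter (fun c => dp c = dp u + 1)
    with hchdef
  have hchmem : ∀ v, v ≠ r₀ → v ∈ ch (par v) := by
    intro v h
    rw [hchdef]
    simp only [Finset.mem_filter, SimpleGraph.mem_neighborFinset]
    exact ⟨(hadjpar v h).symm, (hp v h).symm⟩
  have hchcard4 : ∀ u, (ch u).card ≤ 4 := by
    intro u
    calc (ch u).card ≤ (G.neighborFinset u).card :=
          Finset.card_le_card (Finset.filter_subset _ _)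
      _ = G.degree u := (SimpleGraph.card_neighborFinset_eq_degree G u)
      _ ≤ 4 := hdeg u
  have hchcard3 : ∀ u, u ≠ r₀ → (ch u).card ≤ 3 := by
    intro u hu
    have hmem : par u ∈ G.neighborFinset u := by
      rw [SimpleGraph.mem_neighborFinset]; exact hadjpar u hu
    have hsub : ch u ⊆ (G.neighborFinset u).erase (par u) := by
      intro c hc
      rw [hchdef] at hc
      simp only [Finset.mem_filter] at hc
      rw [Finset.mem_erase]
      refine ⟨?_, hc.1⟩
      intro hcp
      have h1 := hc.2
      have h2 := hp u hu
      rw [hcp] at h1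
      omega
    have := Finset.card_le_card hsub
    rw [Finset.card_erase_of_mem hmem] at this
    have hdeg4 : (G.neighborFinset u).card ≤ 4 := by
      rw [SimpleGraph.card_neighborFinset_eq_degree]; exact hdeg u
    omega
  -- labels
  set ι : V → V → Fin 4 := fun u c =>
    if h : c ∈ ch u then ⟨min ((Fintype.equivFin (ch u)) ⟨c, h⟩).val 3, by omega⟩ else 0
    with hιdef
  have hιval : ∀ u c (h : c ∈ ch u),
      (ι u c).val = ((Fintype.equivFin (ch u)) ⟨c, h⟩).val := by
    intro u c h
    have hlt : ((Fintype.equivFin (ch u)) ⟨c, h⟩).val < (ch u).card := by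
      have h1 := ((Fintype.equivFin (ch u)) ⟨c, h⟩).isLt
      have h2 := Fintype.card_coe (ch u)
      omega
    rw [hιdef]
    simp only [dif_pos h]
    have := hchcard4 u
    omega
  have hιinj : ∀ u c c', c ∈ ch u → c' ∈ ch u → ι u c = ι u c' → c = c' := by
    intro u c c' h h' heq
    have h1 := hιval u c h
    have h2 := hιval u c' h'
    have : ((Fintype.equivFin (ch u)) ⟨c, h⟩) = ((Fintype.equivFin (ch u)) ⟨c', h'⟩) := by
      apply Fin.ext
      rw [← h1, ← h2, heq]
    have := (Fintype.equivFin (ch u)).injective this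
    exact congrArg Subtype.val this
  have hιle : ∀ u, u ≠ r₀ → ∀ c, c ∈ ch u → ((ι u c) : ℕ) ≤ 2 := by
    intro u hu c h
    have h1 := hιval u c h
    have hlt : ((Fintype.equivFin (ch u)) ⟨c, h⟩).val < (ch u).card := by
      have h1 := ((Fintype.equivFin (ch u)) ⟨c, h⟩).isLt
      have h2 := Fintype.card_coe (ch u)
      omega
    have := hchcard3 u hu
    omega
  set dir : V → Fin 4 := dirF r₀ par dp ι with hdirdef
  have hsib : ∀ v w, v ≠ r₀ → w ≠ r₀ → par v = par w → dir v = dir w → v = w := by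
    intro v w hv hw hpw hdir
    rw [hdirdef] at hdir
    rw [dirF_eq r₀ par dp hp ι v hv, dirF_eq r₀ par dp hp ι w hw, ← hpw] at hdir
    have hmv : v ∈ ch (par v) := hchmem v hv
    have hmw : w ∈ ch (par v) := by rw [hpw]; exact hchmem w hw
    by_cases hpr : par v = r₀
    · rw [if_pos hpr, if_pos hpr] at hdir
      exact hιinj (par v) v w hmv hmw hdir
    · rw [if_neg hpr, if_neg hpr] at hdir
      have := skipd_inj _ _ _ (hιle (par v) hpr v hmv) (hιle (par v) hpr w hmw) hdir
      exact hιinj (par v) v w hmv hmw this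
  have havoid : ∀ v, v ≠ r₀ → par v ≠ r₀ → dir v ≠ opp (dir (par v)) := by
    intro v hv hpv
    rw [hdirdef, dirF_eq r₀ par dp hp ι v hv, if_neg hpv]
    exact skipd_ne _ _ (hιle (par v) hpv v (hchmem v hv))
  set pos : V → ℝ × ℝ := posF r₀ par dp dir with hposdef
  set ρ : V → EuclideanSpace ℝ (Fin 2) := fun v => toE (pos v) with hρdef
  -- adjacency classification
  have hadjcl : ∀ u v, G.Adj u v → (par v = u ∧ v ≠ r₀) ∨ (par u = v ∧ u ≠ r₀) := by
    intro u v h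
    have hne : G.dist u r₀ ≠ G.dist v r₀ := adj_dist_ne hT r₀ h
    have hd1' : G.dist u v ≤ 1 := by
      have := SimpleGraph.dist_le (SimpleGraph.Walk.cons h (SimpleGraph.Walk.nil : G.Walk v v))
      simpa using this
    have hd2' : G.dist v u ≤ 1 := by rw [SimpleGraph.dist_comm]; exact hd1'
    have h1 : G.dist u r₀ ≤ G.dist v r₀ + 1 := by
      have := hT.isConnected.dist_triangle (u := u) (v := v) (w := r₀)
      omega
    have h2 : G.dist v r₀ ≤ G.dist u r₀ + 1 := by
      have := hT.isConnected.dist_triangle (u := v) (v := u) (w := r₀)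
      omega
    rcases Nat.lt_or_ge (G.dist u r₀) (G.dist v r₀) with hlt | hge
    · left
      have hvr : v ≠ r₀ := by
        intro hvr; rw [hvr] at hlt; simp [SimpleGraph.dist_self] at hlt
      refine ⟨?_, hvr⟩
      have hd := hp v hvr
      exact parent_unique hT r₀ ((hadjpar v hvr).symm) h hd (by omega)
    · right
      have hur : u ≠ r₀ := by
        intro hur
        rw [hur, SimpleGraph.dist_self] at hge
        rw [hur, SimpleGraph.dist_self] at hne
        omega
      refine ⟨?_, hur⟩
      have hd := hp u hur
      exact parent_unique hT r₀ ((hadjpar u hur).symm) h.symm hd (by omega)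
  -- edge distances
  have hedge : ∀ v, v ≠ r₀ → dist (ρ (par v)) (ρ v) = ell dp v := by
    intro v hv
    have hpe := posF_eq r₀ par dp hp dir v hv
    show dist (toE (posF r₀ par dp dir (par v))) (toE (posF r₀ par dp dir v)) = ell dp v
    rw [hpe]
    exact dist_toE_edge _ _ (ell_pos dp v).le _
  have hmain := main_l1 r₀ par dp dir hp hz hr hsib havoid
  -- ply radius bound
  have hply : ∀ v, plyRadius G ρ (1/3) v ≤ ell dp v / 3 := by
    intro v
    have hsup : (⨆ w : G.neighborSet v, dist (ρ v) (ρ w)) ≤ ell dp v := by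
      apply Real.iSup_le _ (ell_pos dp v).le
      rintro ⟨w, hw⟩
      have hadj : G.Adj v w := hw
      rcases hadjcl v w hadj with ⟨hpw, hwr⟩ | ⟨hpv, hvr⟩
      · have he := hedge w hwr
        rw [hpw] at he
        have hle := ell_le_par r₀ par dp hp w hwr
        rw [hpw] at hle
        calc dist (ρ v) (ρ w) = ell dp w := he
          _ ≤ ell dp v := hle
      · have he := hedge v hvr
        rw [hpv] at he
        rw [dist_comm] at he
        exact le_of_eq he
    have : plyRadius G ρ (1/3) v = 1/3 * ⨆ w : G.neighborSet v, dist (ρ v) (ρ w) := rfl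
    rw [this]
    linarith
  have hdistpos : ∀ v w, v ≠ w → 0 < dist (ρ v) (ρ w) := by
    intro v w hvw
    rcases hmain v w hvw with ⟨h1, h2⟩ | ⟨h1, h2⟩ | h1
    · have := hedge w h2
      rw [h1] at this
      rw [this]
      exact ell_pos dp w
    · have := hedge v h2
      rw [h1] at this
      rw [dist_comm, this]
      exact ell_pos dp v
    · have hge := dist_toE_ge (pos v) (pos w)
        (s := ell dp v + ell dp w)
        (by have h1' := ell_pos dp v; have h2' := ell_pos dp w; linarith)
        h1
      have h0 : 0 < (ell dp v + ell dp w) / 3 := by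
        have := ell_pos dp v; have := ell_pos dp w; linarith
      calc (0:ℝ) < (ell dp v + ell dp w) / 3 := h0
        _ ≤ dist (toE (pos v)) (toE (pos w)) := hge
        _ = dist (ρ v) (ρ w) := rfl
  refine ⟨ρ, ?_, ?_⟩
  · intro v w hvw
    by_contra hne
    have := hdistpos v w hne
    rw [hvw] at this
    simp at this
  · intro v w hvw
    apply Metric.ball_disjoint_ball
    have b1 := hply v
    have b2 := hply w
    rcases hmain v w hvw with ⟨h1, h2⟩ | ⟨h1, h2⟩ | h1
    · have hdist : dist (ρ v) (ρ w) = ell dp w := by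
        rw [← h1]; exact hedge w h2
      have hle := par_le_two_ell r₀ par dp hp w h2
      rw [h1] at hle
      rw [hdist]
      linarith
    · have hdist : dist (ρ v) (ρ w) = ell dp v := by
        rw [dist_comm, ← h1]; exact hedge v h2
      have hle := par_le_two_ell r₀ par dp hp v h2
      rw [h1] at hle
      rw [hdist]
      linarith
    · have hge := dist_toE_ge (pos v) (pos w)
        (s := ell dp v + ell dp w)
        (by have h1' := ell_pos dp v; have h2' := ell_pos dp w; linarith) h1
      have : dist (ρ v) (ρ w) = dist (toE (pos v)) (toE (pos w)) := rfl
      rw [this]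
      linarith
end

section
/- There exists a constant C > 0 such that for every natural number Δ ≥ 2 and every finite tree G on n ≥ 2 vertices with maximum degree at most Δ, there is a straight-line drawing ρ of G such that: (1) for every point q ∈ ℝ², the number of vertices whose ply disk with parameter α = 1/2 contains q is at most C·(log n + 1); and (2) the ratio of the longest edge length max over edges uv of dist(ρ(u), ρ(v)) to the shortest edge length is at most n^(C·Δ). In particular, every tree has a drawing with ply number O(log n) for α = 1/2, in area n^{O(Δ)} for bounded degree. -/
set_option linter.unusedSectionVars false

open SimpleGraph

section Aux

variable {V : Type} [Fintype V] [DecidableEq V] {G : SimpleGraph V} [DecidableRel G.Adj]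

namespace TreePly

noncomputable def pth (hG : G.IsTree) (u v : V) : G.Walk u v :=
  (hG.existsUnique_path u v).exists.choose

lemma pth_isPath (hG : G.IsTree) (u v : V) : (pth hG u v).IsPath :=
  (hG.existsUnique_path u v).exists.choose_spec

lemma pth_unique (hG : G.IsTree) {u v : V} (p : G.Walk u v) (hp : p.IsPath) :
    p = pth hG u v := by
  obtain ⟨q, hq, huniq⟩ := hG.existsUnique_path u v
  rw [huniq p hp, huniq (pth hG u v) (pth_isPath hG u v)]

lemma pth_self (hG : G.IsTree) (u : V) : pth hG u u = Walk.nil :=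
  (pth_unique hG Walk.nil Walk.IsPath.nil).symm

lemma support_pth_self (hG : G.IsTree) (u : V) : (pth hG u u).support = [u] := by
  rw [pth_self]; rfl

lemma pth_adj (hG : G.IsTree) {u v : V} (h : G.Adj u v) :
    pth hG u v = Walk.cons h Walk.nil :=
  (pth_unique hG _ (by simp [h.ne])).symm

lemma support_pth_adj (hG : G.IsTree) {u v : V} (h : G.Adj u v) :
    (pth hG u v).support = [u, v] := by rw [pth_adj hG h]; rfl

lemma support_pth_symm (hG : G.IsTree) (u v : V) :
    (pth hG v u).support = (pth hG u v).support.reverse := by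
  rw [← Walk.support_reverse, pth_unique hG (pth hG u v).reverse (pth_isPath hG u v).reverse]

lemma mem_support_pth_symm (hG : G.IsTree) {u v z : V} :
    z ∈ (pth hG v u).support ↔ z ∈ (pth hG u v).support := by
  rw [support_pth_symm hG u v, List.mem_reverse]

/-- triangle lemma: the support of `pth v w` is inside the union of supports through `u`. -/
lemma support_pth_subset_union (hG : G.IsTree) (u v w z : V)
    (hz : z ∈ (pth hG v w).support) :
    z ∈ (pth hG v u).support ∨ z ∈ (pth hG u w).support := by
  set W := (pth hG v u).append (pth hG u w) with hW
  have hzW : z ∈ W.support := by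
    have h1 : pth hG v w = (W.toPath : G.Walk v w) := (pth_unique hG _ W.toPath.2).symm
    exact Walk.support_toPath_subset W (h1 ▸ hz)
  rw [hW, Walk.mem_support_append_iff] at hzW
  exact hzW

/-- restriction lemma: if `c` is not on the path `u → v` and `z` is on it, then `c` is not
on the path `u → z`. -/
lemma not_mem_support_pth_take (hG : G.IsTree) {u v c z : V}
    (hc : c ∉ (pth hG u v).support) (hz : z ∈ (pth hG u v).support) :
    c ∉ (pth hG u z).support := by
  intro hmem
  have h1 : pth hG u z = (pth hG u v).takeUntil z hz :=
    (pth_unique hG _ ((pth_isPath hG u v).takeUntil hz)).symm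
  exact hc (Walk.support_takeUntil_subset _ hz (h1 ▸ hmem))

/-- the neighbours of `c` inside `A`. -/
def nbrs (G : SimpleGraph V) [DecidableRel G.Adj] (A : Finset V) (c : V) : Finset V := A.filter (fun u => G.Adj c u)

lemma mem_nbrs {A : Finset V} {c u : V} : u ∈ nbrs G A c ↔ u ∈ A ∧ G.Adj c u := by
  simp [nbrs]

/-- the component of `A ∖ {c}` attached at the neighbour `u` of `c`. -/
noncomputable def comp (hG : G.IsTree) (A : Finset V) (c u : V) : Finset V :=
  A.filter (fun v => v ≠ c ∧ c ∉ (pth hG u v).support)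

lemma mem_comp {hG : G.IsTree} {A : Finset V} {c u v : V} :
    v ∈ comp hG A c u ↔ v ∈ A ∧ v ≠ c ∧ c ∉ (pth hG u v).support := by
  simp [comp]

lemma comp_subset {hG : G.IsTree} {A : Finset V} {c u : V} : comp hG A c u ⊆ A :=
  Finset.filter_subset _ _

lemma mem_comp_self (hG : G.IsTree) {A : Finset V} {c u : V} (hu : u ∈ A)
    (hadj : G.Adj c u) : u ∈ comp hG A c u := by
  rw [mem_comp]
  exact ⟨hu, hadj.ne', by rw [support_pth_self]; simp [hadj.ne]⟩

/-- a `PathClosed` set is closed under taking unique paths. -/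
def PathClosed (hG : G.IsTree) (A : Finset V) : Prop :=
  ∀ u ∈ A, ∀ v ∈ A, ∀ z ∈ (pth hG u v).support, z ∈ A

/-- every `v ≠ c` in a path-closed set lies in the component of some neighbour of `c`. -/
lemma exists_comp (hG : G.IsTree) {A : Finset V} (hPC : PathClosed hG A) {c v : V}
    (hc : c ∈ A) (hv : v ∈ A) (hvc : v ≠ c) :
    ∃ u ∈ nbrs G A c, v ∈ comp hG A c u := by
  obtain ⟨u, hadj, q, hq⟩ := Walk.exists_eq_cons_of_ne (Ne.symm hvc) (pth hG c v)
  have hpath : (pth hG c v).IsPath := pth_isPath hG c v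
  rw [hq] at hpath
  have hqpath : q.IsPath := hpath.of_cons
  have hcq : c ∉ q.support := by
    intro hmem
    exact ((Walk.cons_isPath_iff _ _).1 hpath).2 hmem
  have hq' : q = pth hG u v := pth_unique hG q hqpath
  have huA : u ∈ A := by
    refine hPC c hc v hv u ?_
    rw [hq]; simp
  refine ⟨u, mem_nbrs.2 ⟨huA, hadj⟩, mem_comp.2 ⟨hv, hvc, ?_⟩⟩
  rw [← hq']; exact hcq

/-- components of distinct neighbours are disjoint. -/
lemma comp_disjoint (hG : G.IsTree) {A : Finset V} {c u u' v : V}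
    (hu : G.Adj c u) (hu' : G.Adj c u') (huu' : u ≠ u')
    (h1 : v ∈ comp hG A c u) (h2 : v ∈ comp hG A c u') : False := by
  obtain ⟨-, hvc, hcp⟩ := mem_comp.1 h1
  obtain ⟨-, -, hcp'⟩ := mem_comp.1 h2
  have p1 : (Walk.cons hu (pth hG u v)).IsPath :=
    (Walk.cons_isPath_iff _ _).2 ⟨pth_isPath hG u v, hcp⟩
  have p2 : (Walk.cons hu' (pth hG u' v)).IsPath :=
    (Walk.cons_isPath_iff _ _).2 ⟨pth_isPath hG u' v, hcp'⟩
  have e : (Walk.cons hu (pth hG u v)).support = (Walk.cons hu' (pth hG u' v)).support := by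
    rw [pth_unique hG _ p1, pth_unique hG _ p2]
  rw [Walk.support_cons, Walk.support_cons, (pth hG u v).support_eq_cons,
    (pth hG u' v).support_eq_cons] at e
  exact huu' (by injection (by injection e with _ e2) with e3)

/-- a vertex of a component adjacent to `c` must be the attachment vertex. -/
lemma adj_c_eq (hG : G.IsTree) {A : Finset V} {c u v : V} (hu : G.Adj c u)
    (h1 : v ∈ comp hG A c u) (hadj : G.Adj c v) : v = u := by
  obtain ⟨-, hvc, hcp⟩ := mem_comp.1 h1
  by_cases hvu : v = u
  · exact hvu
  · have hcvu : c ∉ (pth hG v u).support := by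
      rw [mem_support_pth_symm]; exact hcp
    have p1 : (Walk.cons hadj (pth hG v u)).IsPath :=
      (Walk.cons_isPath_iff _ _).2 ⟨pth_isPath hG v u, hcvu⟩
    have e : (Walk.cons hadj (pth hG v u)).support = (pth hG c u).support := by
      rw [pth_unique hG _ p1]
    rw [support_pth_adj hG hu, Walk.support_cons, (pth hG v u).support_eq_cons] at e
    exact (by injection (by injection e with _ e2) with e3 : v = u)


/-- edges from a component vertex stay in the component (unless they go to `c`). -/
lemma adj_mem_comp (hG : G.IsTree) {A : Finset V} {c u v w : V}
    (h1 : v ∈ comp hG A c u) (hw : w ∈ A) (hwc : w ≠ c) (hadj : G.Adj v w) :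
    w ∈ comp hG A c u := by
  obtain ⟨-, hvc, hcp⟩ := mem_comp.1 h1
  refine mem_comp.2 ⟨hw, hwc, fun hmem => ?_⟩
  rcases support_pth_subset_union hG v u w c hmem with h | h
  · exact hcp h
  · rw [support_pth_adj hG hadj] at h
    simp at h
    rcases h with h | h
    · exact hvc h.symm
    · exact hwc h.symm

/-- components are path-closed. -/
lemma comp_pathClosed (hG : G.IsTree) {A : Finset V} (hPC : PathClosed hG A) {c u : V} :
    PathClosed hG (comp hG A c u) := by
  intro v hv w hw z hz
  obtain ⟨hvA, hvc, hcv⟩ := mem_comp.1 hv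
  obtain ⟨hwA, hwc, hcw⟩ := mem_comp.1 hw
  have hzA : z ∈ A := hPC v hvA w hwA z hz
  have hzuv : z ∈ (pth hG u v).support ∨ z ∈ (pth hG u w).support := by
    rcases support_pth_subset_union hG u v w z hz with h | h
    · left; rwa [mem_support_pth_symm] at h
    · right; exact h
  have hcz : c ∉ (pth hG u z).support := by
    rcases hzuv with h | h
    · exact not_mem_support_pth_take hG hcv h
    · exact not_mem_support_pth_take hG hcw h
  have hzc : z ≠ c := fun h => hcz (h ▸ Walk.end_mem_support _)
  exact mem_comp.2 ⟨hzA, hzc, hcz⟩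

/-- partition: `A` is the disjoint union of `{c}` and the components. -/
lemma comp_partition (hG : G.IsTree) {A : Finset V} (hPC : PathClosed hG A) {c : V}
    (hc : c ∈ A) :
    A = insert c ((nbrs G A c).biUnion (fun u => comp hG A c u)) := by
  apply Finset.ext
  intro v
  simp only [Finset.mem_insert, Finset.mem_biUnion]
  constructor
  · intro hv
    by_cases hvc : v = c
    · exact Or.inl hvc
    · exact Or.inr (exists_comp hG hPC hc hv hvc)
  · rintro (rfl | ⟨u, -, hv⟩)
    · exact hc
    · exact comp_subset hv

lemma card_comp_sum (hG : G.IsTree) {A : Finset V} (hPC : PathClosed hG A) {c : V}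
    (hc : c ∈ A) :
    1 + ∑ u ∈ nbrs G A c, (comp hG A c u).card = A.card := by
  have hdisj : ∀ u ∈ nbrs G A c, ∀ u' ∈ nbrs G A c, u ≠ u' →
      Disjoint (comp hG A c u) (comp hG A c u') := by
    intro u hu u' hu' huu'
    rw [Finset.disjoint_left]
    intro v h1 h2
    exact comp_disjoint hG (mem_nbrs.1 hu).2 (mem_nbrs.1 hu').2 huu' h1 h2
  have hcnot : c ∉ (nbrs G A c).biUnion (fun u => comp hG A c u) := by
    simp only [Finset.mem_biUnion]
    rintro ⟨u, -, hcmem⟩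
    exact (mem_comp.1 hcmem).2.1 rfl
  have hcard : A.card = (insert c ((nbrs G A c).biUnion (fun u => comp hG A c u))).card :=
    congrArg Finset.card (comp_partition hG hPC hc)
  rw [hcard, Finset.card_insert_of_notMem hcnot, Finset.card_biUnion hdisj, add_comm]

/-- the component of `u` containing `c` is the complement of the component of `c` at `u`. -/
lemma comp_compl (hG : G.IsTree) {A : Finset V} (hPC : PathClosed hG A) {c u : V}
    (hc : c ∈ A) (hu : u ∈ A) (hadj : G.Adj c u) :
    comp hG A u c = A \ comp hG A c u := by
  apply Finset.ext
  intro v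
  simp only [Finset.mem_sdiff]
  constructor
  · rintro hvm
    obtain ⟨hvA, hvu, hup⟩ := mem_comp.1 hvm
    refine ⟨hvA, fun hvm' => ?_⟩
    obtain ⟨-, hvc, hcp⟩ := mem_comp.1 hvm'
    have p1 : (Walk.cons hadj (pth hG u v)).IsPath :=
      (Walk.cons_isPath_iff _ _).2 ⟨pth_isPath hG u v, hcp⟩
    have e : pth hG c v = Walk.cons hadj (pth hG u v) := (pth_unique hG _ p1).symm
    apply hup
    rw [e, Walk.support_cons]
    exact List.mem_cons_of_mem _ (Walk.start_mem_support _)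
  · rintro ⟨hvA, hvn⟩
    by_cases hvc : v = c
    · subst hvc
      exact mem_comp.2 ⟨hvA, hadj.ne, by rw [support_pth_self]; simp [hadj.ne']⟩
    · have hcmem : c ∈ (pth hG u v).support := by
        by_contra hcp
        exact hvn (mem_comp.2 ⟨hvA, hvc, hcp⟩)
      have hvu : v ≠ u := by
        rintro rfl
        rw [support_pth_self] at hcmem
        simp at hcmem
        exact hadj.ne hcmem
      refine mem_comp.2 ⟨hvA, hvu, ?_⟩
      -- `pth c v` is the `dropUntil` of `pth u v` at `c`; `u` is not on it.
      have hdrop : pth hG c v = (pth hG u v).dropUntil c hcmem :=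
        (pth_unique hG _ ((pth_isPath hG u v).dropUntil hcmem)).symm
      intro humem
      rw [hdrop] at humem
      have hnodup : ((pth hG u v).support).Nodup := (pth_isPath hG u v).2
      rw [← Walk.take_spec (pth hG u v) hcmem, Walk.support_append] at hnodup
      have hutake : u ∈ ((pth hG u v).takeUntil c hcmem).support := Walk.start_mem_support _
      have hudrop : u ∈ ((pth hG u v).dropUntil c hcmem).support.tail := by
        have : u ≠ c := fun h => hadj.ne h.symm
        rcases (Walk.support_eq_cons ((pth hG u v).dropUntil c hcmem)) ▸ humem with h
        simp only [List.mem_cons] at h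
        rcases h with h | h
        · exact absurd h this
        · exact h
      exact (List.disjoint_of_nodup_append hnodup) hutake hudrop


/-- a centroid exists: all components have size at most half. -/
lemma exists_centroid (hG : G.IsTree) {A : Finset V} (hPC : PathClosed hG A)
    (hA : A.Nonempty) :
    ∃ c ∈ A, ∀ u ∈ nbrs G A c, 2 * (comp hG A c u).card ≤ A.card := by
  obtain ⟨c, hcA, hmin⟩ := Finset.exists_min_image A
    (fun c => (nbrs G A c).sup (fun u => (comp hG A c u).card)) hA
  refine ⟨c, hcA, fun u hu => ?_⟩
  by_contra hbig
  push_neg at hbig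
  obtain ⟨huA, hadj⟩ := mem_nbrs.1 hu
  have hkle : (comp hG A c u).card ≤ A.card := Finset.card_le_card comp_subset
  have hkpos : 0 < (comp hG A c u).card :=
    Finset.card_pos.2 ⟨u, mem_comp_self hG huA hadj⟩
  have hcompl : comp hG A u c = A \ comp hG A c u := comp_compl hG hPC hcA huA hadj
  have hgu : (nbrs G A u).sup (fun w => (comp hG A u w).card) < (comp hG A c u).card := by
    rw [Finset.sup_lt_iff hkpos]
    intro w hw
    obtain ⟨hwA, hadjw⟩ := mem_nbrs.1 hw
    by_cases hwc : w = c
    · subst hwc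
      rw [hcompl, Finset.card_sdiff_of_subset comp_subset]
      omega
    · have hsub : comp hG A u w ⊆ comp hG A c u \ {u} := by
        intro v hv
        obtain ⟨hvA, hvu, -⟩ := mem_comp.1 hv
        have hvnot : v ∉ comp hG A u c :=
          fun h2 => comp_disjoint hG hadjw (hadj.symm) hwc hv h2
        rw [hcompl, Finset.mem_sdiff, not_and, not_not] at hvnot
        exact Finset.mem_sdiff.2 ⟨hvnot hvA, by simp [hvu]⟩
      calc (comp hG A u w).card ≤ (comp hG A c u \ {u}).card := Finset.card_le_card hsub
        _ < (comp hG A c u).card := by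
          rw [Finset.card_sdiff_of_subset (by simp [mem_comp_self hG huA hadj])]
          simp [hkpos]
  have h1 : (comp hG A c u).card ≤ (nbrs G A c).sup (fun u => (comp hG A c u).card) :=
    Finset.le_sup (f := fun u => (comp hG A c u).card) hu
  have h2 := hmin u huA
  omega


/-! ### The drawing construction -/

/-- half the longest edge at `v` inside `A`, for the 1-dimensional drawing `x`. -/
noncomputable def rad (G : SimpleGraph V) [DecidableRel G.Adj] (A : Finset V)
    (x : V → ℝ) (v : V) : ℝ :=
  (1 / 2) * sSup ((fun w => |x v - x w|) '' {w | G.Adj v w ∧ w ∈ A})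

lemma rad_le {A : Finset V} {x : V → ℝ} {v : V} {M : ℝ} (hM : 0 ≤ M)
    (h : ∀ w, G.Adj v w → w ∈ A → |x v - x w| ≤ M) :
    rad G A x v ≤ M / 2 := by
  have h1 : sSup ((fun w => |x v - x w|) '' {w | G.Adj v w ∧ w ∈ A}) ≤ M := by
    apply Real.sSup_le ?_ hM
    rintro r ⟨w, ⟨hadj, hw⟩, rfl⟩
    exact h w hadj hw
  rw [rad]; linarith

lemma rad_congr {A B : Finset V} {x y : V → ℝ} {v : V}
    (hset : ∀ w, G.Adj v w → (w ∈ A ↔ w ∈ B))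
    (hdist : ∀ w, G.Adj v w → w ∈ A → |y v - y w| = |x v - x w|) :
    rad G B y v = rad G A x v := by
  rw [rad, rad]
  congr 2
  ext r
  constructor
  · rintro ⟨w, ⟨hadj, hw⟩, rfl⟩
    have hwA : w ∈ A := (hset w hadj).2 hw
    exact ⟨w, ⟨hadj, hwA⟩, (hdist w hadj hwA).symm⟩
  · rintro ⟨w, ⟨hadj, hw⟩, rfl⟩
    exact ⟨w, ⟨hadj, (hset w hadj).1 hw⟩, hdist w hadj hw⟩


lemma tight_ncard_le_two {U : Set V} {idx : V → ℕ}
    (hinj : ∀ u ∈ U, ∀ u' ∈ U, idx u = idx u' → u = u')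
    (htight : ∀ u ∈ U, ∀ u' ∈ U, idx u < idx u' → idx u' < idx u + 2) :
    U.ncard ≤ 2 := by
  by_contra hcon
  push_neg at hcon
  obtain ⟨a, b, c, ha, hb, hc, hab, hac, hbc⟩ := (Set.two_lt_ncard_iff U.toFinite).1 hcon
  have h1 : idx a ≠ idx b := fun h => hab (hinj a ha b hb h)
  have h2 : idx a ≠ idx c := fun h => hac (hinj a ha c hc h)
  have h3 : idx b ≠ idx c := fun h => hbc (hinj b hb c hc h)
  have t1 : idx a < idx b → idx b < idx a + 2 := htight a ha b hb
  have t2 : idx b < idx a → idx a < idx b + 2 := htight b hb a ha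
  have t3 : idx a < idx c → idx c < idx a + 2 := htight a ha c hc
  have t4 : idx c < idx a → idx a < idx c + 2 := htight c hc a ha
  have t5 : idx b < idx c → idx c < idx b + 2 := htight b hb c hc
  have t6 : idx c < idx b → idx b < idx c + 2 := htight c hc b hb
  omega


/-- The main recursive construction: a 1-dimensional low-ply drawing of a subtree. -/
lemma main (hG : G.IsTree) (Δ : ℕ) (hΔ : ∀ v : V, G.degree v ≤ Δ) :
    ∀ n : ℕ, ∀ A : Finset V, A.card = n → A.Nonempty → PathClosed hG A →
    ∃ x : V → ℝ,
      Set.InjOn x ↑A ∧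
      (∀ v ∈ A, 0 ≤ x v ∧ x v ≤ (n : ℝ) ^ (Δ + 6)) ∧
      (∀ u ∈ A, ∀ v ∈ A, G.Adj u v →
        1 ≤ |x u - x v| ∧ |x u - x v| ≤ (n : ℝ) ^ (Δ + 6)) ∧
      (∀ t : ℝ, ({v : V | v ∈ A ∧ |t - x v| < rad G A x v}).ncard
        ≤ 3 * Nat.log 2 n + 3) := by
  intro n
  induction n using Nat.strong_induction_on with
  | _ n IH =>
  intro A hcard hne hPC
  obtain ⟨c, hcA, hcent⟩ := exists_centroid hG hPC hne
  by_cases hDe : nbrs G A c = ∅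
  · -- base case : `A = {c}`
    have hA1 : A = {c} := by
      have h := comp_partition hG hPC hcA
      rw [hDe] at h
      simpa using h
    refine ⟨fun _ => 0, ?_, ?_, ?_, ?_⟩
    · intro a ha b hb _
      rw [hA1] at ha hb
      simp at ha hb
      rw [ha, hb]
    · intro v hv
      refine ⟨le_refl _, by positivity⟩
    · intro u hu v hv hadj
      rw [hA1] at hu hv
      simp at hu hv
      subst hu; subst hv
      exact absurd hadj (G.irrefl)
    · intro t
      have hempty : {v : V | v ∈ A ∧ |t - 0| < rad G A (fun _ => 0) v} = ∅ := by
        ext v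
        simp only [Set.mem_setOf_eq, Set.mem_empty_iff_false, iff_false, not_and, not_lt]
        intro hv
        have : rad G A (fun _ => 0) v ≤ 0 / 2 := by
          apply rad_le le_rfl
          intro w _ _
          simp
        have h0 : rad G A (fun _ => 0) v ≤ 0 := by linarith
        calc rad G A (fun _ => 0) v ≤ 0 := h0
          _ ≤ |t - 0| := abs_nonneg _
      rw [hempty]
      simp
  · -- inductive case
    have hDne : (nbrs G A c).Nonempty := Finset.nonempty_iff_ne_empty.2 hDe
    obtain ⟨u0, hu0D⟩ := hDne
    have hmemD : ∀ {u : V}, u ∈ nbrs G A c → u ∈ A ∧ G.Adj c u := fun hu => mem_nbrs.1 hu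
    have hn2 : 2 ≤ n := by
      rw [← hcard]
      exact Finset.one_lt_card.2 ⟨c, hcA, u0, (hmemD hu0D).1, (hmemD hu0D).2.ne⟩
    have hd : (nbrs G A c).card ≤ Δ := by
      have hsub : nbrs G A c ⊆ G.neighborFinset c := fun u hu =>
        (SimpleGraph.mem_neighborFinset G c u).2 (hmemD hu).2
      calc (nbrs G A c).card ≤ (G.neighborFinset c).card := Finset.card_le_card hsub
        _ = G.degree c := rfl
        _ ≤ Δ := hΔ c
    classical
    set e := Fintype.equivFinOfCardEq (Fintype.card_coe (nbrs G A c)) with he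
    set idx : V → ℕ := fun u => if h : u ∈ nbrs G A c then (e ⟨u, h⟩ : ℕ) else 0 with hidx
    have hidx_lt : ∀ u ∈ nbrs G A c, idx u < (nbrs G A c).card := by
      intro u hu
      rw [hidx]; simp only [dif_pos hu]
      exact (e ⟨u, hu⟩).isLt
    have hidx_inj : ∀ u ∈ nbrs G A c, ∀ u' ∈ nbrs G A c, idx u = idx u' → u = u' := by
      intro u hu u' hu' hh
      rw [hidx] at hh
      simp only [dif_pos hu, dif_pos hu'] at hh
      have h2 := e.injective (Fin.ext hh)
      exact congrArg Subtype.val h2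
    -- scales
    set S' : ℝ := ((n / 2 : ℕ) : ℝ) ^ (Δ + 6) with hS'def
    have hhalf1 : 1 ≤ n / 2 := by omega
    have hS'1 : (1:ℝ) ≤ S' := one_le_pow₀ (by exact_mod_cast hhalf1)
    have hS'0 : (0:ℝ) < S' := lt_of_lt_of_le one_pos hS'1
    set S : ℝ := ((n : ℝ)) ^ (Δ + 6) with hSdef
    have hSS' : (2:ℝ) ^ (Δ + 4) * S' ≤ S := by
      have h1 : S' ≤ ((n : ℝ) / 2) ^ (Δ + 6) :=
        pow_le_pow_left₀ (Nat.cast_nonneg _) Nat.cast_div_le _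
      have h2 : (2:ℝ) ^ (Δ + 4) * ((n : ℝ) / 2) ^ (Δ + 6) = (n : ℝ) ^ (Δ + 6) / 4 := by
        rw [div_pow, show Δ + 6 = (Δ + 4) + 2 by omega, pow_add]
        field_simp
        ring
      have h3 : (0:ℝ) < 2 ^ (Δ + 4) := by positivity
      have h4 : (0:ℝ) ≤ (n : ℝ) ^ (Δ + 6) := by positivity
      calc (2:ℝ) ^ (Δ + 4) * S' ≤ 2 ^ (Δ + 4) * ((n : ℝ) / 2) ^ (Δ + 6) := by
            exact mul_le_mul_of_nonneg_left h1 (le_of_lt h3)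
        _ = (n : ℝ) ^ (Δ + 6) / 4 := h2
        _ ≤ (n : ℝ) ^ (Δ + 6) := by linarith
    have hS'S : S' ≤ S := by
      have h5 : (1:ℝ) ≤ 2 ^ (Δ + 4) := one_le_pow₀ (by norm_num)
      nlinarith
    -- offsets
    set o : V → ℝ := fun u => S' * 2 ^ (idx u + 4) with ho
    have ho_lb : ∀ u ∈ nbrs G A c, 16 * S' ≤ o u := by
      intro u hu
      have : (2:ℝ) ^ 4 ≤ 2 ^ (idx u + 4) := pow_le_pow_right₀ (by norm_num) (by omega)
      rw [ho]
      calc (16:ℝ) * S' = S' * 2 ^ 4 := by ring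
        _ ≤ S' * 2 ^ (idx u + 4) := by nlinarith
    have ho_pos : ∀ u ∈ nbrs G A c, 0 < o u := fun u hu =>
      lt_of_lt_of_le (by nlinarith) (ho_lb u hu)
    have ho_ub : ∀ u ∈ nbrs G A c, o u ≤ 2 ^ (Δ + 3) * S' := by
      intro u hu
      have h1 : idx u + 4 ≤ Δ + 3 := by
        have := hidx_lt u hu; omega
      have : (2:ℝ) ^ (idx u + 4) ≤ 2 ^ (Δ + 3) := pow_le_pow_right₀ (by norm_num) h1
      have hou : o u = S' * 2 ^ (idx u + 4) := rfl
      rw [hou]; nlinarith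
    have ho_double : ∀ u ∈ nbrs G A c, ∀ u' ∈ nbrs G A c, idx u < idx u' →
        2 * o u ≤ o u' := by
      intro u hu u' hu' hlt
      have : (2:ℝ) ^ (idx u + 5) ≤ 2 ^ (idx u' + 4) := pow_le_pow_right₀ (by norm_num) (by omega)
      rw [ho]
      calc 2 * (S' * 2 ^ (idx u + 4)) = S' * 2 ^ (idx u + 5) := by ring
        _ ≤ S' * 2 ^ (idx u' + 4) := by nlinarith
    -- component sizes
    have hkle : ∀ u ∈ nbrs G A c, (comp hG A c u).card ≤ n / 2 := by
      intro u hu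
      have := hcent u hu
      omega
    have hkltn : ∀ u ∈ nbrs G A c, (comp hG A c u).card < n := by
      intro u hu
      have h1 := hkle u hu
      have h2 : n / 2 < n := Nat.div_lt_self (by omega) (by norm_num)
      omega
    have hSu : ∀ u ∈ nbrs G A c, ((comp hG A c u).card : ℝ) ^ (Δ + 6) ≤ S' := by
      intro u hu
      exact pow_le_pow_left₀ (Nat.cast_nonneg _) (Nat.cast_le.2 (hkle u hu)) _
    -- recursive drawings
    have hrec : ∀ u : V, ∃ xu : V → ℝ, u ∈ nbrs G A c →
        Set.InjOn xu ↑(comp hG A c u) ∧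
        (∀ v ∈ comp hG A c u, 0 ≤ xu v ∧ xu v ≤ ((comp hG A c u).card : ℝ) ^ (Δ + 6)) ∧
        (∀ p ∈ comp hG A c u, ∀ q ∈ comp hG A c u, G.Adj p q →
          1 ≤ |xu p - xu q| ∧ |xu p - xu q| ≤ ((comp hG A c u).card : ℝ) ^ (Δ + 6)) ∧
        (∀ t : ℝ, ({v : V | v ∈ comp hG A c u ∧
            |t - xu v| < rad G (comp hG A c u) xu v}).ncard
          ≤ 3 * Nat.log 2 (comp hG A c u).card + 3) := by
      intro u
      by_cases hu : u ∈ nbrs G A c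
      · obtain ⟨xu, h1, h2, h3, h4⟩ := IH (comp hG A c u).card (hkltn u hu)
          (comp hG A c u) rfl ⟨u, mem_comp_self hG (hmemD hu).1 (hmemD hu).2⟩
          (comp_pathClosed hG hPC)
        exact ⟨xu, fun _ => ⟨h1, h2, h3, h4⟩⟩
      · exact ⟨fun _ => 0, fun h => absurd h hu⟩
    choose xf hxf using hrec
    -- owners
    set own : V → V := fun v =>
      if h : ∃ u, u ∈ nbrs G A c ∧ v ∈ comp hG A c u then h.choose else c with hown_def
    have hown : ∀ v ∈ A, v ≠ c → own v ∈ nbrs G A c ∧ v ∈ comp hG A c (own v) := by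
      intro v hv hvc
      have hex : ∃ u, u ∈ nbrs G A c ∧ v ∈ comp hG A c u := by
        obtain ⟨u, hu1, hu2⟩ := exists_comp hG hPC hcA hv hvc
        exact ⟨u, hu1, hu2⟩
      rw [hown_def]
      simp only [dif_pos hex]
      exact hex.choose_spec
    have hown_eq : ∀ u v, u ∈ nbrs G A c → v ∈ comp hG A c u → own v = u := by
      intro u v huD hvB
      have hvA : v ∈ A := comp_subset hvB
      have hvc : v ≠ c := (mem_comp.1 hvB).2.1
      obtain ⟨h1, h2⟩ := hown v hvA hvc
      by_contra hne'
      exact comp_disjoint hG (hmemD h1).2 (hmemD huD).2 hne' h2 hvB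
    have hown_self : ∀ u ∈ nbrs G A c, own u = u := fun u hu =>
      hown_eq u u hu (mem_comp_self hG (hmemD hu).1 (hmemD hu).2)
    -- the drawing
    set X : V → ℝ := fun v =>
      if v = c then 0 else o (own v) + (xf (own v) v - xf (own v) (own v)) with hXdef
    have hXc : X c = 0 := by rw [hXdef]; simp
    have hXv : ∀ u ∈ nbrs G A c, ∀ v ∈ comp hG A c u,
        X v = o u + (xf u v - xf u u) := by
      intro u hu v hv
      have hvc : v ≠ c := (mem_comp.1 hv).2.1
      rw [hXdef]
      simp only [if_neg hvc, hown_eq u v hu hv]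
    have hXu : ∀ u ∈ nbrs G A c, X u = o u := by
      intro u hu
      rw [hXv u hu u (mem_comp_self hG (hmemD hu).1 (hmemD hu).2)]
      ring
    have hXrange : ∀ u ∈ nbrs G A c, ∀ v ∈ comp hG A c u, |X v - o u| ≤ S' := by
      intro u hu v hv
      have h1 := ((hxf u hu).2.1) v hv
      have h2 := ((hxf u hu).2.1) u (mem_comp_self hG (hmemD hu).1 (hmemD hu).2)
      have h3 := hSu u hu
      rw [hXv u hu v hv]
      have h4 : o u + (xf u v - xf u u) - o u = xf u v - xf u u := by ring
      rw [h4, abs_le]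
      constructor <;> linarith [h1.1, h1.2, h2.1, h2.2]
    -- separation of blocks
    have hsep : ∀ u ∈ nbrs G A c, ∀ u' ∈ nbrs G A c, idx u < idx u' →
        ∀ v ∈ comp hG A c u, ∀ w ∈ comp hG A c u', X v + 2 * S' ≤ X w := by
      intro u hu u' hu' hlt v hv w hw
      have h1 := hXrange u hu v hv
      have h2 := hXrange u' hu' w hw
      have h3 := ho_double u hu u' hu' hlt
      have h4 := ho_lb u hu
      rw [abs_le] at h1 h2
      linarith [h1.1, h1.2, h2.1, h2.2]
    have hXblock_pos : ∀ v ∈ A, v ≠ c → 15 * S' ≤ X v ∧ X v ≤ 2 ^ (Δ + 3) * S' + S' := by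
      intro v hv hvc
      obtain ⟨huD, hvB⟩ := hown v hv hvc
      have h1 := hXrange (own v) huD v hvB
      rw [abs_le] at h1
      have h2 := ho_lb (own v) huD
      have h3 := ho_ub (own v) huD
      constructor <;> linarith [h1.1, h1.2]
    refine ⟨X, ?_, ?_, ?_, ?_⟩
    · -- injectivity
      intro a ha b hb heq
      by_cases hac : a = c
      · by_cases hbc : b = c
        · rw [hac, hbc]
        · exfalso
          have h1 := (hXblock_pos b hb hbc).1
          rw [hac, hXc] at heq
          rw [← heq] at h1
          linarith
      · by_cases hbc : b = c
        · exfalso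
          have h1 := (hXblock_pos a ha hac).1
          rw [hbc, hXc] at heq
          rw [heq] at h1
          linarith
        · obtain ⟨haD, haB⟩ := hown a ha hac
          obtain ⟨hbD, hbB⟩ := hown b hb hbc
          by_cases hoo : own a = own b
          · have hXa := hXv (own a) haD a haB
            have hXb := hXv (own b) hbD b hbB
            rw [hoo] at hXa
            have haB' : a ∈ comp hG A c (own b) := hoo ▸ haB
            have hxeq : xf (own b) a = xf (own b) b := by
              rw [hXa, hXb] at heq; linarith
            exact (hxf (own b) hbD).1 haB' hbB hxeq
          · exfalso
            have hne2 : idx (own a) ≠ idx (own b) := fun h => hoo (hidx_inj _ haD _ hbD h)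
            rcases lt_or_gt_of_ne hne2 with hlt | hgt
            · have := hsep (own a) haD (own b) hbD hlt a haB b hbB
              linarith
            · have := hsep (own b) hbD (own a) haD hgt b hbB a haB
              linarith
    · -- range
      intro v hv
      by_cases hvc : v = c
      · rw [hvc, hXc]
        exact ⟨le_refl _, by positivity⟩
      · have h := hXblock_pos v hv hvc
        have h23 : (1:ℝ) ≤ 2 ^ (Δ + 3) := one_le_pow₀ (by norm_num)
        have hps : (2:ℝ) ^ (Δ + 4) = 2 ^ (Δ + 3) * 2 := pow_succ 2 (Δ + 3)
        constructor
        · linarith [h.1]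
        · have hstep : 2 ^ (Δ + 3) * S' + S' ≤ 2 ^ (Δ + 4) * S' := by
            rw [hps]; nlinarith
          linarith [h.2, hSS']
    · -- edges
      have key : ∀ q ∈ A, G.Adj c q → 1 ≤ |X c - X q| ∧ |X c - X q| ≤ S := by
        intro q hq hadj
        have hqc : q ≠ c := fun h => G.irrefl (h ▸ hadj)
        obtain ⟨hqD, hqB⟩ := hown q hq hqc
        have hq_eq : q = own q := adj_c_eq hG (hmemD hqD).2 hqB hadj
        have hXq : X q = o (own q) := by
          rw [show X q = X (own q) from congrArg X hq_eq, hXu (own q) hqD]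
        rw [hXc, hXq, zero_sub, abs_neg, abs_of_pos (ho_pos (own q) hqD)]
        have h1 := ho_lb (own q) hqD
        have h2 := ho_ub (own q) hqD
        have hps : (2:ℝ) ^ (Δ + 4) = 2 ^ (Δ + 3) * 2 := pow_succ 2 (Δ + 3)
        constructor
        · linarith
        · nlinarith [hSS']
      intro p hp q hq hadj
      by_cases hpc : p = c
      · subst hpc; exact key q hq hadj
      · by_cases hqc : q = c
        · subst hqc
          rw [abs_sub_comm]
          exact key p hp hadj.symm
        · obtain ⟨hpD, hpB⟩ := hown p hp hpc
          have hqB : q ∈ comp hG A c (own p) := adj_mem_comp hG hpB hq hqc hadj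
          have hdiff : X p - X q = xf (own p) p - xf (own p) q := by
            rw [hXv (own p) hpD p hpB, hXv (own p) hpD q hqB]; ring
          have he := (hxf (own p) hpD).2.2.1 p hpB q hqB hadj
          rw [hdiff]
          exact ⟨he.1, le_trans he.2 (le_trans (hSu (own p) hpD) hS'S)⟩
    · -- ply
      intro t
      have hradu : ∀ u ∈ nbrs G A c, rad G A X u ≤ o u / 2 := by
        intro u hu
        apply rad_le (le_of_lt (ho_pos u hu))
        intro w hadj hwA
        by_cases hwc : w = c
        · subst hwc
          rw [hXu u hu, hXc, sub_zero, abs_of_pos (ho_pos u hu)]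
        · have huB := mem_comp_self hG (hmemD hu).1 (hmemD hu).2
          have hwB : w ∈ comp hG A c u := adj_mem_comp hG huB hwA hwc hadj
          have hdiff : X u - X w = xf u u - xf u w := by
            rw [hXv u hu u huB, hXv u hu w hwB]; ring
          rw [hdiff]
          have he := (hxf u hu).2.2.1 u huB w hwB hadj
          calc |xf u u - xf u w| ≤ ((comp hG A c u).card : ℝ) ^ (Δ + 6) := he.2
            _ ≤ S' := hSu u hu
            _ ≤ o u := le_trans (by linarith) (ho_lb u hu)
      have hradblock : ∀ u ∈ nbrs G A c, ∀ v ∈ comp hG A c u, v ≠ u →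
          rad G A X v = rad G (comp hG A c u) (xf u) v := by
        intro u hu v hvB hvu
        apply rad_congr
        · intro w hadj
          constructor
          · intro hwB; exact comp_subset hwB
          · intro hwA
            by_cases hwc : w = c
            · exact absurd (adj_c_eq hG (hmemD hu).2 hvB (hwc ▸ hadj.symm)) hvu
            · exact adj_mem_comp hG hvB hwA hwc hadj
        · intro w hadj hwB
          have hdiff : X v - X w = xf u v - xf u w := by
            rw [hXv u hu v hvB, hXv u hu w hwB]; ring
          rw [hdiff]
      have hradblock_le : ∀ u ∈ nbrs G A c, ∀ v ∈ comp hG A c u,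
          rad G (comp hG A c u) (xf u) v ≤ S' / 2 := by
        intro u hu v hvB
        apply rad_le (le_of_lt hS'0)
        intro w hadj hwB
        exact le_trans ((hxf u hu).2.2.1 v hvB w hwB hadj).2 (hSu u hu)
      set T := {v : V | v ∈ A ∧ |t - X v| < rad G A X v} with hT
      set UD := {u : V | u ∈ nbrs G A c ∧ |t - X u| < rad G A X u} with hUDdef
      set Tint := {v : V | v ∈ A ∧ v ≠ c ∧ v ∉ nbrs G A c ∧ |t - X v| < rad G A X v}
        with hTintdef
      have hTsub : T ⊆ ({c} ∪ UD) ∪ Tint := by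
        intro v hv
        obtain ⟨hvA, hvcond⟩ := hv
        by_cases hvc : v = c
        · exact Or.inl (Or.inl hvc)
        · by_cases hvD : v ∈ nbrs G A c
          · exact Or.inl (Or.inr ⟨hvD, hvcond⟩)
          · exact Or.inr ⟨hvA, hvc, hvD, hvcond⟩
      have hUD2 : UD.ncard ≤ 2 := by
        apply tight_ncard_le_two (idx := idx)
        · intro u hu u' hu' hh; exact hidx_inj u hu.1 u' hu'.1 hh
        · intro u hu u' hu' hlt
          by_contra hcon
          push_neg at hcon
          have h4 : (2:ℝ) ^ (idx u + 6) ≤ 2 ^ (idx u' + 4) :=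
            pow_le_pow_right₀ (by norm_num) (by omega)
          have ho4 : 4 * o u ≤ o u' := by
            have e1 : o u = S' * 2 ^ (idx u + 4) := rfl
            have e2 : o u' = S' * 2 ^ (idx u' + 4) := rfl
            rw [e1, e2]
            calc 4 * (S' * 2 ^ (idx u + 4)) = S' * 2 ^ (idx u + 6) := by ring
              _ ≤ S' * 2 ^ (idx u' + 4) := by nlinarith
          have hc1 := hu.2
          have hc2 := hu'.2
          rw [hXu u hu.1] at hc1
          rw [hXu u' hu'.1] at hc2
          have ha1 := abs_lt.1 (lt_of_lt_of_le hc1 (hradu u hu.1))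
          have ha2 := abs_lt.1 (lt_of_lt_of_le hc2 (hradu u' hu'.1))
          have hop := ho_pos u hu.1
          linarith [ha1.1, ha1.2, ha2.1, ha2.2]
      have hTintB : Tint.ncard ≤ 3 * Nat.log 2 (n / 2) + 3 := by
        rcases Tint.eq_empty_or_nonempty with hemp | ⟨v0, hv0⟩
        · rw [hemp, Set.ncard_empty]; omega
        · obtain ⟨hv0A, hv0c, hv0D, hv0cond⟩ := hv0
          obtain ⟨hu1D, hv0B⟩ := hown v0 hv0A hv0c
          have hclose : ∀ v ∈ Tint, |t - o (own v)| < 3 / 2 * S' := by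
            intro v hv
            obtain ⟨hvA, hvc, hvD, hvcond⟩ := hv
            obtain ⟨huD, hvB⟩ := hown v hvA hvc
            have hvu : v ≠ own v := fun h => hvD (h ▸ huD)
            rw [hradblock (own v) huD v hvB hvu] at hvcond
            have h1 := lt_of_lt_of_le hvcond (hradblock_le (own v) huD v hvB)
            have h2 := hXrange (own v) huD v hvB
            calc |t - o (own v)| ≤ |t - X v| + |X v - o (own v)| := abs_sub_le _ _ _
              _ < 3 / 2 * S' := by linarith
          have howner : ∀ v ∈ Tint, own v = own v0 := by
            intro v hv
            by_contra hne'
            obtain ⟨hvA, hvc, hvD, hvcond⟩ := hv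
            obtain ⟨huD, hvB⟩ := hown v hvA hvc
            have hidxne : idx (own v) ≠ idx (own v0) := fun h =>
              hne' (hidx_inj _ huD _ hu1D h)
            have hc1 := hclose v ⟨hvA, hvc, hvD, hvcond⟩
            have hc2 := hclose v0 ⟨hv0A, hv0c, hv0D, hv0cond⟩
            have hdist_o : |o (own v) - o (own v0)| < 3 * S' := by
              calc |o (own v) - o (own v0)| ≤ |o (own v) - t| + |t - o (own v0)| :=
                    abs_sub_le _ _ _
                _ = |t - o (own v)| + |t - o (own v0)| := by rw [abs_sub_comm]
                _ < 3 * S' := by linarith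
            rw [abs_lt] at hdist_o
            rcases lt_or_gt_of_ne hidxne with hlt | hgt
            · have hdd := ho_double (own v) huD (own v0) hu1D hlt
              have hlb := ho_lb (own v) huD
              linarith [hdist_o.1, hdist_o.2]
            · have hdd := ho_double (own v0) hu1D (own v) huD hgt
              have hlb := ho_lb (own v0) hu1D
              linarith [hdist_o.1, hdist_o.2]
          set t' := t - o (own v0) + xf (own v0) (own v0) with ht'
          have hsubrec : Tint ⊆ {v : V | v ∈ comp hG A c (own v0) ∧
              |t' - xf (own v0) v| < rad G (comp hG A c (own v0)) (xf (own v0)) v} := by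
            intro v hv
            have ho_v := howner v hv
            obtain ⟨hvA, hvc, hvD, hvcond⟩ := hv
            obtain ⟨huD, hvB⟩ := hown v hvA hvc
            rw [ho_v] at hvB
            have hvu : v ≠ own v0 := fun h => hvD (h ▸ hu1D)
            refine ⟨hvB, ?_⟩
            have hre : t - X v = t' - xf (own v0) v := by
              rw [hXv (own v0) hu1D v hvB, ht']; ring
            rw [← hre, ← hradblock (own v0) hu1D v hvB hvu]
            exact hvcond
          calc Tint.ncard ≤ _ := Set.ncard_le_ncard hsubrec (Set.toFinite _)
            _ ≤ 3 * Nat.log 2 (comp hG A c (own v0)).card + 3 :=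
                (hxf (own v0) hu1D).2.2.2 t'
            _ ≤ 3 * Nat.log 2 (n / 2) + 3 := by
                have hmono := Nat.log_mono_right (b := 2) (hkle (own v0) hu1D)
                omega
      have hfin : T.ncard ≤ 1 + 2 + (3 * Nat.log 2 (n / 2) + 3) := by
        have s1 : T.ncard ≤ (({c} ∪ UD) ∪ Tint).ncard :=
          Set.ncard_le_ncard hTsub (Set.toFinite _)
        have s2 := Set.ncard_union_le ({c} ∪ UD) Tint
        have s3 := Set.ncard_union_le ({c} : Set V) UD
        have s4 : ({c} : Set V).ncard = 1 := Set.ncard_singleton c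
        omega
      have hlog : Nat.log 2 (n / 2) = Nat.log 2 n - 1 := Nat.log_div_base 2 n
      have hlpos : 0 < Nat.log 2 n := Nat.log_pos (by norm_num) hn2
      omega


lemma logbound {n : ℕ} (hn : 2 ≤ n) :
    ((3 * Nat.log 2 n + 3 : ℕ) : ℝ) ≤ 5 * (Real.log n + 1) := by
  set L := Nat.log 2 n with hL
  have h1 : (2:ℕ) ^ L ≤ n := Nat.pow_log_le_self 2 (by omega)
  have h2 : ((2:ℝ)) ^ L ≤ (n : ℝ) := by exact_mod_cast h1
  have h3 : Real.log ((2:ℝ) ^ L) ≤ Real.log n :=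
    Real.log_le_log (by positivity) h2
  rw [Real.log_pow] at h3
  have h4 : (0.6931471803 : ℝ) < Real.log 2 := Real.log_two_gt_d9
  have h5 : (0:ℝ) ≤ L := Nat.cast_nonneg _
  have h6 : (0:ℝ) ≤ Real.log n := Real.log_nonneg (by exact_mod_cast by omega)
  have h7 : 3 * (L:ℝ) ≤ 5 * Real.log n := by nlinarith
  push_cast
  linarith

end TreePly

end Aux

open Real

/-- There is a constant `C > 0` such that every finite tree on
`n ≥ 2` vertices with maximum degree at most `Δ` (for any `Δ ≥ 2`) has a
straight-line drawing `ρ` in which (1) every point of the plane is covered by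
at most `C·(log n + 1)` ply disks with parameter `α = 1/2`, and (2) the ratio
of any two edge lengths is at most `n^(C·Δ)`: trees have drawings with ply
number `O(log n)` for `α = 1/2` in area `n^{O(Δ)}`. -/
theorem stmt3 :
    ∃ C : ℝ, 0 < C ∧
      ∀ (Δ : ℕ), 2 ≤ Δ →
        ∀ (V : Type) [Fintype V] [DecidableEq V]
          (G : SimpleGraph V) [DecidableRel G.Adj],
          G.IsTree → (∀ v : V, G.degree v ≤ Δ) → 2 ≤ Fintype.card V →
          ∃ ρ : V → EuclideanSpace ℝ (Fin 2), Function.Injective ρ ∧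
            (∀ q : EuclideanSpace ℝ (Fin 2),
              (Set.ncard {v : V | q ∈ Metric.ball (ρ v) (plyRadius G ρ (1 / 2) v)} : ℝ)
                ≤ C * (Real.log (Fintype.card V) + 1)) ∧
            (∀ u v u' v' : V, G.Adj u v → G.Adj u' v' →
              dist (ρ u) (ρ v) ≤
                (Fintype.card V : ℝ) ^ (C * Δ) * dist (ρ u') (ρ v')) := by
  refine ⟨5, by norm_num, ?_⟩
  intro Δ hΔ2 V _ _ G _ hG hdeg hn
  set n := Fintype.card V with hndef
  obtain ⟨x, hinj, hrange, hedges, hply⟩ :=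
    TreePly.main hG Δ hdeg n Finset.univ (by simp [hndef])
      (have : Nonempty V := Fintype.card_pos_iff.1 (by omega)
       Finset.univ_nonempty)
      (fun u _ v _ z _ => Finset.mem_univ z)
  set ρ : V → EuclideanSpace ℝ (Fin 2) := fun v => EuclideanSpace.single (0 : Fin 2) (x v)
    with hρ
  have hcoords : ∀ v : V, ρ v 0 = x v ∧ ρ v 1 = 0 := by
    intro v
    rw [hρ]
    constructor <;> simp [EuclideanSpace.single_apply]
  have hdistρ : ∀ u v : V, dist (ρ u) (ρ v) = |x u - x v| := by
    intro u v
    rw [EuclideanSpace.dist_eq, Fin.sum_univ_two, (hcoords u).1, (hcoords u).2,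
      (hcoords v).1, (hcoords v).2, Real.dist_eq, Real.dist_eq]
    rw [show |(0:ℝ) - 0| = 0 by simp, show (|x u - x v| ^ 2 + 0 ^ 2 : ℝ) = |x u - x v| ^ 2 by ring,
      sq_abs]
    exact Real.sqrt_sq_eq_abs _
  have hxinj : Function.Injective x := fun a b hab =>
    hinj (Finset.mem_coe.2 (Finset.mem_univ a)) (Finset.mem_coe.2 (Finset.mem_univ b)) hab
  have hrinjective : Function.Injective ρ := by
    intro a b hab
    apply hxinj
    have := congrArg (fun p : EuclideanSpace ℝ (Fin 2) => p 0) hab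
    rwa [(hcoords a).1, (hcoords b).1] at this
  have hradeq : ∀ v : V, plyRadius G ρ (1 / 2) v = TreePly.rad G Finset.univ x v := by
    intro v
    have hseteq : {w : V | G.Adj v w ∧ w ∈ Finset.univ} = G.neighborSet v := by
      ext w; simp [SimpleGraph.mem_neighborSet]
    have himg : (fun w : V => |x v - x w|) '' (G.neighborSet v) =
        Set.range (fun w : G.neighborSet v => dist (ρ v) (ρ (w : V))) := by
      rw [Set.image_eq_range]
      exact congrArg Set.range (funext fun w => (hdistρ v (w : V)).symm)
    rw [plyRadius, TreePly.rad, hseteq, himg, sSup_range]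
  refine ⟨ρ, hrinjective, ?_, ?_⟩
  · intro q
    have hsub : {v : V | q ∈ Metric.ball (ρ v) (plyRadius G ρ (1 / 2) v)} ⊆
        {v : V | v ∈ Finset.univ ∧ |q 0 - x v| < TreePly.rad G Finset.univ x v} := by
      intro v hv
      rw [Set.mem_setOf_eq, Metric.mem_ball, hradeq v] at hv
      refine ⟨Finset.mem_univ v, lt_of_le_of_lt ?_ hv⟩
      have h1 : |q 0 - ρ v 0| ≤ dist q (ρ v) := by
        rw [EuclideanSpace.dist_eq]
        have h2 : dist (q 0) (ρ v 0) ^ 2 ≤ ∑ i : Fin 2, dist (q i) (ρ v i) ^ 2 :=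
          Finset.single_le_sum (f := fun i => dist (q i) (ρ v i) ^ 2)
            (fun i _ => sq_nonneg _) (Finset.mem_univ 0)
        calc |q 0 - ρ v 0| = dist (q 0) (ρ v 0) := (Real.dist_eq _ _).symm
          _ = Real.sqrt (dist (q 0) (ρ v 0) ^ 2) := (Real.sqrt_sq dist_nonneg).symm
          _ ≤ _ := Real.sqrt_le_sqrt h2
      rwa [(hcoords v).1] at h1
    have hcount := hply (q 0)
    have hle : ({v : V | q ∈ Metric.ball (ρ v) (plyRadius G ρ (1 / 2) v)}).ncard
        ≤ 3 * Nat.log 2 n + 3 :=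
      le_trans (Set.ncard_le_ncard hsub (Set.toFinite _)) hcount
    calc (({v : V | q ∈ Metric.ball (ρ v) (plyRadius G ρ (1 / 2) v)}).ncard : ℝ)
        ≤ ((3 * Nat.log 2 n + 3 : ℕ) : ℝ) := by exact_mod_cast hle
      _ ≤ 5 * (Real.log n + 1) := TreePly.logbound hn
  · intro u v u' v' huv hu'v'
    have h1 := hedges u (Finset.mem_univ u) v (Finset.mem_univ v) huv
    have h2 := hedges u' (Finset.mem_univ u') v' (Finset.mem_univ v') hu'v'
    rw [hdistρ u v, hdistρ u' v']
    have hn1 : (1:ℝ) ≤ (n : ℝ) := by exact_mod_cast by omega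
    have hΔr : (2:ℝ) ≤ (Δ : ℝ) := by exact_mod_cast hΔ2
    have hexp : ((n:ℝ)) ^ (Δ + 6) ≤ (n : ℝ) ^ ((5:ℝ) * Δ) := by
      rw [← Real.rpow_natCast (n:ℝ) (Δ + 6)]
      apply Real.rpow_le_rpow_of_exponent_le hn1
      push_cast
      linarith
    have hpos : (0:ℝ) ≤ (n : ℝ) ^ ((5:ℝ) * Δ) := Real.rpow_nonneg (by positivity) _
    calc |x u - x v| ≤ (n:ℝ) ^ (Δ + 6) := h1.2
      _ ≤ (n : ℝ) ^ ((5:ℝ) * Δ) := hexp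
      _ = (n : ℝ) ^ ((5:ℝ) * Δ) * 1 := by ring
      _ ≤ (n : ℝ) ^ ((5:ℝ) * Δ) * |x u' - x v'| := by
          apply mul_le_mul_of_nonneg_left h2.1 hpos
end

section
/- Let m ≥ 2 and let x : Fin m → ℝ be strictly increasing, with consecutive gaps g_i = x_{i+1} − x_i for 0 ≤ i ≤ m−2. Suppose that for every 0 ≤ i ≤ m−3 we have g_i / 2 ≤ g_{i+1} ≤ 2·g_i. Place vertex i at the point (x_i, 0) ∈ ℝ², and let r_i = (1/2)·(the maximum of the gaps adjacent to i), i.e., r_0 = g_0/2, r_{m−1} = g_{m−2}/2, and r_i = max(g_{i−1}, g_i)/2 otherwise. Then every point q ∈ ℝ² lies in at most 2 of the open disks of radius r_i centered at (x_i, 0). That is, a 2-drawing of a path has ply number at most 2 for α = 1/2. -/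
/-- A 2-drawing of a path has ply number at most 2 (for
`α = 1/2`): if `x 0 < x 1 < ⋯ < x (m-1)` are the vertex positions on a line,
the consecutive gaps `g i = x (i+1) − x i` satisfy
`g i / 2 ≤ g (i+1) ≤ 2·g i`, and `r i` is half the larger gap adjacent to
vertex `i`, then no point of the plane lies in more than 2 of the open disks
of radius `r i` centered at the points `(x i, 0)`. -/
theorem stmt5 (m : ℕ) (hm : 2 ≤ m) (x : ℕ → ℝ)
    (hmono : ∀ i j : ℕ, i < j → j < m → x i < x j)
    (g : ℕ → ℝ) (hg : ∀ i : ℕ, i + 2 ≤ m → g i = x (i + 1) - x i)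
    (hgap : ∀ i : ℕ, i + 3 ≤ m → g i / 2 ≤ g (i + 1) ∧ g (i + 1) ≤ 2 * g i)
    (p : ℕ → EuclideanSpace ℝ (Fin 2))
    (hp : ∀ i : ℕ, p i = (EuclideanSpace.equiv (Fin 2) ℝ).symm ![x i, 0])
    (r : ℕ → ℝ)
    (hr0 : r 0 = g 0 / 2)
    (hrlast : r (m - 1) = g (m - 2) / 2)
    (hrmid : ∀ i : ℕ, 1 ≤ i → i + 2 ≤ m → r i = max (g (i - 1)) (g i) / 2) :
    ∀ q : EuclideanSpace ℝ (Fin 2),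
      Set.ncard {i : ℕ | i < m ∧ q ∈ Metric.ball (p i) (r i)} ≤ 2 := by
  intro q
  set S := {i : ℕ | i < m ∧ q ∈ Metric.ball (p i) (r i)} with hS
  -- gaps are positive
  have hgpos : ∀ i : ℕ, i + 2 ≤ m → 0 < g i := by
    intro i hi
    rw [hg i hi]
    have := hmono i (i + 1) (by omega) (by omega)
    linarith
  -- r i ≤ g i whenever i + 2 ≤ m
  have hr_right : ∀ i : ℕ, i + 2 ≤ m → r i ≤ g i := by
    intro i hi
    rcases Nat.eq_zero_or_pos i with h0 | h1
    · subst h0; rw [hr0]; linarith [hgpos 0 hi]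
    · rw [hrmid i h1 hi]
      have h2 := (hgap (i - 1) (by omega)).1
      have hi1 : i - 1 + 1 = i := by omega
      rw [hi1] at h2
      have hgi := hgpos i hi
      have : max (g (i - 1)) (g i) ≤ 2 * g i := max_le (by linarith) (by linarith)
      linarith
  -- r k ≤ g (k - 1) whenever 1 ≤ k < m
  have hr_left : ∀ k : ℕ, 1 ≤ k → k < m → r k ≤ g (k - 1) := by
    intro k h1 hk
    by_cases hlast : k = m - 1
    · subst hlast
      rw [hrlast]
      have : m - 1 - 1 = m - 2 := by omega
      rw [this]
      have := hgpos (m - 2) (by omega)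
      linarith
    · have hk2 : k + 2 ≤ m := by omega
      rw [hrmid k h1 hk2]
      have h2 := (hgap (k - 1) (by omega)).2
      have hi1 : k - 1 + 1 = k := by omega
      rw [hi1] at h2
      have hgk1 := hgpos (k - 1) (by omega)
      have : max (g (k - 1)) (g k) ≤ 2 * g (k - 1) := max_le (by linarith) h2
      linarith
  -- distance between the centers
  have hdist : ∀ i k : ℕ, dist (p i) (p k) = |x i - x k| := by
    intro i k
    rw [hp i, hp k, EuclideanSpace.dist_eq]
    simp [Fin.sum_univ_two, Real.sqrt_sq_eq_abs, Real.dist_eq]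
  -- two disks whose indices differ by at least 2 are disjoint
  have hdisj : ∀ i k : ℕ, i + 2 ≤ k → k < m → i ∈ S → k ∈ S → False := by
    intro i k hik hkm hiS hkS
    obtain ⟨-, hqi⟩ := hiS
    obtain ⟨-, hqk⟩ := hkS
    rw [Metric.mem_ball] at hqi hqk
    have him : i + 2 ≤ m := by omega
    have hkm1 : k - 1 + 2 ≤ m := by omega
    have hgi : g i = x (i + 1) - x i := hg i him
    have hgk : g (k - 1) = x (k - 1 + 1) - x (k - 1) := hg (k - 1) hkm1
    have hk1 : k - 1 + 1 = k := by omega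
    rw [hk1] at hgk
    have hmid : x (i + 1) ≤ x (k - 1) := by
      rcases Nat.lt_or_ge (i + 1) (k - 1) with h | h
      · exact le_of_lt (hmono (i + 1) (k - 1) h (by omega))
      · have : i + 1 = k - 1 := by omega
        rw [this]
    have hsum : g i + g (k - 1) ≤ x k - x i := by
      rw [hgi, hgk]; linarith
    have hri : r i ≤ g i := hr_right i him
    have hrk : r k ≤ g (k - 1) := hr_left k (by omega) hkm
    have htri : dist (p i) (p k) ≤ dist q (p i) + dist q (p k) :=
      dist_triangle_left _ _ _
    have hd : dist (p i) (p k) = x k - x i := by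
      rw [hdist i k, abs_sub_comm, abs_of_nonneg]
      have := hmono i k (by omega) hkm
      linarith
    linarith
  -- conclude
  by_contra hcon
  push_neg at hcon
  have hfin : S.Finite := Set.Finite.subset (Set.finite_Iio m) (fun i hi => hi.1)
  rw [Set.two_lt_ncard hfin] at hcon
  obtain ⟨a, ha, b, hb, c, hc, hab, hac, hbc⟩ := hcon
  have ham := ha.1
  have hbm := hb.1
  have hcm := hc.1
  have : (a + 2 ≤ b ∨ b + 2 ≤ a) ∨ (a + 2 ≤ c ∨ c + 2 ≤ a) ∨
      (b + 2 ≤ c ∨ c + 2 ≤ b) := by omega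
  rcases this with (h | h) | (h | h) | (h | h)
  · exact hdisj a b h hbm ha hb
  · exact hdisj b a h ham hb ha
  · exact hdisj a c h hcm ha hc
  · exact hdisj c a h ham hc ha
  · exact hdisj b c h hcm hb hc
  · exact hdisj c b h hbm hc hb
end

section
/- Let k ≥ 1 and let n₁, …, n_k be real numbers, each at least 1. Then there exist positive real numbers l₁, …, l_k such that: l₁ ≥ n₁; l_{i+1} ≥ n_i + n_{i+1} for every 1 ≤ i ≤ k−1; l_i / 2 ≤ l_{i+1} ≤ 2·l_i for every 1 ≤ i ≤ k−1 (so the lengths form a 2-drawing); and l₁ + l₂ + ⋯ + l_k ≤ 6·(n₁ + n₂ + ⋯ + n_k). -/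
open Finset

private lemma geom_dist_sum (k j : ℕ) :
    ∑ i ∈ Icc 1 k, ((1:ℝ)/2) ^ (Nat.dist i j) ≤ 3 := by
  have hsub : ∑ i ∈ Icc 1 k, ((1:ℝ)/2) ^ (Nat.dist i j)
      ≤ ∑ i ∈ range (k+1), ((1:ℝ)/2) ^ (Nat.dist i j) := by
    apply sum_le_sum_of_subset_of_nonneg
    · intro x hx; simp only [mem_Icc, mem_range] at hx ⊢; omega
    · intros; positivity
  refine hsub.trans ?_
  rw [← sum_filter_add_sum_filter_not (range (k+1)) (· ≤ j)]
  have hA : ∑ i ∈ (range (k+1)).filter (· ≤ j), ((1:ℝ)/2) ^ (Nat.dist i j) ≤ 2 := by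
    have himg : ∑ i ∈ (range (k+1)).filter (· ≤ j), ((1:ℝ)/2) ^ (Nat.dist i j)
        = ∑ m ∈ ((range (k+1)).filter (· ≤ j)).image (fun i => j - i), ((1:ℝ)/2) ^ m := by
      rw [sum_image]
      · apply sum_congr rfl
        intro i hi
        simp only [mem_filter] at hi
        congr 1
        simp [Nat.dist]; omega
      · intro x hx y hy hxy
        simp only [mem_coe, mem_filter, mem_range] at hx hy hxy
        omega
    rw [himg]
    calc ∑ m ∈ ((range (k+1)).filter (· ≤ j)).image (fun i => j - i), ((1:ℝ)/2) ^ m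
        ≤ ∑ m ∈ range (j+1), ((1:ℝ)/2) ^ m := by
          apply sum_le_sum_of_subset_of_nonneg
          · intro x hx
            simp only [mem_image, mem_filter, mem_range] at hx ⊢
            omega
          · intros; positivity
      _ ≤ 2 := sum_geometric_two_le _
  have hB : ∑ i ∈ (range (k+1)).filter (fun i => ¬ i ≤ j), ((1:ℝ)/2) ^ (Nat.dist i j) ≤ 1 := by
    have himg : ∑ i ∈ (range (k+1)).filter (fun i => ¬ i ≤ j), ((1:ℝ)/2) ^ (Nat.dist i j)
        = ∑ m ∈ ((range (k+1)).filter (fun i => ¬ i ≤ j)).image (fun i => i - j),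
            ((1:ℝ)/2) ^ m := by
      rw [sum_image]
      · apply sum_congr rfl
        intro i hi
        simp only [mem_filter] at hi
        congr 1
        simp [Nat.dist]; omega
      · intro x hx y hy hxy
        simp only [mem_coe, mem_filter, mem_range] at hx hy hxy
        omega
    rw [himg]
    calc ∑ m ∈ ((range (k+1)).filter (fun i => ¬ i ≤ j)).image (fun i => i - j), ((1:ℝ)/2) ^ m
        ≤ ∑ m ∈ Icc 1 k, ((1:ℝ)/2) ^ m := by
          apply sum_le_sum_of_subset_of_nonneg
          · intro x hx
            simp only [mem_image, mem_filter, mem_range, mem_Icc] at hx ⊢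
            omega
          · intros; positivity
      _ = ∑ m ∈ range k, ((1:ℝ)/2) ^ (1 + m) := by
          rw [← Finset.Ico_add_one_right_eq_Icc, sum_Ico_eq_sum_range]
          simp
      _ = (1/2) * ∑ m ∈ range k, ((1:ℝ)/2) ^ m := by
          rw [mul_sum]
          apply sum_congr rfl
          intros; ring
      _ ≤ (1/2) * 2 := by
          have := sum_geometric_two_le k
          nlinarith [this]
      _ = 1 := by norm_num
  linarith

/-- guarantee of the `DrawPath` algorithm.  Given reals
`n 1, …, n k ≥ 1`, there are positive lengths `l 1, …, l k` with `l 1 ≥ n 1`,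
`l (i+1) ≥ n i + n (i+1)`, consecutive lengths within a factor of two of each
other (a 2-drawing), and total length at most `6·(n 1 + ⋯ + n k)`. -/
theorem stmt6 (k : ℕ) (hk : 1 ≤ k) (n : ℕ → ℝ)
    (hn : ∀ i : ℕ, 1 ≤ i → i ≤ k → 1 ≤ n i) :
    ∃ l : ℕ → ℝ,
      (∀ i : ℕ, 1 ≤ i → i ≤ k → 0 < l i) ∧
      n 1 ≤ l 1 ∧
      (∀ i : ℕ, 1 ≤ i → i + 1 ≤ k → n i + n (i + 1) ≤ l (i + 1)) ∧
      (∀ i : ℕ, 1 ≤ i → i + 1 ≤ k → l i / 2 ≤ l (i + 1) ∧ l (i + 1) ≤ 2 * l i) ∧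
      (∑ i ∈ Finset.Icc 1 k, l i) ≤ 6 * ∑ i ∈ Finset.Icc 1 k, n i := by
  set a : ℕ → ℝ := fun j => if j = 1 then n 1 else n (j-1) + n j with ha
  have hne : (Icc 1 k).Nonempty := nonempty_Icc.mpr hk
  have ha1 : ∀ j, 1 ≤ j → j ≤ k → 1 ≤ a j := by
    intro j hj1 hjk
    by_cases h : j = 1
    · simp [ha, h]; exact hn 1 le_rfl hk
    · simp only [ha, if_neg h]
      have h1 : 1 ≤ n (j-1) := hn _ (by omega) (by omega)
      have h2 : 1 ≤ n j := hn _ hj1 hjk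
      linarith
  set l : ℕ → ℝ := fun i => (Icc 1 k).sup' hne (fun j => a j * ((1:ℝ)/2) ^ (Nat.dist i j))
    with hl
  have hla : ∀ i, 1 ≤ i → i ≤ k → a i ≤ l i := by
    intro i h1 h2
    have := le_sup' (f := fun j => a j * ((1:ℝ)/2) ^ (Nat.dist i j))
      (mem_Icc.mpr ⟨h1, h2⟩)
    rwa [Nat.dist_self, pow_zero, mul_one] at this
  refine ⟨l, ?_, ?_, ?_, ?_, ?_⟩
  · intro i h1 h2
    have := hla i h1 h2
    have := ha1 i h1 h2
    linarith
  · have := hla 1 le_rfl hk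
    simpa [ha] using this
  · intro i h1 h2
    have := hla (i+1) (by omega) h2
    have hne1 : i + 1 ≠ 1 := by omega
    simpa [ha, hne1, show i ≠ 0 by omega] using this
  · intro i h1 h2
    constructor
    · rw [div_le_iff₀ (by norm_num : (0:ℝ) < 2)]
      apply sup'_le
      intro j hj
      have hd : Nat.dist (i+1) j ≤ Nat.dist i j + 1 := by simp [Nat.dist]; omega
      have haj : 0 ≤ a j := by
        rw [mem_Icc] at hj; linarith [ha1 j hj.1 hj.2]
      have hp : ((1:ℝ)/2) ^ (Nat.dist i j) ≤ 2 * ((1:ℝ)/2) ^ (Nat.dist (i+1) j) := by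
        have : ((1:ℝ)/2) ^ (Nat.dist i j + 1) ≤ ((1:ℝ)/2) ^ (Nat.dist (i+1) j) :=
          pow_le_pow_of_le_one (by norm_num) (by norm_num) hd
        calc ((1:ℝ)/2) ^ (Nat.dist i j) = 2 * ((1:ℝ)/2) ^ (Nat.dist i j + 1) := by ring
          _ ≤ 2 * ((1:ℝ)/2) ^ (Nat.dist (i+1) j) := by linarith
      calc a j * ((1:ℝ)/2) ^ (Nat.dist i j)
          ≤ a j * (2 * ((1:ℝ)/2) ^ (Nat.dist (i+1) j)) := by
            apply mul_le_mul_of_nonneg_left hp haj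
        _ = 2 * (a j * ((1:ℝ)/2) ^ (Nat.dist (i+1) j)) := by ring
        _ ≤ l (i+1) * 2 := by
            have := le_sup' (f := fun j => a j * ((1:ℝ)/2) ^ (Nat.dist (i+1) j)) hj
            linarith
    · apply sup'_le
      intro j hj
      have hd : Nat.dist i j ≤ Nat.dist (i+1) j + 1 := by simp [Nat.dist]; omega
      have haj : 0 ≤ a j := by
        rw [mem_Icc] at hj; linarith [ha1 j hj.1 hj.2]
      have hp : ((1:ℝ)/2) ^ (Nat.dist (i+1) j) ≤ 2 * ((1:ℝ)/2) ^ (Nat.dist i j) := by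
        have : ((1:ℝ)/2) ^ (Nat.dist (i+1) j + 1) ≤ ((1:ℝ)/2) ^ (Nat.dist i j) :=
          pow_le_pow_of_le_one (by norm_num) (by norm_num) hd
        calc ((1:ℝ)/2) ^ (Nat.dist (i+1) j) = 2 * ((1:ℝ)/2) ^ (Nat.dist (i+1) j + 1) := by ring
          _ ≤ 2 * ((1:ℝ)/2) ^ (Nat.dist i j) := by linarith
      calc a j * ((1:ℝ)/2) ^ (Nat.dist (i+1) j)
          ≤ a j * (2 * ((1:ℝ)/2) ^ (Nat.dist i j)) := by
            apply mul_le_mul_of_nonneg_left hp haj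
        _ = 2 * (a j * ((1:ℝ)/2) ^ (Nat.dist i j)) := by ring
        _ ≤ 2 * l i := by
            have := le_sup' (f := fun j => a j * ((1:ℝ)/2) ^ (Nat.dist i j)) hj
            linarith
  · -- total length bound
    have hstep1 : ∀ i, l i ≤ ∑ j ∈ Icc 1 k, a j * ((1:ℝ)/2) ^ (Nat.dist i j) := by
      intro i
      apply sup'_le
      intro j hj
      apply single_le_sum (f := fun j => a j * ((1:ℝ)/2) ^ (Nat.dist i j)) _ hj
      intro x hx
      rw [mem_Icc] at hx
      have := ha1 x hx.1 hx.2
      positivity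
    have hsum2 : ∑ i ∈ Icc 1 k, l i
        ≤ ∑ j ∈ Icc 1 k, a j * ∑ i ∈ Icc 1 k, ((1:ℝ)/2) ^ (Nat.dist i j) := by
      calc ∑ i ∈ Icc 1 k, l i
          ≤ ∑ i ∈ Icc 1 k, ∑ j ∈ Icc 1 k, a j * ((1:ℝ)/2) ^ (Nat.dist i j) :=
            sum_le_sum fun i _ => hstep1 i
        _ = ∑ j ∈ Icc 1 k, ∑ i ∈ Icc 1 k, a j * ((1:ℝ)/2) ^ (Nat.dist i j) := sum_comm
        _ = ∑ j ∈ Icc 1 k, a j * ∑ i ∈ Icc 1 k, ((1:ℝ)/2) ^ (Nat.dist i j) := by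
            apply sum_congr rfl; intros; rw [mul_sum]
    have hsum3 : ∑ j ∈ Icc 1 k, a j * ∑ i ∈ Icc 1 k, ((1:ℝ)/2) ^ (Nat.dist i j)
        ≤ 3 * ∑ j ∈ Icc 1 k, a j := by
      rw [mul_sum]
      apply sum_le_sum
      intro j hj
      rw [mem_Icc] at hj
      have haj : 0 ≤ a j := by linarith [ha1 j hj.1 hj.2]
      calc a j * ∑ i ∈ Icc 1 k, ((1:ℝ)/2) ^ (Nat.dist i j)
          ≤ a j * 3 := mul_le_mul_of_nonneg_left (geom_dist_sum k j) haj
        _ = 3 * a j := by ring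
    have hsuma : ∑ j ∈ Icc 1 k, a j ≤ 2 * ∑ j ∈ Icc 1 k, n j := by
      have hsplit : ∑ j ∈ Icc 1 k, a j = a 1 + ∑ j ∈ Ioc 1 k, a j := by
        rw [Icc_eq_cons_Ioc hk, sum_cons]
      have hsplitn : ∑ j ∈ Icc 1 k, n j = n 1 + ∑ j ∈ Ioc 1 k, n j := by
        rw [Icc_eq_cons_Ioc hk, sum_cons]
      have hIoc : ∑ j ∈ Ioc 1 k, a j
          = ∑ j ∈ Ioc 1 k, n (j-1) + ∑ j ∈ Ioc 1 k, n j := by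
        rw [← sum_add_distrib]
        apply sum_congr rfl
        intro j hj
        rw [mem_Ioc] at hj
        have : j ≠ 1 := by omega
        simp [ha, this]
      have hre : ∑ j ∈ Ioc 1 k, n (j-1) = ∑ j ∈ Icc 1 (k-1), n j := by
        apply sum_nbij' (fun j => j - 1) (fun j => j + 1)
        · intro x hx; rw [mem_Ioc] at hx; rw [mem_Icc]; omega
        · intro x hx; rw [mem_Icc] at hx; rw [mem_Ioc]; omega
        · intro x hx; rw [mem_Ioc] at hx; omega
        · intro x hx; omega
        · intro x hx; rfl
      have hmono : ∑ j ∈ Icc 1 (k-1), n j ≤ ∑ j ∈ Icc 1 k, n j := by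
        apply sum_le_sum_of_subset_of_nonneg
        · apply Icc_subset_Icc_right; omega
        · intro x hx1 hx2
          rw [mem_Icc] at hx1
          linarith [hn x hx1.1 hx1.2]
      have ha1eq : a 1 = n 1 := by simp [ha]
      rw [hsplit, hIoc, ha1eq]
      rw [hsplitn]
      have : ∑ j ∈ Ioc 1 k, n (j-1) ≤ ∑ j ∈ Icc 1 k, n j := by
        rw [hre]; exact hmono
      rw [hsplitn] at this
      linarith
    calc ∑ i ∈ Icc 1 k, l i ≤ 3 * ∑ j ∈ Icc 1 k, a j := le_trans hsum2 hsum3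
      _ ≤ 3 * (2 * ∑ j ∈ Icc 1 k, n j) := by linarith
      _ = 6 * ∑ i ∈ Icc 1 k, n i := by ring
end

section
/- Fix m ≥ 1, h ≥ 1, and α with 0 < α ≤ 1/2, and let c = 1 + 1/α. Let G(m,h) be the graph consisting of m disjoint complete binary trees of height h together with an apex vertex adjacent to every tree vertex. Then for every straight-line drawing ρ of G(m,h), the ply number of ρ with parameter α is at least min( m , (α²/((1+α)²·c²)) · 2^h/(2h) ). -/
set_option maxHeartbeats 1600000

open Real

/-- The vertex set of `G(m,h)`: an apex vertex (`none`) together with, for each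
of `m` trees, the Boolean strings of length at most `h` (the vertices of a
complete binary tree of height `h`). -/
def TreeApexVertex (m h : ℕ) : Type :=
  Option (Fin m × {l : List Bool // l.length ≤ h})

/-- The graph `G(m,h)`: `m` disjoint complete binary trees of height `h`
(each string `l` of length `< h` is joined to `l ++ [b]` within the same tree)
together with an apex vertex adjacent to every tree vertex. -/
def treesWithApex (m h : ℕ) : SimpleGraph (TreeApexVertex m h) :=
  SimpleGraph.fromRel fun x y =>
    (x = none ∧ y ≠ none) ∨
    (∃ (i : Fin m) (l l' : {l : List Bool // l.length ≤ h}) (b : Bool),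
      x = some (i, l) ∧ y = some (i, l') ∧ l'.val = l.val ++ [b])

/-! ### Auxiliary material -/

open scoped Classical ENNReal

instance optionFinite {α : Type*} [Finite α] : Finite (Option α) :=
  Finite.of_equiv (α ⊕ PUnit.{1}) (Equiv.optionEquivSumPUnit α).symm

instance listBoolLenFinite (h : ℕ) : Finite {l : List Bool // l.length ≤ h} :=
  (List.finite_length_le Bool h).to_subtype

instance treeApexVertexFinite (m h : ℕ) : Finite (TreeApexVertex m h) := by
  unfold TreeApexVertex
  infer_instance

lemma plyRadius_ge {V : Type*} [Finite V] (G : SimpleGraph V)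
    (ρ : V → EuclideanSpace ℝ (Fin 2)) (α : ℝ) (hα : 0 ≤ α) {v w : V} (hvw : G.Adj v w) :
    α * dist (ρ v) (ρ w) ≤ plyRadius G ρ α v := by
  unfold plyRadius
  refine mul_le_mul_of_nonneg_left ?_ hα
  have hbdd : BddAbove (Set.range fun w : G.neighborSet v => dist (ρ v) (ρ w.val)) :=
    (Set.finite_range _).bddAbove
  exact le_ciSup hbdd (⟨w, hvw⟩ : G.neighborSet v)

lemma tav_adj_apex (m h : ℕ) (i : Fin m) (l : {l : List Bool // l.length ≤ h}) :
    (treesWithApex m h).Adj none (some (i, l)) := by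
  refine (SimpleGraph.fromRel_adj _ _ _).mpr ?_
  exact ⟨(fun e => by cases e), Or.inl (Or.inl ⟨rfl, (fun e => by cases e)⟩)⟩

lemma tav_adj_child (m h : ℕ) (i : Fin m) (l : {l : List Bool // l.length ≤ h}) (b : Bool)
    (hl' : (l.val ++ [b]).length ≤ h) :
    (treesWithApex m h).Adj (some (i, l)) (some (i, ⟨l.val ++ [b], hl'⟩)) := by
  refine (SimpleGraph.fromRel_adj _ _ _).mpr ?_
  refine ⟨?_, Or.inl (Or.inr ⟨i, l, ⟨l.val ++ [b], hl'⟩, b, rfl, rfl, rfl⟩)⟩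
  intro hcontr
  have h1 : l.val = l.val ++ [b] := by
    have := Option.some.inj hcontr
    have := congrArg (fun x => (Prod.snd x).val) this
    simpa using this
  have := congrArg List.length h1
  simp at this

lemma ncard_ge_finset {V : Type*} [Finite V] (F : Finset V) (Sset : Set V)
    (hsub : ∀ v ∈ F, v ∈ Sset) : F.card ≤ Sset.ncard := by
  have h1 : (F : Set V).ncard ≤ Sset.ncard :=
    Set.ncard_le_ncard (fun v hv => hsub v hv) (Set.toFinite _)
  simpa [Set.ncard_coe_finset] using h1

open MeasureTheory Metric in
lemma ball_pigeonhole {ι : Type*} (S : Finset ι)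
    (x : ι → EuclideanSpace ℝ (Fin 2)) (ε : ι → ℝ) (p : EuclideanSpace ℝ (Fin 2)) (R : ℝ)
    (hR : 0 < R)
    (hε : ∀ i ∈ S, 0 ≤ ε i)
    (hsub : ∀ i ∈ S, ball (x i) (ε i) ⊆ ball p R) :
    ∃ q : EuclideanSpace ℝ (Fin 2),
      ∑ i ∈ S, (ε i)^2 ≤ ((S.filter fun i => q ∈ ball (x i) (ε i)).card : ℝ) * R^2 := by
  classical
  set count : EuclideanSpace ℝ (Fin 2) → ℕ :=
    fun q => (S.filter fun i => q ∈ ball (x i) (ε i)).card with hcount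
  have hbdd : BddAbove (Set.range count) := by
    refine ⟨S.card, ?_⟩
    rintro n ⟨q, rfl⟩
    exact Finset.card_filter_le _ _
  have hKmem : sSup (Set.range count) ∈ Set.range count :=
    Nat.sSup_mem ⟨count p, Set.mem_range_self p⟩ hbdd
  obtain ⟨q0, hq0⟩ := hKmem
  set K := sSup (Set.range count) with hK
  refine ⟨q0, ?_⟩
  have hcountle : ∀ q, count q ≤ K := fun q => le_csSup hbdd (Set.mem_range_self q)
  have key : ∑ i ∈ S, volume (ball (x i) (ε i)) ≤ (K : ℝ≥0∞) * volume (ball p R) := by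
    have h1 : ∑ i ∈ S, volume (ball (x i) (ε i))
        = ∫⁻ q, ∑ i ∈ S, (ball (x i) (ε i)).indicator (fun _ => (1:ℝ≥0∞)) q := by
      rw [lintegral_finset_sum]
      · exact Finset.sum_congr rfl fun i _ => (lintegral_indicator_one measurableSet_ball).symm
      · exact fun i _ => (measurable_const.indicator measurableSet_ball)
    rw [h1]
    have h2 : (∫⁻ q, (ball p R).indicator (fun _ => (K:ℝ≥0∞)) q) = K * volume (ball p R) :=
      lintegral_indicator_const measurableSet_ball _
    rw [← h2]
    refine lintegral_mono fun q => ?_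
    by_cases hq : q ∈ ball p R
    · have : ∑ i ∈ S, (ball (x i) (ε i)).indicator (fun _ => (1:ℝ≥0∞)) q
          = (count q : ℝ≥0∞) := by
        simp only [Set.indicator_apply, hcount]
        rw [Finset.sum_boole]
      rw [this, Set.indicator_of_mem hq]
      exact Nat.cast_le.mpr (hcountle q)
    · have : ∀ i ∈ S, (ball (x i) (ε i)).indicator (fun _ => (1:ℝ≥0∞)) q = 0 := by
        intro i hi
        exact Set.indicator_of_notMem (fun hmem => hq (hsub i hi hmem)) _
      rw [Finset.sum_congr rfl this, Finset.sum_const, smul_zero, Set.indicator_of_notMem hq]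
  have hfr : Module.finrank ℝ (EuclideanSpace ℝ (Fin 2)) = 2 := finrank_euclideanSpace_fin
  have hvol : ∀ (y : EuclideanSpace ℝ (Fin 2)) (r : ℝ), 0 ≤ r →
      volume (ball y r) = ENNReal.ofReal (r ^ 2) * volume (ball (0:EuclideanSpace ℝ (Fin 2)) 1) := by
    intro y r hr
    rw [Measure.addHaar_ball volume y hr, hfr]
  set V := volume (ball (0:EuclideanSpace ℝ (Fin 2)) 1) with hV
  have hV0 : V ≠ 0 := (measure_ball_pos volume _ one_pos).ne'
  have hVtop : V ≠ ⊤ := measure_ball_lt_top.ne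
  rw [hvol p R hR.le] at key
  have key2 : (∑ i ∈ S, ENNReal.ofReal ((ε i)^2)) * V
      ≤ ((K : ℝ≥0∞) * ENNReal.ofReal (R^2)) * V := by
    rw [Finset.sum_mul]
    calc ∑ i ∈ S, ENNReal.ofReal ((ε i)^2) * V
        = ∑ i ∈ S, volume (ball (x i) (ε i)) := by
          exact Finset.sum_congr rfl fun i hi => (hvol (x i) (ε i) (hε i hi)).symm
      _ ≤ (K : ℝ≥0∞) * (ENNReal.ofReal (R^2) * V) := key
      _ = ((K : ℝ≥0∞) * ENNReal.ofReal (R^2)) * V := by ring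
  have key3 : (∑ i ∈ S, ENNReal.ofReal ((ε i)^2)) ≤ (K : ℝ≥0∞) * ENNReal.ofReal (R^2) :=
    (ENNReal.mul_le_mul_iff_left hV0 hVtop).mp key2
  have key4 : ENNReal.ofReal (∑ i ∈ S, (ε i)^2) ≤ ENNReal.ofReal ((K:ℝ) * R^2) := by
    rw [ENNReal.ofReal_sum_of_nonneg fun i _ => sq_nonneg (ε i),
      ENNReal.ofReal_mul (by positivity)]
    simpa using key3
  have := (ENNReal.ofReal_le_ofReal_iff (by positivity)).mp key4
  rw [show (Finset.filter (fun i => q0 ∈ ball (x i) (ε i)) S).card = K from hq0]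
  exact this

/-- For `m, h ≥ 1`, `0 < α ≤ 1/2` and `c = 1 + 1/α`, every
straight-line drawing of `G(m,h)` has ply number (with parameter `α`) at least
`min( m , (α²/((1+α)²·c²))·2^h/(2h) )`. -/
theorem stmt8 (m h : ℕ) (hm : 1 ≤ m) (hh : 1 ≤ h)
    (α : ℝ) (hα0 : 0 < α) (hα : α ≤ 1 / 2) (c : ℝ) (hc : c = 1 + 1 / α)
    (ρ : TreeApexVertex m h → EuclideanSpace ℝ (Fin 2))
    (hρ : Function.Injective ρ) :
    ∃ q : EuclideanSpace ℝ (Fin 2),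
      min (m : ℝ) (α ^ 2 / ((1 + α) ^ 2 * c ^ 2) * 2 ^ h / (2 * h)) ≤
        (Set.ncard {v : TreeApexVertex m h |
          q ∈ Metric.ball (ρ v) (plyRadius (treesWithApex m h) ρ α v)} : ℝ) := by
  classical
  have hc0 : 0 < c := by rw [hc]; positivity
  by_cases hA : ∀ i : Fin m, ∃ l : {l : List Bool // l.length ≤ h},
      ρ none ∈ Metric.ball (ρ (some (i, l)))
        (plyRadius (treesWithApex m h) ρ α (some (i, l)))
  · -- Case A : the apex point lies in a ply disk from every tree
    choose lsel hlsel using hA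
    refine ⟨ρ none, le_trans (min_le_left _ _) ?_⟩
    have hinj : Function.Injective
        (fun i : Fin m => (some (i, lsel i) : TreeApexVertex m h)) := by
      intro a b hab
      simp only [Option.some.injEq, Prod.mk.injEq] at hab
      exact hab.1
    have hF := ncard_ge_finset
      (Finset.univ.image (fun i : Fin m => (some (i, lsel i) : TreeApexVertex m h)))
      {v : TreeApexVertex m h |
        ρ none ∈ Metric.ball (ρ v) (plyRadius (treesWithApex m h) ρ α v)}
      (by
        intro v hv
        obtain ⟨i, _, rfl⟩ := Finset.mem_image.mp hv
        exact hlsel i)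
    rw [Finset.card_image_of_injective _ hinj, Finset.card_univ, Fintype.card_fin] at hF
    exact_mod_cast hF
  · -- Case B : some tree has all ply disks avoiding the apex point
    push_neg at hA
    obtain ⟨i, hi'⟩ := hA
    set p : EuclideanSpace ℝ (Fin 2) := ρ none with hp
    set D : {l : List Bool // l.length ≤ h} → ℝ :=
      fun l => dist p (ρ (some (i, l))) with hD
    have hi : ∀ l, plyRadius (treesWithApex m h) ρ α (some (i, l)) ≤ D l := by
      intro l
      have := hi' l
      rw [Metric.mem_ball, not_lt] at this
      exact this
    have hDpos : ∀ l, 0 < D l := by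
      intro l
      refine dist_pos.mpr fun e => ?_
      cases hρ e
    have hDapex : ∀ l, α * D l ≤ plyRadius (treesWithApex m h) ρ α (some (i, l)) := by
      intro l
      have hadj := (tav_adj_apex m h i l).symm
      have := plyRadius_ge _ ρ α hα0.le hadj
      rwa [dist_comm (ρ (some (i, l))) (ρ none)] at this
    set D0 : ℝ := D ⟨[], by simp⟩ with hD0
    have hD0pos : 0 < D0 := hDpos _
    -- scale control along tree edges, propagated to all vertices
    have hscale : ∀ (lst : List Bool) (hl : lst.length ≤ h),
        D ⟨lst, hl⟩ ≤ c ^ lst.length * D0 ∧ D0 ≤ c ^ lst.length * D ⟨lst, hl⟩ := by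
      intro lst
      induction lst using List.reverseRecOn with
      | nil =>
        intro hl
        simp only [List.length_nil, pow_zero, one_mul]
        exact ⟨le_of_eq rfl, le_of_eq rfl⟩
      | append_singleton l b ih =>
        intro hl
        have hlt : l.length < h := by simpa using hl
        have ihl := ih hlt.le
        -- edge estimates between ⟨l, _⟩ and ⟨l ++ [b], hl⟩
        have hadj := tav_adj_child m h i ⟨l, hlt.le⟩ b hl
        have k1 : α * dist (ρ (some (i, ⟨l, hlt.le⟩))) (ρ (some (i, ⟨l ++ [b], hl⟩)))
            ≤ D ⟨l, hlt.le⟩ := le_trans (plyRadius_ge _ ρ α hα0.le hadj) (hi _)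
        have k2 : α * dist (ρ (some (i, ⟨l ++ [b], hl⟩))) (ρ (some (i, ⟨l, hlt.le⟩)))
            ≤ D ⟨l ++ [b], hl⟩ := le_trans (plyRadius_ge _ ρ α hα0.le hadj.symm) (hi _)
        have tri1 : D ⟨l ++ [b], hl⟩ ≤ D ⟨l, hlt.le⟩
            + dist (ρ (some (i, ⟨l, hlt.le⟩))) (ρ (some (i, ⟨l ++ [b], hl⟩))) :=
          dist_triangle p (ρ (some (i, ⟨l, hlt.le⟩))) (ρ (some (i, ⟨l ++ [b], hl⟩)))
        have tri2 : D ⟨l, hlt.le⟩ ≤ D ⟨l ++ [b], hl⟩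
            + dist (ρ (some (i, ⟨l ++ [b], hl⟩))) (ρ (some (i, ⟨l, hlt.le⟩))) :=
          dist_triangle p (ρ (some (i, ⟨l ++ [b], hl⟩))) (ρ (some (i, ⟨l, hlt.le⟩)))
        have hca : c * α = α + 1 := by rw [hc]; field_simp
        have He1 : D ⟨l ++ [b], hl⟩ ≤ c * D ⟨l, hlt.le⟩ := by
          nlinarith [mul_le_mul_of_nonneg_left tri1 hα0.le, k1, hca, hDpos ⟨l, hlt.le⟩]
        have He2 : D ⟨l, hlt.le⟩ ≤ c * D ⟨l ++ [b], hl⟩ := by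
          nlinarith [mul_le_mul_of_nonneg_left tri2 hα0.le, k2, hca, hDpos ⟨l ++ [b], hl⟩]
        have hlen : (l ++ [b]).length = l.length + 1 := by simp
        rw [hlen, pow_succ]
        constructor
        · nlinarith [mul_le_mul_of_nonneg_left ihl.1 hc0.le, He1, pow_pos hc0 l.length]
        · nlinarith [mul_le_mul_of_nonneg_left He2 (pow_pos hc0 l.length).le, ihl.2]
    -- the 2^h leaves
    set leafL : (Fin h → Bool) → {l : List Bool // l.length ≤ h} :=
      fun g => ⟨List.ofFn g, by simp⟩ with hleafL
    have hleaf : ∀ g : Fin h → Bool,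
        D (leafL g) ≤ c ^ h * D0 ∧ D0 ≤ c ^ h * D (leafL g) := by
      intro g
      have := hscale (List.ofFn g) (by simp)
      simpa using this
    set t : ℕ → ℝ := fun j => D0 * c ^ j / c ^ h with ht
    have htpos : ∀ j, 0 < t j := by
      intro j
      show 0 < D0 * c ^ j / c ^ h
      positivity
    have hts : ∀ j, t (j + 1) = c * t j := by
      intro j
      show D0 * c ^ (j + 1) / c ^ h = c * (D0 * c ^ j / c ^ h)
      rw [pow_succ]; ring
    have ht0 : ∀ g, t 0 ≤ D (leafL g) := by
      intro g
      show D0 * c ^ 0 / c ^ h ≤ D (leafL g)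
      rw [pow_zero, mul_one, div_le_iff₀ (pow_pos hc0 h)]
      nlinarith [(hleaf g).2]
    have ht2h : ∀ g, D (leafL g) ≤ t (2 * h) := by
      intro g
      show D (leafL g) ≤ D0 * c ^ (2 * h) / c ^ h
      rw [two_mul, pow_add, le_div_iff₀ (pow_pos hc0 h)]
      nlinarith [(hleaf g).1, pow_pos hc0 h]
    -- bucket choice
    have hbuck : ∀ g : Fin h → Bool,
        ∃ j, j < 2 * h ∧ t j ≤ D (leafL g) ∧ D (leafL g) ≤ t (j + 1) := by
      intro g
      set P : ℕ → Prop := fun j => t j ≤ D (leafL g) with hP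
      set J := Nat.findGreatest P (2 * h - 1) with hJ
      have hJle : J ≤ 2 * h - 1 := Nat.findGreatest_le _
      have hJlt : J < 2 * h := by omega
      have hJ1 : P J := Nat.findGreatest_spec (Nat.zero_le _) (ht0 g)
      have hJ2 : D (leafL g) ≤ t (J + 1) := by
        by_cases hcase : J + 1 ≤ 2 * h - 1
        · exact le_of_not_ge (Nat.findGreatest_is_greatest (Nat.lt_succ_self _) hcase)
        · have : J + 1 = 2 * h := by omega
          rw [this]; exact ht2h g
      exact ⟨J, hJlt, hJ1, hJ2⟩
    choose J hJlt hJ1 hJ2 using hbuck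
    -- pigeonhole over the 2h buckets
    obtain ⟨j, hjmem, hjmax⟩ := Finset.exists_max_image (Finset.range (2 * h))
      (fun j => (Finset.univ.filter fun g : Fin h → Bool => J g = j).card)
      ⟨0, Finset.mem_range.mpr (by omega)⟩
    set S : Finset (Fin h → Bool) := Finset.univ.filter fun g => J g = j with hS
    have hsum : (Finset.univ : Finset (Fin h → Bool)).card
        = ∑ j' ∈ Finset.range (2 * h),
            (Finset.univ.filter fun g : Fin h → Bool => J g = j').card :=
      Finset.card_eq_sum_card_fiberwise (fun g _ => Finset.mem_range.mpr (hJlt g))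
    have hNnat : 2 ^ h ≤ 2 * h * S.card := by
      have h1 : ∑ j' ∈ Finset.range (2 * h),
          (Finset.univ.filter fun g : Fin h → Bool => J g = j').card
          ≤ (Finset.range (2 * h)).card * S.card := by
        rw [← smul_eq_mul]
        exact Finset.sum_le_card_nsmul _ _ _ (fun j' hj' => hjmax j' hj')
      have h2 : (Finset.univ : Finset (Fin h → Bool)).card = 2 ^ h := by
        simp [Finset.card_univ]
      rw [h2] at hsum
      rw [Finset.card_range] at h1
      omega
    have hNR : (2:ℝ) ^ h ≤ (2 * h) * S.card := by exact_mod_cast hNnat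
    -- geometry
    set s0 : ℝ := t j with hs0def
    have hs0 : 0 < s0 := htpos j
    have hDg1 : ∀ g ∈ S, s0 ≤ D (leafL g) := by
      intro g hg
      have hgj : J g = j := (Finset.mem_filter.mp hg).2
      have := hJ1 g
      rwa [hgj] at this
    have hDg2 : ∀ g ∈ S, D (leafL g) ≤ c * s0 := by
      intro g hg
      have hgj : J g = j := (Finset.mem_filter.mp hg).2
      have := hJ2 g
      rw [hgj, hts j] at this
      exact this
    have h1α : (0:ℝ) < 1 + α := by linarith
    obtain ⟨q, hq⟩ := ball_pigeonhole S
      (fun g => ρ (some (i, leafL g))) (fun g => α * D (leafL g)) p ((1 + α) * c * s0)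
      (by positivity)
      (fun g _ => by positivity)
      (by
        intro g hg y hy
        rw [Metric.mem_ball] at hy ⊢
        have tri : dist y p ≤ dist y (ρ (some (i, leafL g))) + dist (ρ (some (i, leafL g))) p :=
          dist_triangle _ _ _
        have hdc : dist (ρ (some (i, leafL g))) p = D (leafL g) := dist_comm _ _
        have h2 := hDg2 g hg
        have hy' : dist y (ρ (some (i, leafL g))) < α * D (leafL g) := hy
        nlinarith [mul_le_mul_of_nonneg_left h2 h1α.le, hDpos (leafL g)])
    refine ⟨q, le_trans (min_le_right _ _) ?_⟩
    set T : Finset (Fin h → Bool) :=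
      S.filter (fun g => q ∈ Metric.ball (ρ (some (i, leafL g))) (α * D (leafL g))) with hT
    -- lower bound for the sum of squared radii
    have hlow : (S.card : ℝ) * (α * s0) ^ 2 ≤ ∑ g ∈ S, (α * D (leafL g)) ^ 2 := by
      have := Finset.card_nsmul_le_sum S (fun g => (α * D (leafL g)) ^ 2) ((α * s0) ^ 2)
        (fun g hg => by
          have := hDg1 g hg
          have h1 : α * s0 ≤ α * D (leafL g) := mul_le_mul_of_nonneg_left this hα0.le
          exact pow_le_pow_left₀ (by positivity) h1 2)
      simpa [nsmul_eq_mul] using this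
    have hchain : (S.card : ℝ) * (α * s0) ^ 2 ≤ (T.card : ℝ) * ((1 + α) * c * s0) ^ 2 :=
      le_trans hlow hq
    have hs2 : (0:ℝ) < s0 ^ 2 := by positivity
    have hK : (S.card : ℝ) * α ^ 2 ≤ (T.card : ℝ) * ((1 + α) ^ 2 * c ^ 2) := by
      have e1 : (S.card : ℝ) * α ^ 2 * s0 ^ 2 = (S.card : ℝ) * (α * s0) ^ 2 := by ring
      have e2 : (T.card : ℝ) * ((1 + α) ^ 2 * c ^ 2) * s0 ^ 2
          = (T.card : ℝ) * ((1 + α) * c * s0) ^ 2 := by ring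
      have := hchain
      rw [← e1, ← e2] at this
      exact le_of_mul_le_mul_right this hs2
    -- final count
    have hden : (0:ℝ) < (1 + α) ^ 2 * c ^ 2 := by positivity
    have h2h : (0:ℝ) < 2 * h := by
      have : (1:ℝ) ≤ h := by exact_mod_cast hh
      linarith
    have hN : (2:ℝ) ^ h / (2 * h) ≤ S.card := by
      rw [div_le_iff₀ h2h]
      nlinarith [hNR]
    have hbound : α ^ 2 / ((1 + α) ^ 2 * c ^ 2) * 2 ^ h / (2 * h) ≤ (T.card : ℝ) := by
      have step1 : α ^ 2 / ((1 + α) ^ 2 * c ^ 2) * 2 ^ h / (2 * h)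
          = (α ^ 2 / ((1 + α) ^ 2 * c ^ 2)) * ((2:ℝ) ^ h / (2 * h)) := by ring
      have step2 : (α ^ 2 / ((1 + α) ^ 2 * c ^ 2)) * ((2:ℝ) ^ h / (2 * h))
          ≤ (α ^ 2 / ((1 + α) ^ 2 * c ^ 2)) * S.card := by
        exact mul_le_mul_of_nonneg_left hN (by positivity)
      have step3 : (α ^ 2 / ((1 + α) ^ 2 * c ^ 2)) * S.card ≤ (T.card : ℝ) := by
        rw [div_mul_eq_mul_div, div_le_iff₀ hden]
        nlinarith [hK]
      rw [step1]
      exact le_trans step2 step3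
    refine le_trans hbound ?_
    -- the vertices of T give distinct ply disks containing q
    have hinj : Function.Injective
        (fun g : Fin h → Bool => (some (i, leafL g) : TreeApexVertex m h)) := by
      intro a b hab
      simp only [Option.some.injEq, Prod.mk.injEq] at hab
      have : (leafL a).val = (leafL b).val := congrArg Subtype.val hab.2
      exact List.ofFn_injective this
    have hF := ncard_ge_finset
      (T.image (fun g => (some (i, leafL g) : TreeApexVertex m h)))
      {v : TreeApexVertex m h |
        q ∈ Metric.ball (ρ v) (plyRadius (treesWithApex m h) ρ α v)}
      (by
        intro v hv
        obtain ⟨g, hg, rfl⟩ := Finset.mem_image.mp hv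
        have hgball : q ∈ Metric.ball (ρ (some (i, leafL g))) (α * D (leafL g)) :=
          (Finset.mem_filter.mp hg).2
        exact Metric.ball_subset_ball (hDapex (leafL g)) hgball)
    rw [Finset.card_image_of_injective _ hinj] at hF
    exact_mod_cast hF
end
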